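/- arXiv:2007.10883 — 7 statements merged into one kernel-verified Lean document; each statement's English description precedes it below -/
import Mathlib

section
/- Let X be a compact metric space, f : X → X continuous, and A ⊆ X an invariant set (f(A) ⊆ A). If the α-limit set of a point x (the set of accumulation points of all preimage sequences of x) intersects the interior of A, then x ∈ A. In particular, if the special α-limit set of x intersects the interior of A, then x ∈ A. -/
open Filter Topology Set

/-- A backward orbit branch of `x`: `u 0 = x` and `f (u (n+1)) = u n`. -/
def IsBackwardBranch {X : Type*} (f : X → X) (x : X) (u : ℕ → X) : Prop :=
  u 0 = x ∧ ∀ n, f (u (n + 1)) = u n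

/-- The special α-limit set of `x`: accumulation points of backward orbit branches. -/
def sAlpha {X : Type*} [TopologicalSpace X] (f : X → X) (x : X) : Set X :=
  {y | ∃ u : ℕ → X, IsBackwardBranch f x u ∧ MapClusterPt y atTop u}

/-- The α-limit set of `x`: accumulation points of preimage sequences. -/
def alphaLimit {X : Type*} [TopologicalSpace X] (f : X → X) (x : X) : Set X :=
  {y | ∃ u : ℕ → X, (∀ n, f^[n] (u n) = x) ∧ MapClusterPt y atTop u}

theorem stmt0 {X : Type*} [MetricSpace X] [CompactSpace X] (f : X → X) (hf : Continuous f)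
    (A : Set X) (hA : f '' A ⊆ A) (x : X) :
    ((alphaLimit f x ∩ interior A).Nonempty → x ∈ A) ∧
    ((sAlpha f x ∩ interior A).Nonempty → x ∈ A) := by
  have hiter : ∀ (n : ℕ) (a : X), a ∈ A → f^[n] a ∈ A := by
    intro n
    induction n with
    | zero => intro a ha; simpa using ha
    | succ k ih =>
      intro a ha
      rw [Function.iterate_succ_apply']
      exact hA ⟨_, ih a ha, rfl⟩
  have main : (alphaLimit f x ∩ interior A).Nonempty → x ∈ A := by
    rintro ⟨y, ⟨u, hu, hcl⟩, hyA⟩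
    have hfreq : ∃ᶠ n in atTop, u n ∈ interior A :=
      mapClusterPt_iff_frequently.mp hcl _ (isOpen_interior.mem_nhds hyA)
    obtain ⟨n, hn⟩ := hfreq.exists
    rw [← hu n]
    exact hiter n _ (interior_subset hn)
  refine ⟨main, fun ⟨y, ⟨u, ⟨hu0, hus⟩, hcl⟩, hyA⟩ => ?_⟩
  refine main ⟨y, ⟨u, fun n => ?_, hcl⟩, hyA⟩
  induction n with
  | zero => simpa using hu0
  | succ k ih => rw [Function.iterate_succ_apply, hus k, ih]
end

section
/- Let f : [0,1] → [0,1] be continuous and let x ∈ [0,1]. If the special α-limit set sα(x) contains a periodic orbit of period 3, then sα(x) also contains a periodic orbit of period 1 or of period 2. -/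
open Filter Topology Set

lemma myClusterOfSubseq {X : Type*} [TopologicalSpace X] {u : ℕ → X} {φ : ℕ → ℕ}
    (hφ : Tendsto φ atTop atTop) {q : X} (h : Tendsto (u ∘ φ) atTop (𝓝 q)) :
    MapClusterPt q atTop u := by
  have h1 : map (u ∘ φ) atTop ≤ map u atTop := by
    rw [← Filter.map_map]
    exact map_mono hφ
  have h2 : map (u ∘ φ) atTop ≤ 𝓝 q ⊓ map u atTop := le_inf h h1
  exact Filter.NeBot.mono (Filter.map_neBot) h2

/-- Monotone backward-orbit construction for a continuous real map `Gm`. -/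
lemma seqLemma (Gm : ℝ → ℝ) (hG : Continuous Gm) {B q₁ w₀ : ℝ}
    (hGB : Gm B < B) (hq₁ : Gm q₁ = q₁) (hw₀B : B ≤ w₀) (hw₀q : w₀ ≤ q₁) :
    ∃ (w : ℕ → ℝ) (L : ℝ), w 0 = w₀ ∧ (∀ j, Gm (w (j+1)) = w j) ∧
      (∀ j, B ≤ w j ∧ w j ≤ q₁) ∧ Tendsto w atTop (𝓝 L) ∧ Gm L = L ∧ B ≤ L ∧ L ≤ q₁ := by
  rcases lt_trichotomy (Gm w₀) w₀ with hlt | heq | hgt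
  · -- increasing mode
    have hw₀q' : w₀ < q₁ := by
      rcases lt_or_eq_of_le hw₀q with h | h
      · exact h
      · exfalso; rw [h, hq₁] at hlt; exact lt_irrefl _ hlt
    have step : ∀ y, B ≤ y → y < q₁ → Gm y < y →
        ∃ w', y < w' ∧ w' < q₁ ∧ Gm w' = y := by
      intro y hBy hyq hGy
      have : y ∈ Ioo (Gm y) (Gm q₁) := by rw [hq₁]; exact ⟨hGy, hyq⟩
      obtain ⟨w', hw'mem, hw'⟩ := intermediate_value_Ioo (le_of_lt hyq) hG.continuousOn this
      exact ⟨w', hw'mem.1, hw'mem.2, hw'⟩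
    let T := {t : ℝ // B ≤ t ∧ t < q₁ ∧ Gm t < t}
    have nxt : ∀ s : T, ∃ s' : T, s.1 < s'.1 ∧ Gm s'.1 = s.1 := by
      rintro ⟨t, ht1, ht2, ht3⟩
      obtain ⟨w', h1, h2, h3⟩ := step t ht1 ht2 ht3
      exact ⟨⟨w', le_trans ht1 (le_of_lt h1), h2, by rw [h3]; exact h1⟩, h1, h3⟩
    choose nx hnx1 hnx2 using nxt
    let s₀ : T := ⟨w₀, hw₀B, hw₀q', hlt⟩
    set w : ℕ → ℝ := fun j => ((nx^[j]) s₀).1 with hw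
    have hrel : ∀ j, Gm (w (j+1)) = w j := by
      intro j
      have : (nx^[j+1]) s₀ = nx ((nx^[j]) s₀) := Function.iterate_succ_apply' nx j s₀
      simp only [hw, this]
      exact hnx2 _
    have hmono : StrictMono w := by
      apply strictMono_nat_of_lt_succ
      intro j
      have : (nx^[j+1]) s₀ = nx ((nx^[j]) s₀) := Function.iterate_succ_apply' nx j s₀
      simp only [hw, this]
      exact hnx1 _
    have hbd : ∀ j, B ≤ w j ∧ w j ≤ q₁ := fun j =>
      ⟨((nx^[j]) s₀).2.1, le_of_lt ((nx^[j]) s₀).2.2.1⟩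
    have hbdd : BddAbove (range w) := ⟨q₁, by rintro _ ⟨j, rfl⟩; exact (hbd j).2⟩
    have htend : Tendsto w atTop (𝓝 (⨆ j, w j)) := tendsto_atTop_ciSup hmono.monotone hbdd
    set L := ⨆ j, w j with hL
    have hLB : B ≤ L := le_trans (hbd 0).1 (le_ciSup hbdd 0)
    have hLq : L ≤ q₁ := ciSup_le fun j => (hbd j).2
    have hGL : Gm L = L := by
      have h1 : Tendsto (fun j => w (j+1)) atTop (𝓝 L) :=
        htend.comp (tendsto_add_atTop_nat 1)
      have h2 : Tendsto (fun j => Gm (w (j+1))) atTop (𝓝 (Gm L)) :=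
        (hG.tendsto L).comp h1
      have h3 : (fun j => Gm (w (j+1))) = fun j => w j := funext hrel
      rw [h3] at h2
      exact tendsto_nhds_unique h2 htend
    exact ⟨w, L, by simp [hw, s₀], hrel, hbd, htend, hGL, hLB, hLq⟩
  · exact ⟨fun _ => w₀, w₀, rfl, fun j => heq, fun j => ⟨hw₀B, hw₀q⟩,
      tendsto_const_nhds, heq, hw₀B, hw₀q⟩
  · -- decreasing mode
    have hBw : B < w₀ := by
      rcases lt_or_eq_of_le hw₀B with h | h
      · exact h
      · exfalso; rw [← h] at hgt; exact lt_irrefl _ (lt_trans hGB hgt)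
    -- find q₀ fixed point of Gm in [B, w₀)
    have hcont : ContinuousOn (fun t => Gm t - t) (Icc B w₀) :=
      (hG.sub continuous_id).continuousOn
    have h0 : (0:ℝ) ∈ Icc (Gm B - B) (Gm w₀ - w₀) :=
      ⟨le_of_lt (by linarith), le_of_lt (by linarith)⟩
    obtain ⟨q₀, hq₀mem, hq₀⟩ := intermediate_value_Icc (le_of_lt hBw) hcont h0
    have hq₀fix : Gm q₀ = q₀ := by have := hq₀; simp at this; linarith [this]
    have hq₀w : q₀ < w₀ := by
      rcases lt_or_eq_of_le hq₀mem.2 with h | h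
      · exact h
      · exfalso; rw [h] at hq₀fix; linarith
    have step : ∀ y, q₀ < y → Gm y > y →
        ∃ w', q₀ < w' ∧ w' < y ∧ Gm w' = y := by
      intro y hy hGy
      have : y ∈ Ioo (Gm q₀) (Gm y) := by rw [hq₀fix]; exact ⟨hy, hGy⟩
      obtain ⟨w', hw'mem, hw'⟩ := intermediate_value_Ioo (le_of_lt hy) hG.continuousOn this
      exact ⟨w', hw'mem.1, hw'mem.2, hw'⟩
    let T := {t : ℝ // q₀ < t ∧ t ≤ w₀ ∧ Gm t > t}
    have nxt : ∀ s : T, ∃ s' : T, s'.1 < s.1 ∧ Gm s'.1 = s.1 := by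
      rintro ⟨t, ht1, ht2, ht3⟩
      obtain ⟨w', h1, h2, h3⟩ := step t ht1 ht3
      exact ⟨⟨w', h1, le_trans (le_of_lt h2) ht2, by rw [h3]; exact h2⟩, h2, h3⟩
    choose nx hnx1 hnx2 using nxt
    let s₀ : T := ⟨w₀, hq₀w, le_refl _, hgt⟩
    set w : ℕ → ℝ := fun j => ((nx^[j]) s₀).1 with hw
    have hrel : ∀ j, Gm (w (j+1)) = w j := by
      intro j
      have : (nx^[j+1]) s₀ = nx ((nx^[j]) s₀) := Function.iterate_succ_apply' nx j s₀
      simp only [hw, this]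
      exact hnx2 _
    have hmono : StrictAnti w := by
      apply strictAnti_nat_of_succ_lt
      intro j
      have : (nx^[j+1]) s₀ = nx ((nx^[j]) s₀) := Function.iterate_succ_apply' nx j s₀
      simp only [hw, this]
      exact hnx1 _
    have hbd : ∀ j, B ≤ w j ∧ w j ≤ q₁ := fun j =>
      ⟨le_trans hq₀mem.1 (le_of_lt ((nx^[j]) s₀).2.1),
       le_trans ((nx^[j]) s₀).2.2.1 hw₀q⟩
    have hbdd : BddBelow (range w) := ⟨q₀, by rintro _ ⟨j, rfl⟩; exact le_of_lt ((nx^[j]) s₀).2.1⟩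
    have htend : Tendsto w atTop (𝓝 (⨅ j, w j)) := tendsto_atTop_ciInf hmono.antitone hbdd
    set L := ⨅ j, w j with hL
    have hLB : B ≤ L := le_trans hq₀mem.1 (le_ciInf fun j => le_of_lt ((nx^[j]) s₀).2.1)
    have hLq : L ≤ q₁ := le_trans (ciInf_le hbdd 0) (hbd 0).2
    have hGL : Gm L = L := by
      have h1 : Tendsto (fun j => w (j+1)) atTop (𝓝 L) :=
        htend.comp (tendsto_add_atTop_nat 1)
      have h2 : Tendsto (fun j => Gm (w (j+1))) atTop (𝓝 (Gm L)) :=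
        (hG.tendsto L).comp h1
      have h3 : (fun j => Gm (w (j+1))) = fun j => w j := funext hrel
      rw [h3] at h2
      exact tendsto_nhds_unique h2 htend
    exact ⟨w, L, by simp [hw, s₀], hrel, hbd, htend, hGL, hLB, hLq⟩

lemma core (f : unitInterval → unitInterval) (hf : Continuous f) (x a b c : unitInterval)
    (hab : a < b) (hbc : b < c) (hfb : f b = c) (hfc : f c = a)
    (hb : b ∈ sAlpha f x) :
    (∃ q, f q = q ∧ q ∈ sAlpha f x) ∨
    (∃ q, f^[2] q = q ∧ f q ≠ q ∧ q ∈ sAlpha f x ∧ f q ∈ sAlpha f x) := by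
  classical
  set F : ℝ → ℝ := fun t => ((f (projIcc 0 1 zero_le_one t) : unitInterval) : ℝ) with hFdef
  have hFcont : Continuous F :=
    continuous_subtype_val.comp (hf.comp continuous_projIcc)
  have hFcoe : ∀ s : unitInterval, F (s : ℝ) = ((f s : unitInterval) : ℝ) := by
    intro s; simp only [hFdef, projIcc_val]
  set G : ℝ → ℝ := fun t => F (F t) with hGdef
  have hGcont : Continuous G := hFcont.comp hFcont
  have hGcoe : ∀ s : unitInterval, G (s : ℝ) = ((f (f s) : unitInterval) : ℝ) := by
    intro s
    have : G (s : ℝ) = F (F (s : ℝ)) := rfl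
    rw [this, hFcoe s, hFcoe (f s)]
  set A : ℝ := (a : ℝ)
  set B : ℝ := (b : ℝ)
  set C : ℝ := (c : ℝ)
  have hAB : A < B := hab
  have hBC : B < C := hbc
  have hGB : G B = A := by rw [hGcoe b, hfb, hfc]
  -- find s ∈ [B,C] with F s = B
  have hsB : B ∈ Icc (F C) (F B) := by
    rw [hFcoe b, hFcoe c, hfb, hfc]
    exact ⟨le_of_lt hAB, le_of_lt hBC⟩
  obtain ⟨S, hSmem, hFS⟩ := intermediate_value_Icc' (le_of_lt hBC) hFcont.continuousOn hsB
  -- fixed point q₁ of G in [B, S]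
  have hGS : G S = C := by
    have : F B = C := by rw [hFcoe b, hfb]
    rw [hGdef]; simp only []
    rw [hFS, this]
  have h0mem : (0:ℝ) ∈ Icc (G B - B) (G S - S) := by
    constructor
    · rw [hGB]; linarith
    · rw [hGS]; linarith [hSmem.2]
  obtain ⟨q₁, hq₁mem, hq₁eq⟩ := intermediate_value_Icc hSmem.1
    ((hGcont.sub continuous_id).continuousOn) h0mem
  have hq₁fix : G q₁ = q₁ := by simp at hq₁eq; linarith [hq₁eq]
  have hBq₁ : B < q₁ := by
    rcases lt_or_eq_of_le hq₁mem.1 with h | h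
    · exact h
    · exfalso; rw [← h] at hq₁fix; rw [hGB] at hq₁fix; linarith
  have hq₁C : q₁ ≤ C := le_trans hq₁mem.2 hSmem.2
  have hq₁1 : q₁ ≤ 1 := le_trans hq₁C c.2.2
  have h0B : (0:ℝ) ≤ B := b.2.1
  -- get branch point y = v m with A < y < q₁
  obtain ⟨v, hv, hclv⟩ := hb
  have hU : {t : unitInterval | A < (t:ℝ) ∧ (t:ℝ) < q₁} ∈ 𝓝 b := by
    have : IsOpen {t : unitInterval | A < (t:ℝ) ∧ (t:ℝ) < q₁} := by
      have : {t : unitInterval | A < (t:ℝ) ∧ (t:ℝ) < q₁} =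
          (fun t : unitInterval => (t:ℝ)) ⁻¹' (Ioo A q₁) := rfl
      rw [this]; exact isOpen_Ioo.preimage continuous_subtype_val
    exact this.mem_nhds ⟨hAB, hBq₁⟩
  obtain ⟨m, hym⟩ := (mapClusterPt_iff_frequently.mp hclv _ hU).exists
  set y : unitInterval := v m with hy
  have hyA : A < (y:ℝ) := hym.1
  have hyq₁ : (y:ℝ) < q₁ := hym.2
  -- pull back y into [B, q₁]
  have hymem : (y:ℝ) ∈ Ioo (G B) (G q₁) := by rw [hGB, hq₁fix]; exact ⟨hyA, hyq₁⟩
  obtain ⟨w₀, hw₀mem, hGw₀⟩ := intermediate_value_Ioo (le_of_lt hBq₁)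
    hGcont.continuousOn hymem
  -- run the monotone backward construction
  have hGBB : G B < B := by rw [hGB]; exact hAB
  obtain ⟨w, L, hw0, hrel, hbd, htend, hGL, hLB, hLq⟩ :=
    seqLemma G hGcont hGBB hq₁fix (le_of_lt hw₀mem.1) (le_of_lt hw₀mem.2)
  -- lift to the unit interval
  have hwmem : ∀ j, w j ∈ Icc (0:ℝ) 1 :=
    fun j => ⟨le_trans h0B (hbd j).1, le_trans (hbd j).2 hq₁1⟩
  set W : ℕ → unitInterval := fun j => ⟨w j, hwmem j⟩ with hW
  have hLmem : L ∈ Icc (0:ℝ) 1 := ⟨le_trans h0B hLB, le_trans hLq hq₁1⟩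
  set Q : unitInterval := ⟨L, hLmem⟩ with hQ
  have hWrel : ∀ j, f (f (W (j+1))) = W j := by
    intro j
    apply Subtype.ext
    have := hGcoe (W (j+1))
    simp only [hW] at this ⊢
    rw [← this]
    exact hrel j
  have hW0 : f (f (W 0)) = y := by
    apply Subtype.ext
    have := hGcoe (W 0)
    simp only [hW] at this
    rw [← this]
    simp only [hw0]
    exact hGw₀
  have hWQ : Tendsto W atTop (𝓝 Q) := by
    rw [tendsto_subtype_rng]
    exact htend
  have hfQ : f (f Q) = Q := by
    apply Subtype.ext
    have := hGcoe Q
    rw [← this]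
    exact hGL
  -- assemble the branch
  set z : ℕ → unitInterval := fun k => if k % 2 = 0 then f (W (k/2)) else W (k/2) with hz
  have hzstep : ∀ k, f (z (k+1)) = z k := by
    intro k
    rcases Nat.even_or_odd k with ⟨j, hj⟩ | ⟨j, hj⟩
    · have h1 : k % 2 = 0 := by omega
      have h2 : (k+1) % 2 = 1 := by omega
      have h3 : (k+1)/2 = j := by omega
      have h4 : k/2 = j := by omega
      simp only [hz, h1, h2, h3, h4]
      norm_num
    · have h1 : k % 2 = 1 := by omega
      have h2 : (k+1) % 2 = 0 := by omega
      have h3 : (k+1)/2 = j+1 := by omega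
      have h4 : k/2 = j := by omega
      simp only [hz, h1, h2, h3, h4]
      norm_num
      exact hWrel j
  set u : ℕ → unitInterval := fun n => if n ≤ m then v n else z (n - (m+1)) with hu
  have hubranch : IsBackwardBranch f x u := by
    constructor
    · simp only [hu, Nat.zero_le, if_pos]
      exact hv.1
    · intro n
      by_cases h1 : n + 1 ≤ m
      · have h2 : n ≤ m := le_trans (Nat.le_succ n) h1
        simp only [hu, if_pos h1, if_pos h2]
        exact hv.2 n
      · by_cases h2 : n ≤ m
        · -- n = m
          have h3 : n = m := by omega
          have h4 : n + 1 - (m+1) = 0 := by omega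
          simp only [hu, if_neg h1, if_pos h2, h4]
          have : z 0 = f (W 0) := by simp [hz]
          rw [this, hW0, h3]
        · have h4 : n + 1 - (m+1) = (n - (m+1)) + 1 := by omega
          simp only [hu, if_neg h1, if_neg h2, h4]
          exact hzstep _
  have hQclus : MapClusterPt Q atTop u := by
    apply myClusterOfSubseq (φ := fun j => m + 2 + 2*j)
    · exact (strictMono_nat_of_lt_succ (fun j => by omega)).tendsto_atTop
    · have : (u ∘ fun j => m + 2 + 2*j) = W := by
        funext j
        have h1 : ¬ (m + 2 + 2*j ≤ m) := by omega
        have h2 : m + 2 + 2*j - (m+1) = 2*j + 1 := by omega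
        have h3 : (2*j+1) % 2 = 1 := by omega
        have h4 : (2*j+1)/2 = j := by omega
        simp only [hu, Function.comp, if_neg h1, h2, hz, h3, h4]
        norm_num
      rw [this]
      exact hWQ
  have hfQclus : MapClusterPt (f Q) atTop u := by
    apply myClusterOfSubseq (φ := fun j => m + 1 + 2*j)
    · exact (strictMono_nat_of_lt_succ (fun j => by omega)).tendsto_atTop
    · have : (u ∘ fun j => m + 1 + 2*j) = fun j => f (W j) := by
        funext j
        have h1 : ¬ (m + 1 + 2*j ≤ m) := by omega
        have h2 : m + 1 + 2*j - (m+1) = 2*j := by omega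
        have h3 : (2*j) % 2 = 0 := by omega
        have h4 : (2*j)/2 = j := by omega
        simp only [hu, Function.comp, if_neg h1, h2, hz, h3, h4]
        norm_num
      rw [this]
      exact (hf.tendsto Q).comp hWQ
  by_cases hcase : f Q = Q
  · exact Or.inl ⟨Q, hcase, u, hubranch, hQclus⟩
  · refine Or.inr ⟨Q, ?_, hcase, ⟨u, hubranch, hQclus⟩, ⟨u, hubranch, hfQclus⟩⟩
    show f^[2] Q = Q
    rw [Function.iterate_succ_apply', Function.iterate_one]
    exact hfQ

local notation "σ" => unitInterval.symm

lemma conj_mem (f : unitInterval → unitInterval) (x y : unitInterval) (h : y ∈ sAlpha f x) :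
    σ y ∈ sAlpha (σ ∘ f ∘ σ) (σ x) := by
  obtain ⟨u, ⟨hu0, hustep⟩, hcl⟩ := h
  refine ⟨σ ∘ u, ⟨by simp [Function.comp, hu0], fun n => ?_⟩, ?_⟩
  · show σ (f (σ (σ (u (n+1))))) = σ (u n)
    rw [unitInterval.symm_symm, hustep]
  · have h2 : Tendsto σ (map u atTop) (map (σ ∘ u) atTop) :=
      le_of_eq (Filter.map_map)
    exact ClusterPt.map hcl (unitInterval.continuous_symm.continuousAt) h2

lemma conj_sq (f : unitInterval → unitInterval) (q : unitInterval) :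
    (σ ∘ f ∘ σ)^[2] q = σ (f^[2] (σ q)) := by
  show (σ ∘ f ∘ σ) ((σ ∘ f ∘ σ) q) = σ (f^[2] (σ q))
  simp only [Function.comp_apply, unitInterval.symm_symm]
  rw [Function.iterate_succ_apply', Function.iterate_one]

lemma sortedCase (f : unitInterval → unitInterval) (hf : Continuous f) (x : unitInterval)
    (a b c : unitInterval) (hab : a < b) (hbc : b < c)
    (hcyc : (f a = b ∧ f b = c ∧ f c = a) ∨ (f a = c ∧ f c = b ∧ f b = a))
    (hb : b ∈ sAlpha f x) :
    (∃ q, f q = q ∧ q ∈ sAlpha f x) ∨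
    (∃ q, f^[2] q = q ∧ f q ≠ q ∧ q ∈ sAlpha f x ∧ f q ∈ sAlpha f x) := by
  rcases hcyc with ⟨_, hfb, hfc⟩ | ⟨hfa, hfc, hfb⟩
  · exact core f hf x a b c hab hbc hfb hfc hb
  · -- conjugate case
    set f' : unitInterval → unitInterval := σ ∘ f ∘ σ with hf'
    have hf'cont : Continuous f' :=
      unitInterval.continuous_symm.comp (hf.comp unitInterval.continuous_symm)
    have hca : σ c < σ b := unitInterval.symm_lt_symm.mpr hbc
    have hba : σ b < σ a := unitInterval.symm_lt_symm.mpr hab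
    have h1 : f' (σ b) = σ a := by
      show σ (f (σ (σ b))) = σ a
      rw [unitInterval.symm_symm, hfb]
    have h2 : f' (σ a) = σ c := by
      show σ (f (σ (σ a))) = σ c
      rw [unitInterval.symm_symm, hfa]
    have hb' : σ b ∈ sAlpha f' (σ x) := conj_mem f x b hb
    have hback : ∀ q, q ∈ sAlpha f' (σ x) → σ q ∈ sAlpha f x := by
      intro q hq
      have := conj_mem f' (σ x) q hq
      have hid : σ ∘ f' ∘ σ = f := by
        funext t
        show σ (σ (f (σ (σ t)))) = f t
        rw [unitInterval.symm_symm, unitInterval.symm_symm]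
      rw [hid, unitInterval.symm_symm] at this
      exact this
    have hfσ : ∀ q, f (σ q) = σ (f' q) := by
      intro q
      show f (σ q) = σ (σ (f (σ q)))
      rw [unitInterval.symm_symm]
    rcases core f' hf'cont (σ x) (σ c) (σ b) (σ a) hca hba h1 h2 hb' with
      ⟨q, hq1, hq2⟩ | ⟨q, hq1, hq2, hq3, hq4⟩
    · refine Or.inl ⟨σ q, ?_, hback q hq2⟩
      rw [hfσ q, hq1]
    · refine Or.inr ⟨σ q, ?_, ?_, hback q hq3, ?_⟩
      · have := conj_sq f q
        rw [hq1] at this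
        have h5 : f^[2] (σ q) = σ (σ (f^[2] (σ q))) := (unitInterval.symm_symm _).symm
        rw [h5, ← this]
      · rw [hfσ q]
        intro hcon
        exact hq2 (unitInterval.symm_involutive.injective hcon)
      · rw [hfσ q]
        exact hback _ hq4

theorem stmt2 (f : unitInterval → unitInterval) (hf : Continuous f) (x : unitInterval)
    (p : unitInterval) (hp3 : f^[3] p = p) (hpmin : ∀ i, 0 < i → i < 3 → f^[i] p ≠ p)
    (horb : ∀ i, f^[i] p ∈ sAlpha f x) :
    (∃ q, f q = q ∧ q ∈ sAlpha f x) ∨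
    (∃ q, f^[2] q = q ∧ f q ≠ q ∧ q ∈ sAlpha f x ∧ f q ∈ sAlpha f x) := by
  set P0 := p with hP0
  set P1 := f p with hP1
  set P2 := f (f p) with hP2
  have e2 : f^[2] p = P2 := by
    rw [Function.iterate_succ_apply', Function.iterate_one]
  have c20 : f P2 = P0 := by
    have : f^[3] p = f (f^[2] p) := Function.iterate_succ_apply' f 2 p
    rw [e2] at this
    rw [← this, hp3]
  have m0 : P0 ∈ sAlpha f x := by simpa using horb 0
  have m1 : P1 ∈ sAlpha f x := by simpa using horb 1
  have m2 : P2 ∈ sAlpha f x := by have := horb 2; rwa [e2] at this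
  have d01 : P0 ≠ P1 := by
    intro h
    exact hpmin 1 (by norm_num) (by norm_num) (by rw [Function.iterate_one]; exact h.symm)
  have d02 : P2 ≠ P0 := by
    intro h
    exact hpmin 2 (by norm_num) (by norm_num) (by rw [e2, h])
  have d12 : P1 ≠ P2 := by
    intro h
    apply d02
    calc P2 = f P1 := rfl
    _ = f P2 := by rw [h]
    _ = P0 := c20
  rcases d01.lt_or_gt with h01 | h01
  · rcases d12.lt_or_gt with h12 | h12
    · -- P0 < P1 < P2
      exact sortedCase f hf x P0 P1 P2 h01 h12 (Or.inl ⟨rfl, rfl, c20⟩) m1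
    · rcases d02.lt_or_gt with h02 | h02
      · -- P2 < P0 < P1
        exact sortedCase f hf x P2 P0 P1 h02 h01 (Or.inl ⟨c20, rfl, rfl⟩) m0
      · -- P0 < P2 < P1
        exact sortedCase f hf x P0 P2 P1 h02 h12 (Or.inr ⟨rfl, rfl, c20⟩) m2
  · rcases d12.lt_or_gt with h12 | h12
    · rcases d02.lt_or_gt with h02 | h02
      · -- P1 < P2 < P0
        exact sortedCase f hf x P1 P2 P0 h12 h02 (Or.inl ⟨rfl, c20, rfl⟩) m2
      · -- P1 < P0 < P2
        exact sortedCase f hf x P1 P0 P2 h01 h02 (Or.inr ⟨rfl, c20, rfl⟩) m0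
    · -- P2 < P1 < P0
      exact sortedCase f hf x P2 P1 P0 h12 h01 (Or.inr ⟨c20, rfl, rfl⟩) m1
end

section
/- Let f : [0,1] → [0,1] be continuous and suppose there exist three distinct points x₁, x₂, x₃ ∈ [0,1] with sα(x₁) = sα(x₂) = sα(x₃) = [0,1]. Then f is topologically transitive on [0,1]. -/
open Filter Topology Set

set_option linter.unusedSectionVars false
set_option linter.unusedVariables false
set_option maxHeartbeats 1000000

namespace SA3

variable {X : Type*} [TopologicalSpace X]

theorem branch_iter {f : X → X} {x : X} {u : ℕ → X} (h : IsBackwardBranch f x u)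
    (m k : ℕ) : f^[k] (u (m + k)) = u m := by
  induction k with
  | zero => simp
  | succ k ih =>
      rw [Function.iterate_succ_apply]
      have h2 : f (u (m + (k+1))) = u (m + k) := h.2 (m + k)
      rw [h2]; exact ih

def orb (f : X → X) (W : Set X) : Set X := ⋃ n, f^[n] '' W

theorem subset_orb (f : X → X) (W : Set X) : W ⊆ orb f W :=
  fun x hx => mem_iUnion.2 ⟨0, by simpa using hx⟩

theorem orb_mono {f : X → X} {W W' : Set X} (h : W ⊆ W') : orb f W ⊆ orb f W' :=
  iUnion_mono fun n => image_mono h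

theorem mem_orb {f : X → X} {W : Set X} {n : ℕ} {y : X} (hy : y ∈ W) :
    f^[n] y ∈ orb f W := mem_iUnion.2 ⟨n, y, hy, rfl⟩

theorem orb_union (f : X → X) (W W' : Set X) :
    orb f (W ∪ W') = orb f W ∪ orb f W' := by
  simp [orb, image_union, iUnion_union_distrib]

theorem mapsTo_orb (f : X → X) (W : Set X) : MapsTo f (orb f W) (orb f W) := by
  rintro x hx
  obtain ⟨n, y, hy, rfl⟩ : ∃ n y, y ∈ W ∧ f^[n] y = x := by
    simpa [orb, mem_iUnion] using hx
  exact mem_iUnion.2 ⟨n+1, y, hy, (Function.iterate_succ_apply' f n y)⟩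

theorem orb_subset_inv {f : X → X} {W T : Set X} (hT : MapsTo f T T) (h : W ⊆ T) :
    orb f W ⊆ T := by
  rintro x hx
  obtain ⟨n, y, hy, rfl⟩ : ∃ n y, y ∈ W ∧ f^[n] y = x := by
    simpa [orb, mem_iUnion] using hx
  exact hT.iterate n (h hy)

theorem mapsTo_acl {f : X → X} (hf : Continuous f) (W : Set X) :
    MapsTo f (closure (orb f W)) (closure (orb f W)) :=
  (mapsTo_orb f W).closure hf

theorem lam {f : X → X} {x : X} (hs : sAlpha f x = univ) {W : Set X}
    (hW : IsOpen W) (hne : W.Nonempty) (N : ℕ) : ∃ n ≥ N, x ∈ f^[n] '' W := by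
  obtain ⟨y, hy⟩ := hne
  have hy' : y ∈ sAlpha f x := hs ▸ mem_univ y
  obtain ⟨u, hu, hc⟩ := hy'
  have hfreq := (mapClusterPt_iff_frequently.mp hc) W (hW.mem_nhds hy)
  obtain ⟨n, hn, hnW⟩ := (frequently_atTop.mp hfreq) N
  refine ⟨n, hn, u n, hnW, ?_⟩
  have := branch_iter hu 0 n
  rwa [Nat.zero_add, hu.1] at this

theorem lemmaM {f : X → X} (hf : Continuous f) {x : X} (hs : sAlpha f x = univ)
    {K : Set X} (hK : IsClosed K) (hinv : MapsTo f K K) :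
    MapsTo f (closure Kᶜ) (closure Kᶜ) := by
  have step : ∀ y ∈ Kᶜ, f y ∈ closure Kᶜ := by
    intro y hy
    have hy' : y ∈ sAlpha f x := hs ▸ mem_univ y
    obtain ⟨u, hu, hc⟩ := hy'
    have hfreq := mapClusterPt_iff_frequently.mp hc
    obtain ⟨n₀, -, hn₀⟩ := (frequently_atTop.mp (hfreq Kᶜ (hK.isOpen_compl.mem_nhds hy))) 0
    have tail : ∀ n, n₀ ≤ n → u n ∈ Kᶜ := by
      intro n hn
      by_contra hmem
      rw [mem_compl_iff, not_not] at hmem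
      apply hn₀
      have h1 := branch_iter hu n₀ (n - n₀)
      rw [Nat.add_sub_cancel' hn] at h1
      exact h1 ▸ (hinv.iterate (n - n₀)) hmem
    rw [mem_closure_iff_nhds]
    intro C hC
    have hfC : f ⁻¹' C ∈ 𝓝 y := hf.continuousAt.preimage_mem_nhds hC
    obtain ⟨n, hn, hnC⟩ := (frequently_atTop.mp (hfreq _ hfC)) (n₀ + 1)
    refine ⟨u (n - 1), ?_, tail _ (by omega)⟩
    have h2 : f (u n) = u (n-1) := by
      have := hu.2 (n-1)
      rwa [Nat.sub_add_cancel (by omega : 1 ≤ n)] at this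
    exact h2 ▸ hnC
  intro y hy
  have h1 : f y ∈ closure (f '' Kᶜ) :=
    image_closure_subset_closure_image hf (mem_image_of_mem f hy)
  have h2 : f '' Kᶜ ⊆ closure Kᶜ := by
    rintro z ⟨w, hw, rfl⟩; exact step w hw
  exact closure_minimal h2 isClosed_closure h1

theorem interior_inter_closure_compl {K : Set X} :
    interior K ∩ closure Kᶜ = ∅ := by
  ext z; simp only [mem_inter_iff, mem_empty_iff_false, iff_false, not_and]
  intro hz hz'
  rcases mem_closure_iff_nhds.mp hz' _ (isOpen_interior.mem_nhds hz) with ⟨w, hw1, hw2⟩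
  exact hw2 (interior_subset hw1)

/-- every full-sα point belongs to every closed invariant set with nonempty interior -/
theorem mem_of_inv {f : X → X} {x : X} (hs : sAlpha f x = univ)
    {K : Set X} (hinv : MapsTo f K K) (hint : (interior K).Nonempty) : x ∈ K := by
  obtain ⟨n, -, y, hy, rfl⟩ := lam hs isOpen_interior hint 0
  exact hinv.iterate n (interior_subset hy)

/-- every full-sα point belongs to the closure of the complement of any proper closed
invariant set -/
theorem mem_closure_compl {f : X → X} (hf : Continuous f) {x : X}
    (hs : sAlpha f x = univ) {K : Set X} (hK : IsClosed K) (hinv : MapsTo f K K)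
    (hne : Kᶜ.Nonempty) : x ∈ closure Kᶜ := by
  obtain ⟨n, -, y, hy, rfl⟩ := lam hs hK.isOpen_compl hne 0
  exact (lemmaM hf hs hK hinv).iterate n (subset_closure hy)

/-- Case 2 automatically holds: the orbit closure of any neighborhood of a full-sα
point is everything. -/
theorem acl_nbhd_univ {f : X → X} (hf : Continuous f) {x : X}
    (hs : sAlpha f x = univ) {B : Set X} (hB : IsOpen B) (hxB : x ∈ B) :
    closure (orb f B) = univ := by
  by_contra hne
  have hKc : (closure (orb f B))ᶜ.Nonempty := nonempty_compl.mpr hne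
  have hx' := mem_closure_compl hf hs isClosed_closure (mapsTo_acl hf B) hKc
  rcases mem_closure_iff_nhds.mp hx' _ (hB.mem_nhds hxB) with ⟨w, hw1, hw2⟩
  exact hw2 (subset_closure (subset_orb f B hw1))

/-- the frontier-type set is invariant -/
theorem mapsTo_frontier {f : X → X} (hf : Continuous f) {x : X}
    (hs : sAlpha f x = univ) {K : Set X} (hK : IsClosed K) (hinv : MapsTo f K K) :
    MapsTo f (K ∩ closure Kᶜ) (K ∩ closure Kᶜ) :=
  hinv.inter_inter (lemmaM hf hs hK hinv)

/-- The density lemma. -/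
theorem density {f : X → X} (hf : Continuous f) {x : X} (hs : sAlpha f x = univ)
    {K : Set X} (hK : IsClosed K) (hinv : MapsTo f K K)
    {B : Set X} (hB : IsOpen B) (hxB : x ∈ B) :
    interior K ⊆ closure (orb f (B ∩ interior K)) ∧
      Kᶜ ⊆ closure (orb f (B ∩ Kᶜ)) := by
  have hinv' := lemmaM hf hs hK hinv
  have hD := hinv.inter_inter hinv'
  have hsplit : B = (B ∩ interior K) ∪ (B ∩ Kᶜ) ∪ (B ∩ (K ∩ closure Kᶜ)) := by
    ext z
    simp only [mem_union, mem_inter_iff, mem_compl_iff]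
    constructor
    · intro hz
      by_cases h1 : z ∈ K
      · by_cases h2 : z ∈ interior K
        · exact Or.inl (Or.inl ⟨hz, h2⟩)
        · refine Or.inr ⟨hz, h1, ?_⟩
          rw [mem_closure_iff_nhds]
          intro C hC
          rcases (C ∩ Kᶜ).eq_empty_or_nonempty with hemp | hne
          · exfalso
            apply h2
            apply mem_interior_iff_mem_nhds.2 (Filter.mem_of_superset hC ?_)
            intro w hw
            by_contra hwK
            exact (eq_empty_iff_forall_notMem.mp hemp) w ⟨hw, hwK⟩
          · exact hne
      · exact Or.inl (Or.inr ⟨hz, h1⟩)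
    · rintro ((⟨h,-⟩ | ⟨h,-⟩) | ⟨h,-⟩) <;> exact h
  have huniv : closure (orb f B) = univ := acl_nbhd_univ hf hs hB hxB
  have hdec : (univ : Set X) = closure (orb f (B ∩ interior K)) ∪
      closure (orb f (B ∩ Kᶜ)) ∪ closure (orb f (B ∩ (K ∩ closure Kᶜ))) := by
    rw [← closure_union, ← closure_union, ← orb_union, ← orb_union, ← hsplit, huniv]
  have hsub1 : closure (orb f (B ∩ interior K)) ⊆ K :=
    closure_minimal (orb_subset_inv hinv (fun z hz => interior_subset hz.2)) hK
  have hsub2 : closure (orb f (B ∩ Kᶜ)) ⊆ closure Kᶜ :=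
    closure_minimal (orb_subset_inv hinv' (fun z hz => subset_closure hz.2)) isClosed_closure
  have hsub3 : closure (orb f (B ∩ (K ∩ closure Kᶜ))) ⊆ K ∩ closure Kᶜ :=
    closure_minimal (orb_subset_inv hD (fun z hz => hz.2)) (hK.inter isClosed_closure)
  constructor
  · intro z hz
    have := hdec ▸ mem_univ z
    rcases this with ((h | h) | h)
    · exact h
    · have hbad : z ∈ interior K ∩ closure Kᶜ := ⟨hz, hsub2 h⟩
      rw [interior_inter_closure_compl] at hbad
      exact hbad.elim
    · have hbad : z ∈ interior K ∩ closure Kᶜ := ⟨hz, (hsub3 h).2⟩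
      rw [interior_inter_closure_compl] at hbad
      exact hbad.elim
  · intro z hz
    have := hdec ▸ mem_univ z
    rcases this with ((h | h) | h)
    · exact absurd (hsub1 h) hz
    · exact h
    · exact absurd (hsub3 h).1 hz


section Comb

theorem iter_fixed_mul {α : Type*} {g : α → α} {L : ℕ} {x : α} (h : g^[L] x = x) (k : ℕ) :
    g^[L * k] x = x := by
  rw [Function.iterate_mul]
  exact Function.iterate_fixed h k

theorem iter_mod {α : Type*} {g : α → α} {L : ℕ} {x : α} (hL : 0 < L)
    (h : g^[L] x = x) (q : ℕ) : g^[q] x = g^[q % L] x := by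
  conv_lhs => rw [← Nat.mod_add_div q L]
  rw [Function.iterate_add_apply]
  congr 1
  exact iter_fixed_mul h _

/-- from two distinct points with full forward reach, a self-map of `Fin c` is a cyclic
permutation: everything has exact period `c`. -/
theorem reach_cyclic {c : ℕ} {π : Fin c → Fin c} {u v : Fin c}
    (huv : u ≠ v) (hu : ∀ j, ∃ n, π^[n] u = j) (hv : ∀ j, ∃ n, π^[n] v = j) :
    (∀ j, π^[c] j = j) ∧ (∀ (j : Fin c) (n : ℕ), π^[n] j = j → c ∣ n) := by
  obtain ⟨n₂, hn₂⟩ := hu v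
  obtain ⟨n₁, hn₁⟩ := hv u
  have ha : π^[n₁ + n₂] u = u := by
    rw [Function.iterate_add_apply, hn₂, hn₁]
  have hapos : 0 < n₁ + n₂ := by
    rcases Nat.eq_zero_or_pos (n₁ + n₂) with h | h
    · exfalso
      have h2 : n₂ = 0 := by omega
      rw [h2] at hn₂
      exact huv hn₂
    · exact h
  have hex : ∃ p, 0 < p ∧ π^[p] u = u := ⟨n₁ + n₂, hapos, ha⟩
  classical
  set P := Nat.find hex with hP
  obtain ⟨hPpos, hPfix⟩ := Nat.find_spec hex
  -- minimal period divides all periods of u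
  have hdvd_u : ∀ q, π^[q] u = u → P ∣ q := by
    intro q hq
    rcases Nat.eq_zero_or_pos (q % P) with hr | hr
    · exact Nat.dvd_of_mod_eq_zero hr
    · exfalso
      have hmod : π^[q % P] u = u := by
        rw [← iter_mod hPpos hPfix q, hq]
      exact Nat.find_min hex (Nat.mod_lt q hPpos) ⟨hr, hmod⟩
  -- u reaches everything within P steps
  have hsurj : ∀ j, ∃ m, m < P ∧ π^[m] u = j := by
    intro j
    obtain ⟨n, hn⟩ := hu j
    exact ⟨n % P, Nat.mod_lt n hPpos, by rw [← iter_mod hPpos hPfix n, hn]⟩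
  -- injectivity within P steps
  have hinj : ∀ m n, m < P → n < P → π^[m] u = π^[n] u → m = n := by
    have key : ∀ m n, n ≤ m → m < P → n < P → π^[m] u = π^[n] u → m = n := by
      intro m n hnm hm hn heq
      have hQ : π^[P * (m + 1)] u = u := iter_fixed_mul hPfix _
      have hble : m ≤ P * (m + 1) := by nlinarith [hPpos]
      have hb : π^[(P * (m + 1) - m) + n] u = u := by
        rw [Function.iterate_add_apply, ← heq, ← Function.iterate_add_apply,
          Nat.sub_add_cancel hble, hQ]
      have h1 : P ∣ (P * (m + 1) - m) + n := hdvd_u _ hb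
      have h2 : P ∣ P * (m + 1) := Dvd.intro _ rfl
      have h3 : P ∣ m - n := by
        have : m - n = P * (m + 1) - ((P * (m + 1) - m) + n) := by omega
        rw [this]
        exact Nat.dvd_sub h2 h1
      have h4 : ¬ (0 < m - n) := fun hpos => by
        have := Nat.le_of_dvd hpos h3
        omega
      omega
    intro m n hm hn heq
    rcases le_total n m with h | h
    · exact key m n h hm hn heq
    · exact (key n m h hn hm heq.symm).symm
  -- P = c
  have hPc : P = c := by
    have hle : P ≤ c := by
      have : Function.Injective (fun m : Fin P => π^[(m : ℕ)] u) := by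
        intro a b hab
        exact Fin.ext (hinj a b a.2 b.2 hab)
      simpa using Fintype.card_le_of_injective _ this
    have hge : c ≤ P := by
      have : Function.Surjective (fun m : Fin P => π^[(m : ℕ)] u) := by
        intro j
        obtain ⟨m, hm, hmj⟩ := hsurj j
        exact ⟨⟨m, hm⟩, hmj⟩
      simpa using Fintype.card_le_of_surjective _ this
    omega
  have hfindc : Nat.find hex = c := by rw [← hP]; exact hPc
  have hfixc : π^[c] u = u := by rw [hfindc] at hPfix; exact hPfix
  have hdvdc : ∀ q, π^[q] u = u → c ∣ q := by
    intro q hq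
    have := hdvd_u q hq
    rwa [hPc] at this
  have hsurjc : ∀ j, ∃ m, m < c ∧ π^[m] u = j := by
    intro j
    obtain ⟨m, hm, hmj⟩ := hsurj j
    exact ⟨m, hPc ▸ hm, hmj⟩
  constructor
  · intro j
    obtain ⟨m, hm, rfl⟩ := hsurjc j
    rw [← Function.iterate_add_apply, Nat.add_comm, Function.iterate_add_apply, hfixc]
  · intro j n hn
    obtain ⟨m, hm, rfl⟩ := hsurjc j
    have hk : π^[c - m] (π^[m] u) = u := by
      rw [← Function.iterate_add_apply, Nat.sub_add_cancel (le_of_lt hm), hfixc]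
    have h1 : π^[n + m] u = π^[m] u := by
      rw [Function.iterate_add_apply, hn]
    have h2 : π^[(c - m) + (n + m)] u = u := by
      rw [Function.iterate_add_apply, h1, hk]
    have h3 : c ∣ (c - m) + (n + m) := hdvdc _ h2
    have heq : n = ((c - m) + (n + m)) - c := by omega
    rw [heq]
    exact Nat.dvd_sub h3 dvd_rfl

theorem orbit_card_dvd {α : Type*} [DecidableEq α] (g : α → α) (L : ℕ) (hL : 0 < L)
    (hper : ∀ x, g^[L] x = x) (hdvd : ∀ (x : α) (n : ℕ), g^[n] x = x → L ∣ n)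
    (T : Finset α) (hT : ∀ x ∈ T, g x ∈ T) : L ∣ T.card := by
  classical
  induction T using Finset.strongInduction with
  | _ T ih =>
    rcases T.eq_empty_or_nonempty with rfl | ⟨x, hx⟩
    · simp
    · set O : Finset α := (Finset.range L).image (fun n => g^[n] x) with hO
      have hiter : ∀ n, g^[n] x ∈ T := by
        intro n
        induction n with
        | zero => simpa using hx
        | succ n ihn => rw [Function.iterate_succ_apply']; exact hT _ ihn
      have hOsub : O ⊆ T := by
        intro y hy
        simp only [hO, Finset.mem_image, Finset.mem_range] at hy
        obtain ⟨n, -, rfl⟩ := hy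
        exact hiter n
      have hinj : ∀ m n, m < L → n < L → g^[m] x = g^[n] x → m = n := by
        have key : ∀ m n, n ≤ m → m < L → n < L → g^[m] x = g^[n] x → m = n := by
          intro m n hnm hm hn heq
          have hQ : g^[L * (m + 1)] x = x := iter_fixed_mul (hper x) _
          have hble : m ≤ L * (m + 1) := by nlinarith
          have hb : g^[(L * (m + 1) - m) + n] x = x := by
            rw [Function.iterate_add_apply, ← heq, ← Function.iterate_add_apply,
              Nat.sub_add_cancel hble, hQ]
          have h1 : L ∣ (L * (m + 1) - m) + n := hdvd _ _ hb
          have h2 : L ∣ L * (m + 1) := Dvd.intro _ rfl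
          have h3 : L ∣ m - n := by
            have : m - n = L * (m + 1) - ((L * (m + 1) - m) + n) := by omega
            rw [this]; exact Nat.dvd_sub h2 h1
          have h4 := Nat.eq_zero_of_dvd_of_lt h3 (show m - n < L by omega)
          omega
        intro m n hm hn heq
        rcases le_total n m with h | h
        · exact key m n h hm hn heq
        · exact (key n m h hn hm heq.symm).symm
      have hcardO : O.card = L := by
        rw [hO, Finset.card_image_of_injOn, Finset.card_range]
        intro m hm n hn heq
        simp only [Finset.mem_coe, Finset.mem_range] at hm hn
        exact hinj m n hm hn heq
      have hT' : ∀ y ∈ T \ O, g y ∈ T \ O := by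
        intro y hy
        rw [Finset.mem_sdiff] at hy ⊢
        refine ⟨hT y hy.1, ?_⟩
        intro hgy
        apply hy.2
        simp only [hO, Finset.mem_image, Finset.mem_range] at hgy ⊢
        obtain ⟨n, hn, hgyn⟩ := hgy
        have hthis : g^[L - 1] (g y) = y := by
          calc g^[L-1] (g y) = g^[L-1+1] y := (Function.iterate_succ_apply g (L-1) y).symm
          _ = g^[L] y := by rw [show L - 1 + 1 = L by omega]
          _ = y := hper y
        have hy1 : y = g^[L - 1 + n] x := by
          rw [Function.iterate_add_apply, hgyn]
          exact hthis.symm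
        refine ⟨(L - 1 + n) % L, Nat.mod_lt _ hL, ?_⟩
        rw [← iter_mod hL (hper x) (L - 1 + n), hy1]
      have hss : T \ O ⊂ T := by
        refine Finset.sdiff_ssubset ?_ ?_
        · exact hOsub
        · exact ⟨x, by simp [hO, Finset.mem_image]; exact ⟨0, hL, by simp⟩⟩
      have hcard : T.card = (T \ O).card + L := by
        rw [Finset.card_sdiff_of_subset hOsub, hcardO]
        have := Finset.card_le_card hOsub
        omega
      rw [hcard]
      exact Nat.dvd_add (ih _ hss hT') dvd_rfl

theorem final_arith (c₁ c₂ : ℕ) (h1 : 0 < c₁) (h2 : 0 < c₂)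
    (hd1 : c₁ ≤ c₂ + 1) (hd2 : c₂ ≤ c₁ + 1)
    (hdvd : Nat.lcm c₁ c₂ ∣ c₁ + c₂ - 1) (hM : 3 ≤ c₁ + c₂ - 1) : False := by
  have hcases : c₁ = c₂ ∨ c₂ = c₁ + 1 ∨ c₁ = c₂ + 1 := by omega
  rcases hcases with rfl | h | h
  · rw [Nat.lcm_self] at hdvd
    have h2c : c₁ ∣ c₁ + c₁ := Dvd.intro 2 (by ring)
    have h1' : c₁ ∣ 1 := by
      have := Nat.dvd_sub h2c hdvd
      simpa [show c₁ + c₁ - (c₁ + c₁ - 1) = 1 by omega] using this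
    have := Nat.le_of_dvd (by omega) h1'
    omega
  · subst h
    have hcop : Nat.Coprime c₁ (c₁ + 1) := Nat.coprime_self_add_right.mpr (Nat.coprime_one_right _)
    rw [Nat.Coprime.lcm_eq_mul hcop] at hdvd
    have hM' : c₁ + (c₁ + 1) - 1 = 2 * c₁ := by omega
    rw [hM'] at hdvd
    have hle := Nat.le_of_dvd (by omega) hdvd
    nlinarith
  · subst h
    have hcop : Nat.Coprime (c₂ + 1) c₂ :=
      (Nat.coprime_self_add_right.mpr (Nat.coprime_one_right _)).symm
    rw [Nat.Coprime.lcm_eq_mul hcop] at hdvd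
    have hM' : (c₂ + 1) + c₂ - 1 = 2 * c₂ := by omega
    rw [hM'] at hdvd
    have hle := Nat.le_of_dvd (by omega) hdvd
    nlinarith

end Comb


section Interval

noncomputable instance : Inhabited unitInterval := ⟨0⟩
noncomputable instance : ConditionallyCompleteLinearOrder unitInterval :=
  ordConnectedSubsetConditionallyCompleteLinearOrder unitInterval
instance : DenselyOrdered unitInterval := by
  constructor
  rintro ⟨a, ha⟩ ⟨b, hb⟩ h
  obtain ⟨c, hc1, hc2⟩ := exists_between (show a < b from h)
  exact ⟨⟨c, le_trans ha.1 hc1.le, le_trans hc2.le hb.2⟩, hc1, hc2⟩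

theorem le_one'' (x : unitInterval) : x ≤ 1 := x.2.2
theorem zero_lt_one' : (0 : unitInterval) < 1 := by
  change (0:ℝ) < 1; norm_num

theorem nbhd_seg {w : unitInterval} {O : Set unitInterval} (hO : O ∈ 𝓝 w) :
    ∃ y, y ≠ w ∧ Icc (min w y) (max w y) ⊆ O := by
  rcases lt_or_eq_of_le (le_one'' w) with hx | hx
  · obtain ⟨u, hu, hsub⟩ := exists_Ico_subset_of_mem_nhds hO ⟨1, hx⟩
    obtain ⟨y, hy1, hy2⟩ := exists_between hu
    refine ⟨y, ne_of_gt hy1, ?_⟩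
    rw [min_eq_left (le_of_lt hy1), max_eq_right (le_of_lt hy1)]
    exact fun z hz => hsub ⟨hz.1, lt_of_le_of_lt hz.2 hy2⟩
  · have h0 : (0 : unitInterval) < w := hx ▸ zero_lt_one'
    obtain ⟨l, hl, hsub⟩ := exists_Ioc_subset_of_mem_nhds' hO h0
    obtain ⟨y, hy1, hy2⟩ := exists_between hl.2
    refine ⟨y, ne_of_lt hy2, ?_⟩
    rw [min_eq_right (le_of_lt hy2), max_eq_left (le_of_lt hy2)]
    exact fun z hz => hsub ⟨lt_of_lt_of_le hy1 hz.1, hz.2⟩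


theorem Icc_empty' : (Icc (1:unitInterval) 0) = ∅ :=
  Icc_eq_empty (not_le_of_gt zero_lt_one')

/-- finite unions of closed intervals -/
def Wform (K : Set unitInterval) : Prop :=
  ∃ (n : ℕ) (a b : Fin n → unitInterval), K = ⋃ i, Icc (a i) (b i)

theorem wform_isClosed {K : Set unitInterval} (h : Wform K) : IsClosed K := by
  obtain ⟨n, a, b, rfl⟩ := h
  exact isClosed_iUnion_of_finite (fun i => isClosed_Icc)

theorem compl_Icc' (a b : unitInterval) : (Icc a b)ᶜ = Iio a ∪ Ioi b := by
  ext x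
  simp only [mem_compl_iff, mem_Icc, mem_union, mem_Iio, mem_Ioi, not_and_or, not_le]

/-- distribute an intersection of binary unions -/
theorem iInter_union_distrib {α : Type*} {n : ℕ} (s t : Fin n → Set α) :
    (⋂ i, (s i ∪ t i)) = ⋃ σ : Fin n → Bool, ⋂ i, (if σ i then s i else t i) := by
  classical
  ext x
  simp only [mem_iInter, mem_iUnion, mem_union]
  constructor
  · intro h
    refine ⟨fun i => if x ∈ s i then true else false, fun i => ?_⟩
    by_cases hx : x ∈ s i
    · simp [hx]
    · simp only [hx, if_false]
      rcases h i with h' | h'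
      · exact absurd h' hx
      · exact h'
  · rintro ⟨σ, hσ⟩ i
    have := hσ i
    by_cases hb : σ i
    · simp only [hb, if_true] at this; exact Or.inl this
    · simp only [hb, if_false] at this; exact Or.inr this

theorem wform_compl_open {K : Set unitInterval} (h : Wform K) :
    ∃ (m : ℕ) (V : Fin m → Set unitInterval),
      (∀ j, IsOpen (V j)) ∧ (∀ j, OrdConnected (V j)) ∧ Kᶜ = ⋃ j, V j := by
  classical
  obtain ⟨n, a, b, rfl⟩ := h
  have hc : (⋃ i, Icc (a i) (b i))ᶜ = ⋂ i, (Iio (a i) ∪ Ioi (b i)) := by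
    rw [compl_iUnion]
    exact iInter_congr fun i => compl_Icc' (a i) (b i)
  rw [hc, iInter_union_distrib]
  set e := Fintype.equivFin (Fin n → Bool) with he
  refine ⟨Fintype.card (Fin n → Bool),
    fun j => ⋂ i, (if (e.symm j) i then Iio (a i) else Ioi (b i)), ?_, ?_, ?_⟩
  · intro j
    exact isOpen_iInter_of_finite fun i => by
      by_cases hb : (e.symm j) i <;> simp [hb, isOpen_Iio, isOpen_Ioi]
  · intro j
    constructor
    intro x hx y hy z hz
    rw [mem_iInter] at hx hy ⊢
    intro i
    have hxi := hx i
    have hyi := hy i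
    by_cases hb : (e.symm j) i
    · simp only [hb, if_true, mem_Iio] at hxi hyi ⊢
      exact lt_of_le_of_lt hz.2 hyi
    · simp only [hb, if_false, mem_Ioi] at hxi hyi ⊢
      exact lt_of_lt_of_le hxi hz.1
  · ext x
    simp only [mem_iUnion]
    constructor
    · rintro ⟨σ, hσ⟩
      exact ⟨e σ, by simpa using hσ⟩
    · rintro ⟨j, hj⟩
      exact ⟨e.symm j, hj⟩

theorem closure_open_ordconn {V : Set unitInterval} (hV : IsOpen V) (hoc : OrdConnected V) :
    ∃ a b, closure V = Icc a b := by
  rcases V.eq_empty_or_nonempty with rfl | hne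
  · exact ⟨1, 0, by rw [closure_empty, Icc_empty']⟩
  · have hconn : IsConnected (closure V) :=
      ⟨hne.closure, hoc.isPreconnected.closure⟩
    have hcomp : IsCompact (closure V) := isClosed_closure.isCompact
    exact ⟨_, _, eq_Icc_of_connected_compact hconn hcomp⟩

theorem wform_closure_compl {K : Set unitInterval} (h : Wform K) : Wform (closure Kᶜ) := by
  obtain ⟨m, V, hopen, hoc, hcompl⟩ := wform_compl_open h
  rw [hcompl, closure_iUnion_of_finite]
  choose a b hab using fun j => closure_open_ordconn (hopen j) (hoc j)
  exact ⟨m, a, b, iUnion_congr hab⟩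


structure NFData (K : Set unitInterval) where
  c : ℕ
  a : Fin c → unitInterval
  b : Fin c → unitInterval
  lt : ∀ i, a i < b i
  disj : ∀ i j, i ≠ j → Icc (a i) (b i) ∩ Icc (a j) (b j) = ∅
  ueq : K = ⋃ i, Icc (a i) (b i)

namespace NFData

variable {K : Set unitInterval} (d : NFData K)

def piece (i : Fin d.c) : Set unitInterval := Icc (d.a i) (d.b i)

theorem piece_subset (i : Fin d.c) : d.piece i ⊆ K := by
  intro x hx
  have h := d.ueq
  rw [h]
  exact mem_iUnion.mpr ⟨i, hx⟩

theorem a_mem (i : Fin d.c) : d.a i ∈ d.piece i := ⟨le_refl _, le_of_lt (d.lt i)⟩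
theorem b_mem (i : Fin d.c) : d.b i ∈ d.piece i := ⟨le_of_lt (d.lt i), le_refl _⟩

theorem index_unique {x : unitInterval} {i j : Fin d.c}
    (hi : x ∈ d.piece i) (hj : x ∈ d.piece j) : i = j := by
  by_contra hij
  exact (eq_empty_iff_forall_notMem.mp (d.disj i j hij) x) ⟨hi, hj⟩

theorem mem_piece {x : unitInterval} (hx : x ∈ K) : ∃ i, x ∈ d.piece i := by
  have h := d.ueq
  rw [h] at hx
  exact mem_iUnion.mp hx

include d in
theorem closed : IsClosed K := by
  have h := d.ueq
  rw [h]
  exact isClosed_iUnion_of_finite (fun i => isClosed_Icc)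

theorem absorb {s : Set unitInterval} (hs : IsPreconnected s) (hsub : s ⊆ K)
    {i : Fin d.c} (hmeet : (s ∩ d.piece i).Nonempty) : s ⊆ d.piece i := by
  classical
  set t' : Set unitInterval := ⋃ j ∈ {j : Fin d.c | j ≠ i}, d.piece j with ht'
  have ht'c : IsClosed t' :=
    (Set.toFinite _).isClosed_biUnion (fun j _ => isClosed_Icc)
  have hcov : s ⊆ d.piece i ∪ t' := by
    intro x hx
    obtain ⟨j, hj⟩ := d.mem_piece (hsub hx)
    by_cases hji : j = i
    · exact Or.inl (hji ▸ hj)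
    · exact Or.inr (mem_biUnion hji hj)
  rcases (s ∩ t').eq_empty_or_nonempty with hemp | hne
  · intro x hx
    rcases hcov hx with h | h
    · exact h
    · exfalso
      have hmem : x ∈ s ∩ t' := ⟨hx, h⟩
      rw [hemp] at hmem
      exact hmem
  · exfalso
    obtain ⟨y, hys, hyi, hyt⟩ := isPreconnected_closed_iff.mp hs (d.piece i) t'
      isClosed_Icc ht'c hcov hmeet hne
    obtain ⟨j, hj, hyj⟩ := mem_iUnion₂.mp hyt
    exact hj (d.index_unique hyj hyi)

end NFData

theorem nfdata_of {K O : Set unitInterval} (hK : IsClosed K) (hO : IsOpen O)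
    (hKO : K = closure O) (hw : Wform K) : Nonempty (NFData K) := by
  classical
  obtain ⟨n, aw, bw, hwe⟩ := hw
  rcases K.eq_empty_or_nonempty with hKe | hKne
  · refine ⟨⟨0, Fin.elim0, Fin.elim0, fun i => i.elim0, fun i => i.elim0, ?_⟩⟩
    rw [hKe, iUnion_of_empty]
  have hOK : O ⊆ K := hKO ▸ subset_closure
  have hpiece_sub : ∀ i, Icc (aw i) (bw i) ⊆ K := by
    intro i; rw [hwe]; exact subset_iUnion (fun i => Icc (aw i) (bw i)) i
  have hpiece_pc : ∀ i : Fin n, IsPreconnected (Icc (aw i) (bw i)) :=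
    fun i => (ordConnected_Icc).isPreconnected
  set cpt : Fin n → Set unitInterval := fun i =>
    if h : (Icc (aw i) (bw i)).Nonempty then connectedComponentIn K h.choose else ∅ with hcpt
  set comps : Finset (Set unitInterval) := (Finset.univ.image cpt).erase ∅ with hcomps
  -- membership of components
  have hmem : ∀ x ∈ K, connectedComponentIn K x ∈ comps := by
    intro x hx
    have hx' : x ∈ ⋃ i, Icc (aw i) (bw i) := hwe ▸ hx
    obtain ⟨i, hxi⟩ := mem_iUnion.mp hx'
    have hne : (Icc (aw i) (bw i)).Nonempty := ⟨x, hxi⟩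
    have hsubcomp : Icc (aw i) (bw i) ⊆ connectedComponentIn K x :=
      (hpiece_pc i).subset_connectedComponentIn hxi (hpiece_sub i)
    have hchoose : hne.choose ∈ connectedComponentIn K x := hsubcomp hne.choose_spec
    have heq : connectedComponentIn K x = connectedComponentIn K hne.choose :=
      connectedComponentIn_eq hchoose
    rw [hcomps, Finset.mem_erase]
    constructor
    · exact Nonempty.ne_empty ⟨x, mem_connectedComponentIn hx⟩
    · rw [Finset.mem_image]
      exact ⟨i, Finset.mem_univ i, by rw [hcpt]; simp only [hne, dif_pos]; exact heq.symm⟩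
  have hrep : ∀ C ∈ comps, ∃ z ∈ K, C = connectedComponentIn K z := by
    intro C hC
    rw [hcomps, Finset.mem_erase, Finset.mem_image] at hC
    obtain ⟨hCne, i, -, hCi⟩ := hC
    rw [hcpt] at hCi
    by_cases hne : (Icc (aw i) (bw i)).Nonempty
    · simp only [hne, dif_pos] at hCi
      exact ⟨hne.choose, hpiece_sub i hne.choose_spec, hCi.symm⟩
    · simp only [hne, dif_neg, not_false_iff] at hCi
      exact absurd hCi.symm hCne
  have hprops : ∀ C ∈ comps, IsClosed C ∧ IsPreconnected C ∧ C ⊆ K ∧ C.Nonempty := by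
    intro C hC
    obtain ⟨z, hz, rfl⟩ := hrep C hC
    have hsub := connectedComponentIn_subset K z
    have hpc : IsPreconnected (connectedComponentIn K z) := isPreconnected_connectedComponentIn
    have hclosed : IsClosed (connectedComponentIn K z) := by
      have h1 : closure (connectedComponentIn K z) ⊆ K := closure_minimal hsub hK
      have h2 : closure (connectedComponentIn K z) ⊆ connectedComponentIn K z :=
        hpc.closure.subset_connectedComponentIn
          (subset_closure (mem_connectedComponentIn hz)) h1
      exact isClosed_of_closure_subset h2
    exact ⟨hclosed, hpc, hsub, ⟨z, mem_connectedComponentIn hz⟩⟩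
  have hdisj : ∀ C ∈ comps, ∀ D ∈ comps, C ≠ D → C ∩ D = ∅ := by
    intro C hC D hD hCD
    obtain ⟨z, hz, rfl⟩ := hrep C hC
    obtain ⟨w, hw, rfl⟩ := hrep D hD
    rcases (connectedComponentIn K z ∩ connectedComponentIn K w).eq_empty_or_nonempty
      with h | ⟨y, hy1, hy2⟩
    · exact h
    · exact absurd ((connectedComponentIn_eq hy1).trans (connectedComponentIn_eq hy2).symm) hCD
  -- each component is a nondegenerate interval
  have hIcc : ∀ C ∈ comps, ∃ u v : unitInterval, u < v ∧ C = Icc u v := by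
    intro C hC
    obtain ⟨hclosed, hpc, hsub, hne⟩ := hprops C hC
    have hcomp : IsCompact C := hclosed.isCompact
    have hICC : C = Icc (sInf C) (sSup C) := by
      rw [(isLUB_sSup C).unique (isLUB_csSup hne (OrderTop.bddAbove C))]
      exact eq_Icc_of_connected_compact ⟨hne, hpc⟩ hcomp
    -- C meets O
    have hCO : (C ∩ O).Nonempty := by
      by_contra hco
      rw [not_nonempty_iff_eq_empty] at hco
      obtain ⟨z, hz⟩ := hne
      set rest := ⋃ D ∈ comps.erase C, D with hrest
      have hrestcl : IsClosed rest := by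
        rw [hrest]
        exact (comps.erase C).finite_toSet.isClosed_biUnion (fun D hD =>
          (hprops D (Finset.mem_of_mem_erase hD)).1)
      have hzrest : z ∉ rest := by
        rw [hrest]
        intro hzr
        obtain ⟨D, hD, hzD⟩ := by simpa using hzr
        have hDC : D ≠ C := hD.1
        have := hdisj D hD.2 C hC hDC
        exact (eq_empty_iff_forall_notMem.mp this z) ⟨hzD, hz⟩
      have hzK : z ∈ K := hsub hz
      have hzcl : z ∈ closure O := hKO ▸ hzK
      obtain ⟨w, hwrest, hwO⟩ := mem_closure_iff_nhds.mp hzcl _ (hrestcl.isOpen_compl.mem_nhds hzrest)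
      have hwK : w ∈ K := hOK hwO
      have hwcomp := hmem w hwK
      have hwC : connectedComponentIn K w = C := by
        by_contra hne'
        apply hwrest
        rw [hrest]
        simp only [mem_iUnion]
        exact ⟨connectedComponentIn K w, Finset.mem_erase.mpr ⟨hne', hwcomp⟩,
          mem_connectedComponentIn hwK⟩
      exact (eq_empty_iff_forall_notMem.mp hco w)
        ⟨hwC ▸ mem_connectedComponentIn hwK, hwO⟩
    obtain ⟨w, hwC, hwO⟩ := hCO
    obtain ⟨y, hyw, hseg⟩ := nbhd_seg (hO.mem_nhds hwO)
    have hwK : w ∈ K := hsub hwC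
    have hsegC : Icc (min w y) (max w y) ⊆ C := by
      obtain ⟨z', hz', hCz⟩ := hrep C hC
      have hcompw : connectedComponentIn K w = C := by
        rw [hCz]
        exact (connectedComponentIn_eq (show w ∈ connectedComponentIn K z' from hCz ▸ hwC)).symm
      rw [← hcompw]
      exact (ordConnected_Icc).isPreconnected.subset_connectedComponentIn
        (mem_Icc.mpr ⟨min_le_left w y, le_max_left w y⟩) (hseg.trans hOK)
    have hyC : y ∈ C := hsegC (mem_Icc.mpr ⟨min_le_right w y, le_max_right w y⟩)
    refine ⟨sInf C, sSup C, ?_, hICC⟩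
    have h1 : w ∈ Icc (sInf C) (sSup C) := hICC ▸ hwC
    have h2 : y ∈ Icc (sInf C) (sSup C) := hICC ▸ hyC
    rcases lt_or_ge (sInf C) (sSup C) with h | h
    · exact h
    · exfalso
      apply hyw
      exact le_antisymm (le_trans h2.2 (le_trans h h1.1)) (le_trans h1.2 (le_trans h h2.1))
  -- assemble
  set c := comps.card with hc
  set e := comps.equivFin with he
  choose u v huv hCuv using fun (C : comps) => hIcc C.1 C.2
  refine ⟨⟨c, fun i => u (e.symm i), fun i => v (e.symm i), fun i => huv _, ?_, ?_⟩⟩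
  · intro i j hij
    have hne : (e.symm i).1 ≠ (e.symm j).1 := by
      intro h
      exact hij (by
        have : e.symm i = e.symm j := Subtype.ext h
        simpa using congrArg e this)
    have := hdisj _ (e.symm i).2 _ (e.symm j).2 hne
    rw [hCuv (e.symm i), hCuv (e.symm j)] at this
    exact this
  · ext x
    simp only [mem_iUnion]
    constructor
    · intro hx
      have hcm := hmem x hx
      refine ⟨e ⟨_, hcm⟩, ?_⟩
      have : connectedComponentIn K x = Icc (u ⟨_, hcm⟩) (v ⟨_, hcm⟩) := hCuv ⟨_, hcm⟩
      rw [show e.symm (e ⟨_, hcm⟩) = ⟨_, hcm⟩ from Equiv.symm_apply_apply _ _]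
      exact this ▸ mem_connectedComponentIn hx
    · rintro ⟨i, hxi⟩
      have := hCuv (e.symm i)
      have hsub : Icc (u (e.symm i)) (v (e.symm i)) ⊆ K := by
        rw [← this]
        exact (hprops _ (e.symm i).2).2.2.1
      exact hsub hxi


section TwoFam

open NFData

variable {E F : Set unitInterval} (dE : NFData E) (dF : NFData F)

theorem cross_sub (hthin : interior (E ∩ F) = ∅) {i : Fin dE.c} {j : Fin dF.c} :
    ∀ x ∈ dE.piece i ∩ dF.piece j, ∀ y ∈ dE.piece i ∩ dF.piece j, x = y := by
  have key : ∀ x ∈ dE.piece i ∩ dF.piece j, ∀ y ∈ dE.piece i ∩ dF.piece j,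
      ¬ (x < y) := by
    intro x hx y hy hxy
    obtain ⟨z, hz1, hz2⟩ := exists_between hxy
    have hzE : z ∈ dE.piece i := ⟨le_trans hx.1.1 (le_of_lt hz1), le_trans (le_of_lt hz2) hy.1.2⟩
    have hzF : z ∈ dF.piece j := ⟨le_trans hx.2.1 (le_of_lt hz1), le_trans (le_of_lt hz2) hy.2.2⟩
    have hIoo : Ioo x y ⊆ E ∩ F := fun w hw =>
      ⟨dE.piece_subset i ⟨le_trans hx.1.1 (le_of_lt hw.1), le_trans (le_of_lt hw.2) hy.1.2⟩,
       dF.piece_subset j ⟨le_trans hx.2.1 (le_of_lt hw.1), le_trans (le_of_lt hw.2) hy.2.2⟩⟩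
    have hzint : z ∈ interior (E ∩ F) :=
      mem_interior.mpr ⟨Ioo x y, hIoo, isOpen_Ioo, ⟨hz1, hz2⟩⟩
    rw [hthin] at hzint
    exact hzint
  intro x hx y hy
  rcases lt_trichotomy x y with h | h | h
  · exact absurd h (key x hx y hy)
  · exact h
  · exact absurd h (key y hy x hx)

theorem flank (hthin : interior (E ∩ F) = ∅) {s : unitInterval} {i : Fin dE.c} {j : Fin dF.c}
    (hi : s ∈ dE.piece i) (hj : s ∈ dF.piece j) :
    (s = dE.a i ∧ s = dF.b j) ∨ (s = dE.b i ∧ s = dF.a j) := by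
  have hA : s = dE.a i ∨ s = dF.a j := by
    by_contra h
    push_neg at h
    have h1 : dE.a i < s := lt_of_le_of_ne hi.1 (Ne.symm h.1)
    have h2 : dF.a j < s := lt_of_le_of_ne hj.1 (Ne.symm h.2)
    obtain ⟨z, hz1, hz2⟩ := exists_between (max_lt h1 h2)
    have hzE : z ∈ dE.piece i :=
      ⟨le_trans (le_max_left _ _) (le_of_lt hz1), le_trans (le_of_lt hz2) hi.2⟩
    have hzF : z ∈ dF.piece j :=
      ⟨le_trans (le_max_right _ _) (le_of_lt hz1), le_trans (le_of_lt hz2) hj.2⟩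
    have := cross_sub dE dF hthin z ⟨hzE, hzF⟩ s ⟨hi, hj⟩
    exact absurd this (ne_of_lt hz2)
  have hB : s = dE.b i ∨ s = dF.b j := by
    by_contra h
    push_neg at h
    have h1 : s < dE.b i := lt_of_le_of_ne hi.2 h.1
    have h2 : s < dF.b j := lt_of_le_of_ne hj.2 h.2
    obtain ⟨z, hz1, hz2⟩ := exists_between (lt_min h1 h2)
    have hzE : z ∈ dE.piece i :=
      ⟨le_trans hi.1 (le_of_lt hz1), le_trans (le_of_lt hz2) (min_le_left _ _)⟩
    have hzF : z ∈ dF.piece j :=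
      ⟨le_trans hj.1 (le_of_lt hz1), le_trans (le_of_lt hz2) (min_le_right _ _)⟩
    have := cross_sub dE dF hthin z ⟨hzE, hzF⟩ s ⟨hi, hj⟩
    exact absurd this (ne_of_gt hz1)
  rcases hA with h | h <;> rcases hB with h' | h'
  · exfalso
    have : dE.a i = dE.b i := h.symm.trans h'
    exact absurd this (ne_of_lt (dE.lt i))
  · exact Or.inl ⟨h, h'⟩
  · exact Or.inr ⟨h', h⟩
  · exfalso
    have : dF.a j = dF.b j := h.symm.trans h'
    exact absurd this (ne_of_lt (dF.lt j))

theorem exists_gt_nbhd {m : unitInterval} (hm : m < 1) {O : Set unitInterval} (hO : O ∈ 𝓝 m) :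
    ∃ y ∈ O, m < y := by
  obtain ⟨u, hu, hsub⟩ := exists_Ico_subset_of_mem_nhds hO ⟨1, hm⟩
  obtain ⟨y, hy1, hy2⟩ := exists_between hu
  exact ⟨y, hsub ⟨le_of_lt hy1, hy2⟩, hy1⟩

include dF in
theorem b_mem_other (hcover : E ∪ F = univ) {i : Fin dE.c} (hb : dE.b i < 1) :
    dE.b i ∈ F := by
  classical
  by_contra hmF
  set W : Set unitInterval := Fᶜ ∩ ⋂ k ∈ {k : Fin dE.c | k ≠ i}, (dE.piece k)ᶜ with hW
  have hWopen : IsOpen W := by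
    apply IsOpen.inter ((NFData.closed dF).isOpen_compl)
    exact (Set.toFinite _).isOpen_biInter (fun k _ => isClosed_Icc.isOpen_compl)
  have hmW : dE.b i ∈ W := by
    refine ⟨hmF, ?_⟩
    rw [mem_iInter₂]
    intro k hk hmk
    exact hk (dE.index_unique hmk (dE.b_mem i))
  obtain ⟨y, hyW, hmy⟩ := exists_gt_nbhd hb (hWopen.mem_nhds hmW)
  have hyEF : y ∈ E ∪ F := hcover ▸ mem_univ y
  rcases hyEF with hyE | hyF
  · obtain ⟨k, hk⟩ := dE.mem_piece hyE
    by_cases hki : k = i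
    · subst hki
      exact absurd hk.2 (not_le_of_gt hmy)
    · exact (mem_iInter₂.mp hyW.2 k hki) hk
  · exact hyW.1 hyF

theorem exists_right_pair (hcover : E ∪ F = univ) (hthin : interior (E ∩ F) = ∅)
    {i : Fin dE.c} (hb : dE.b i < 1) : ∃ j, dF.a j = dE.b i := by
  obtain ⟨j, hj⟩ := dF.mem_piece (b_mem_other dE dF hcover hb)
  rcases flank dE dF hthin (dE.b_mem i) hj with ⟨h1, h2⟩ | ⟨h1, h2⟩
  · exact absurd h1.symm (ne_of_lt (dE.lt i))
  · exact ⟨j, h2.symm⟩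

theorem right_pair_lt {i : Fin dE.c} {j : Fin dF.c} (h : dF.a j = dE.b i) : dE.b i < 1 := by
  rcases lt_or_eq_of_le (le_one'' (dE.b i)) with h' | h'
  · exact h'
  · exfalso
    have h2 : dF.a j = 1 := h.trans h'
    have h3 := dF.lt j
    rw [h2] at h3
    exact absurd (lt_of_lt_of_le h3 (le_one'' _)) (lt_irrefl 1)

theorem top_or (hcover : E ∪ F = univ) :
    (∃ i, dE.b i = 1) ∨ (∃ j, dF.b j = 1) := by
  have h1 : (1:unitInterval) ∈ E ∪ F := hcover ▸ mem_univ 1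
  rcases h1 with h | h
  · obtain ⟨i, hi⟩ := dE.mem_piece h
    exact Or.inl ⟨i, le_antisymm (le_one'' _) hi.2⟩
  · obtain ⟨j, hj⟩ := dF.mem_piece h
    exact Or.inr ⟨j, le_antisymm (le_one'' _) hj.2⟩

theorem top_not_both (hthin : interior (E ∩ F) = ∅) :
    ¬((∃ i, dE.b i = 1) ∧ (∃ j, dF.b j = 1)) := by
  rintro ⟨⟨i, hi⟩, ⟨j, hj⟩⟩
  have h1i : (1:unitInterval) ∈ dE.piece i := ⟨le_one'' _, hi.symm.le⟩
  have h1j : (1:unitInterval) ∈ dF.piece j := ⟨le_one'' _, hj.symm.le⟩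
  rcases flank dE dF hthin h1i h1j with ⟨h1, h2⟩ | ⟨h1, h2⟩
  · exact absurd (h1.symm.trans hi.symm) (ne_of_lt (dE.lt i))
  · exact absurd (h2.symm.trans hj.symm) (ne_of_lt (dF.lt j))

open scoped Classical in
theorem cardR (hcover : E ∪ F = univ) (hthin : interior (E ∩ F) = ∅) :
    (Finset.univ.filter (fun p : Fin dE.c × Fin dF.c => dF.a p.2 = dE.b p.1)).card
      = (Finset.univ.filter (fun i : Fin dE.c => dE.b i < 1)).card := by
  apply Finset.card_bij (fun p _ => p.1)
  · intro p hp
    rw [Finset.mem_filter] at hp ⊢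
    exact ⟨Finset.mem_univ _, right_pair_lt dE dF hp.2⟩
  · intro p hp q hq hpq
    rw [Finset.mem_filter] at hp hq
    have hval : dF.a p.2 = dF.a q.2 := by rw [hp.2, hq.2, hpq]
    have h2 : p.2 = q.2 := dF.index_unique (dF.a_mem p.2)
      (by rw [hval]; exact dF.a_mem q.2)
    exact Prod.ext hpq h2
  · intro i hi
    rw [Finset.mem_filter] at hi
    obtain ⟨j, hj⟩ := exists_right_pair dE dF hcover hthin hi.2
    exact ⟨(i, j), Finset.mem_filter.mpr ⟨Finset.mem_univ _, hj⟩, rfl⟩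

open scoped Classical in
theorem card_lt_add_top (dE : NFData E) :
    (Finset.univ.filter (fun i : Fin dE.c => dE.b i < 1)).card
      + (Finset.univ.filter (fun i : Fin dE.c => dE.b i = 1)).card = dE.c := by
  have h := Finset.card_filter_add_card_filter_not
    (s := (Finset.univ : Finset (Fin dE.c))) (p := fun i => dE.b i = 1)
  rw [Finset.card_univ, Fintype.card_fin] at h
  have heq : Finset.univ.filter (fun i : Fin dE.c => ¬ dE.b i = 1)
      = Finset.univ.filter (fun i : Fin dE.c => dE.b i < 1) := by
    apply Finset.filter_congr
    intro i _
    constructor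
    · intro hne
      exact lt_of_le_of_ne (le_one'' _) hne
    · intro hlt
      exact ne_of_lt hlt
  rw [heq] at h
  omega

open scoped Classical in
theorem card_top_le_one (dE : NFData E) :
    (Finset.univ.filter (fun i : Fin dE.c => dE.b i = 1)).card ≤ 1 := by
  rw [Finset.card_le_one]
  intro i hi j hj
  rw [Finset.mem_filter] at hi hj
  exact dE.index_unique (x := 1) ⟨le_one'' _, hi.2.symm.le⟩ ⟨le_one'' _, hj.2.symm.le⟩

open scoped Classical in
theorem TP_card (hcover : E ∪ F = univ) (hthin : interior (E ∩ F) = ∅) :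
    (Finset.univ.filter
        (fun p : Fin dE.c × Fin dF.c => (dE.piece p.1 ∩ dF.piece p.2).Nonempty)).card + 1
      = dE.c + dF.c := by
  set R := Finset.univ.filter (fun p : Fin dE.c × Fin dF.c => dF.a p.2 = dE.b p.1) with hR
  set L := Finset.univ.filter (fun p : Fin dE.c × Fin dF.c => dE.a p.1 = dF.b p.2) with hL
  have hTP : Finset.univ.filter
      (fun p : Fin dE.c × Fin dF.c => (dE.piece p.1 ∩ dF.piece p.2).Nonempty) = R ∪ L := by
    ext p
    simp only [hR, hL, Finset.mem_filter, Finset.mem_union, Finset.mem_univ, true_and]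
    constructor
    · rintro ⟨s, hs1, hs2⟩
      rcases flank dE dF hthin hs1 hs2 with ⟨h1, h2⟩ | ⟨h1, h2⟩
      · exact Or.inr (h1.symm.trans h2)
      · exact Or.inl (h2.symm.trans h1)
    · rintro (h | h)
      · exact ⟨dE.b p.1, dE.b_mem p.1, h ▸ dF.a_mem p.2⟩
      · exact ⟨dE.a p.1, dE.a_mem p.1, h.symm ▸ dF.b_mem p.2⟩
  have hdisjRL : Disjoint R L := by
    rw [Finset.disjoint_left]
    intro p hp hq
    rw [hR, Finset.mem_filter] at hp
    rw [hL, Finset.mem_filter] at hq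
    have h1 : dE.b p.1 ≤ dE.a p.1 := by
      calc dE.b p.1 = dF.a p.2 := hp.2.symm
      _ ≤ dF.b p.2 := le_of_lt (dF.lt p.2)
      _ = dE.a p.1 := hq.2.symm
    exact absurd h1 (not_le_of_gt (dE.lt p.1))
  rw [hTP, Finset.card_union_of_disjoint hdisjRL]
  have hswap : L.card = (Finset.univ.filter
      (fun p : Fin dF.c × Fin dE.c => dE.a p.2 = dF.b p.1)).card := by
    apply Finset.card_bij (fun p _ => (p.2, p.1))
    · intro p hp
      rw [hL, Finset.mem_filter] at hp
      rw [Finset.mem_filter]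
      exact ⟨Finset.mem_univ _, hp.2⟩
    · intro p hp q hq h
      exact Prod.ext (congrArg Prod.snd h) (congrArg Prod.fst h)
    · intro q hq
      rw [Finset.mem_filter] at hq
      exact ⟨(q.2, q.1), by rw [hL, Finset.mem_filter]; exact ⟨Finset.mem_univ _, hq.2⟩, rfl⟩
  have hcover' : F ∪ E = univ := by rw [union_comm]; exact hcover
  have hthin' : interior (F ∩ E) = ∅ := by rw [inter_comm]; exact hthin
  have h1 := cardR dE dF hcover hthin
  have h2 := cardR dF dE hcover' hthin'
  have h3 := card_lt_add_top dE
  have h4 := card_lt_add_top dF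
  have h5 := card_top_le_one dE
  have h6 := card_top_le_one dF
  have h7 : (Finset.univ.filter fun i : Fin dE.c => dE.b i = 1).card +
            (Finset.univ.filter fun j : Fin dF.c => dF.b j = 1).card = 1 := by
    have hnb := top_not_both dE dF hthin
    rcases top_or dE dF hcover with ⟨i, hi⟩ | ⟨j, hj⟩
    · have hpos : 0 < (Finset.univ.filter fun i : Fin dE.c => dE.b i = 1).card :=
        Finset.card_pos.mpr ⟨i, Finset.mem_filter.mpr ⟨Finset.mem_univ _, hi⟩⟩
      have hzero : (Finset.univ.filter fun j : Fin dF.c => dF.b j = 1).card = 0 := by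
        rw [Finset.card_eq_zero, Finset.filter_eq_empty_iff]
        intro j _ hj
        exact hnb ⟨⟨i, hi⟩, ⟨j, hj⟩⟩
      omega
    · have hpos : 0 < (Finset.univ.filter fun j : Fin dF.c => dF.b j = 1).card :=
        Finset.card_pos.mpr ⟨j, Finset.mem_filter.mpr ⟨Finset.mem_univ _, hj⟩⟩
      have hzero : (Finset.univ.filter fun i : Fin dE.c => dE.b i = 1).card = 0 := by
        rw [Finset.card_eq_zero, Finset.filter_eq_empty_iff]
        intro i _ hi
        exact hnb ⟨⟨i, hi⟩, ⟨j, hj⟩⟩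
      omega
  rw [← hR] at h1
  omega

open scoped Classical in
theorem c_bound (hcover : E ∪ F = univ) (hthin : interior (E ∩ F) = ∅)
    (hF : 0 < dF.c) : dE.c ≤ dF.c + 1 := by
  set f : Fin dE.c → Fin dF.c := fun i =>
    if h : dE.b i < 1 then (exists_right_pair dE dF hcover hthin h).choose else ⟨0, hF⟩
    with hf
  have hinjon : Set.InjOn f (Finset.univ.filter (fun i : Fin dE.c => dE.b i < 1)) := by
    intro i hi i' hi' hff
    have hbi : dE.b i < 1 := by simpa using hi
    have hbi' : dE.b i' < 1 := by simpa using hi'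
    have hsp : dF.a (f i) = dE.b i := by
      rw [hf]
      simp only [dif_pos hbi]
      exact (exists_right_pair dE dF hcover hthin hbi).choose_spec
    have hsp' : dF.a (f i') = dE.b i' := by
      rw [hf]
      simp only [dif_pos hbi']
      exact (exists_right_pair dE dF hcover hthin hbi').choose_spec
    have hbb : dE.b i = dE.b i' := by rw [← hsp, ← hsp', hff]
    exact dE.index_unique (dE.b_mem i) (by rw [hbb]; exact dE.b_mem i')
  have hcard := Finset.card_le_card_of_injOn f (fun i _ => Finset.mem_univ _) hinjon
  rw [Finset.card_univ, Fintype.card_fin] at hcard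
  have h3 := card_lt_add_top dE
  have h5 := card_top_le_one dE
  omega

end TwoFam

end Interval



theorem wform_of_pieces {ι : Type} [Fintype ι] (S : ι → Set unitInterval)
    (h : ∀ i, IsCompact (S i) ∧ IsPreconnected (S i) ∧ (S i).Nonempty) :
    Wform (⋃ i, S i) := by
  have hIcc : ∀ i, ∃ a b : unitInterval, S i = Icc a b := by
    intro i
    exact ⟨_, _, eq_Icc_of_connected_compact ⟨(h i).2.2, (h i).2.1⟩ (h i).1⟩
  choose a b hab using hIcc
  set e := Fintype.equivFin ι with he
  refine ⟨Fintype.card ι, fun k => a (e.symm k), fun k => b (e.symm k), ?_⟩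
  ext x
  simp only [mem_iUnion]
  constructor
  · rintro ⟨i, hi⟩
    refine ⟨e i, ?_⟩
    rw [Equiv.symm_apply_apply, ← hab i]
    exact hi
  · rintro ⟨k, hk⟩
    exact ⟨e.symm k, by rw [hab (e.symm k)]; exact hk⟩


section Dyn

theorem exists_pieceMap {f : unitInterval → unitInterval} (hf : Continuous f)
    {K : Set unitInterval} (hinv : MapsTo f K K) (d : NFData K) :
    ∃ π : Fin d.c → Fin d.c, ∀ i, f '' (d.piece i) ⊆ d.piece (π i) := by
  have h : ∀ i, ∃ j, f '' (d.piece i) ⊆ d.piece j := by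
    intro i
    have himg : IsPreconnected (f '' d.piece i) :=
      (ordConnected_Icc.isPreconnected).image f hf.continuousOn
    have hsub : f '' d.piece i ⊆ K := by
      rintro y ⟨x, hx, rfl⟩
      exact hinv (d.piece_subset i hx)
    obtain ⟨j, hj⟩ := d.mem_piece (hsub (mem_image_of_mem f (d.a_mem i)))
    exact ⟨j, d.absorb himg hsub ⟨f (d.a i), mem_image_of_mem f (d.a_mem i), hj⟩⟩
  exact ⟨fun i => (h i).choose, fun i => (h i).choose_spec⟩

theorem pieceMap_iterate {f : unitInterval → unitInterval} {K : Set unitInterval}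
    (d : NFData K) {π : Fin d.c → Fin d.c}
    (hπ : ∀ i, f '' (d.piece i) ⊆ d.piece (π i)) :
    ∀ (n : ℕ) (i : Fin d.c), f^[n] '' (d.piece i) ⊆ d.piece (π^[n] i) := by
  intro n
  induction n with
  | zero => simp
  | succ n ih =>
      intro i
      rw [Function.iterate_succ, Function.iterate_succ, image_comp]
      calc f^[n] '' (f '' d.piece i) ⊆ f^[n] '' (d.piece (π i)) := image_mono (hπ i)
        _ ⊆ d.piece (π^[n] (π i)) := ih (π i)

theorem prodMap_iterate {c₁ c₂ : ℕ} (π : Fin c₁ → Fin c₁) (ρ : Fin c₂ → Fin c₂) :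
    ∀ (n : ℕ) (pr : Fin c₁ × Fin c₂),
      (fun q : Fin c₁ × Fin c₂ => (π q.1, ρ q.2))^[n] pr = (π^[n] pr.1, ρ^[n] pr.2) := by
  intro n
  induction n with
  | zero => intro pr; simp
  | succ n ih =>
      intro pr
      rw [Function.iterate_succ_apply, ih, Function.iterate_succ_apply,
        Function.iterate_succ_apply]

/-- Construction of a proper invariant set in weak normal form around a full-sα point. -/
theorem construct_K0 {f : unitInterval → unitInterval} (hf : Continuous f)
    {x₂ : unitInterval} (hs2 : sAlpha f x₂ = univ)
    {U : Set unitInterval} (hU : IsOpen U) (hUne : U.Nonempty) :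
    ∃ K₀ : Set unitInterval, Wform K₀ ∧ MapsTo f K₀ K₀ ∧ K₀ ⊆ closure (orb f U) ∧
      (interior K₀).Nonempty := by
  classical
  obtain ⟨z, hz⟩ := hUne
  obtain ⟨y, hyz, hseg⟩ := nbhd_seg (hU.mem_nhds hz)
  set m := min z y with hm
  set M := max z y with hM
  have hmM : m < M := min_lt_max.mpr (fun h => hyz h.symm)
  set C : Set unitInterval := Icc m M with hC
  have hCU : C ⊆ U := hseg
  have hCcomp : IsCompact C := isClosed_Icc.isCompact
  have hCpc : IsPreconnected C := ordConnected_Icc.isPreconnected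
  have hCne : C.Nonempty := ⟨m, le_refl _, le_of_lt hmM⟩
  set W : Set unitInterval := Ioo m M with hW
  have hWopen : IsOpen W := isOpen_Ioo
  have hWne : W.Nonempty := nonempty_Ioo.mpr hmM
  have hWU : W ⊆ U := fun w hw => hCU (Ioo_subset_Icc_self hw)
  have hWC : W ⊆ C := Ioo_subset_Icc_self
  obtain ⟨s, hs1, hsx⟩ := lam hs2 hWopen hWne 1
  obtain ⟨t, hts, htx⟩ := lam hs2 hWopen hWne (s+1)
  set p := t - s with hp
  have hppos : 0 < p := by omega
  have htsp : t = s + p := by omega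
  set J : ℕ → Set unitInterval := fun q => f^[s + q*p] '' C with hJ
  have hJchain : ∀ q, f^[p] '' (J q) = J (q+1) := by
    intro q
    show f^[p] '' (f^[s + q*p] '' C) = f^[s + (q+1)*p] '' C
    rw [← image_comp, ← Function.iterate_add]
    have hidx : p + (s + q*p) = s + (q+1)*p := by ring
    rw [hidx]
  have hJx : ∀ q, f^[q*p] x₂ ∈ J q ∩ J (q+1) := by
    intro q
    induction q with
    | zero =>
        have h0 : f^[0*p] x₂ = x₂ := by rw [show 0*p = 0 from by ring]; rfl
        have hJ0 : J 0 = f^[s] '' C := by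
          show f^[s+0*p] '' C = _
          rw [show s+0*p = s from by ring]
        have hJ1 : J 1 = f^[t] '' C := by
          show f^[s+1*p] '' C = _
          rw [show s+1*p = t from by omega]
        rw [h0]
        constructor
        · rw [hJ0]; exact image_mono hWC hsx
        · rw [hJ1]; exact image_mono hWC htx
    | succ q ih =>
        have hstep : f^[(q+1)*p] x₂ = f^[p] (f^[q*p] x₂) := by
          rw [show (q+1)*p = p + q*p from by ring, Function.iterate_add_apply]
        constructor
        · rw [hstep, ← hJchain q]
          exact mem_image_of_mem _ ih.1
        · rw [hstep, ← hJchain (q+1)]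
          exact mem_image_of_mem _ ih.2
  set JJ : Set unitInterval := ⋃ q, J q with hJJ
  have hJJpc : IsPreconnected JJ := by
    apply IsPreconnected.iUnion_of_chain
    · intro q
      exact (hCpc.image _ (hf.iterate _).continuousOn)
    · intro q
      exact ⟨f^[q*p] x₂, hJx q⟩
  set G : Set unitInterval := closure JJ with hG
  have hGpc : IsPreconnected G := hJJpc.closure
  have hGcomp : IsCompact G := isClosed_closure.isCompact
  have hGne : G.Nonempty := by
    refine ⟨x₂, subset_closure ?_⟩
    exact mem_iUnion.mpr ⟨0, by simpa using (hJx 0).1⟩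
  have hGp : f^[p] '' G ⊆ G := by
    have h1 : f^[p] '' closure JJ ⊆ closure (f^[p] '' JJ) :=
      image_closure_subset_closure_image (hf.iterate p)
    have h2 : f^[p] '' JJ ⊆ JJ := by
      rw [hJJ, image_iUnion]
      intro x hx
      obtain ⟨q, hq⟩ := mem_iUnion.mp hx
      rw [hJchain q] at hq
      exact mem_iUnion.mpr ⟨q+1, hq⟩
    have h3 : closure (f^[p] '' JJ) ⊆ closure JJ := closure_mono h2
    exact fun x hx => h3 (h1 hx)
  set S : Fin (s+p) ⊕ Fin p → Set unitInterval :=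
    Sum.elim (fun r => f^[(r:ℕ)] '' C) (fun r => f^[(r:ℕ)] '' G) with hS
  refine ⟨⋃ i, S i, ?_, ?_, ?_, ?_⟩
  · apply wform_of_pieces
    rintro (r | r)
    · exact ⟨(hCcomp.image (hf.iterate _)), hCpc.image _ (hf.iterate _).continuousOn,
        hCne.image _⟩
    · exact ⟨(hGcomp.image (hf.iterate _)), hGpc.image _ (hf.iterate _).continuousOn,
        hGne.image _⟩
  · rintro x hx
    obtain ⟨i, hi⟩ := mem_iUnion.mp hx
    rcases i with r | r
    · simp only [hS, Sum.elim_inl] at hi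
      obtain ⟨c, hc, rfl⟩ := hi
      by_cases hr : (r:ℕ) + 1 < s + p
      · apply mem_iUnion.mpr ⟨Sum.inl ⟨(r:ℕ)+1, hr⟩, ?_⟩
        simp only [hS, Sum.elim_inl]
        exact ⟨c, hc, Function.iterate_succ_apply' f _ c⟩
      · have hreq : (r:ℕ) = s + p - 1 := by have := r.2; omega
        apply mem_iUnion.mpr ⟨Sum.inr ⟨0, hppos⟩, ?_⟩
        simp only [hS, Sum.elim_inr]
        simp only [Function.iterate_zero, image_id]
        apply subset_closure
        apply mem_iUnion.mpr ⟨1, ?_⟩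
        rw [hJ]
        simp only [Nat.one_mul]
        refine ⟨c, hc, ?_⟩
        exact (congrFun (congrArg (fun k => f^[k]) (show s+p = (r:ℕ)+1 from by omega)) c).trans
          (Function.iterate_succ_apply' f _ c)
    · simp only [hS, Sum.elim_inr] at hi
      obtain ⟨g, hg, rfl⟩ := hi
      by_cases hr : (r:ℕ) + 1 < p
      · apply mem_iUnion.mpr ⟨Sum.inr ⟨(r:ℕ)+1, hr⟩, ?_⟩
        simp only [hS, Sum.elim_inr]
        exact ⟨g, hg, Function.iterate_succ_apply' f _ g⟩
      · have hreq : (r:ℕ) = p - 1 := by have := r.2; omega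
        apply mem_iUnion.mpr ⟨Sum.inr ⟨0, hppos⟩, ?_⟩
        simp only [hS, Sum.elim_inr]
        simp only [Function.iterate_zero, image_id]
        apply hGp
        refine ⟨g, hg, ?_⟩
        exact (congrFun (congrArg (fun k => f^[k]) (show p = (r:ℕ)+1 from by omega)) g).trans
          (Function.iterate_succ_apply' f _ g)
  · intro x hx
    obtain ⟨i, hi⟩ := mem_iUnion.mp hx
    rcases i with r | r
    · simp only [hS, Sum.elim_inl] at hi
      obtain ⟨c, hc, rfl⟩ := hi
      exact subset_closure (mem_orb (hCU hc))
    · simp only [hS, Sum.elim_inr] at hi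
      obtain ⟨g, hg, rfl⟩ := hi
      have hGA : G ⊆ closure (orb f U) := by
        rw [hG]
        apply closure_minimal _ isClosed_closure
        rw [hJJ]
        intro w hw
        obtain ⟨q, hq⟩ := mem_iUnion.mp hw
        rw [hJ] at hq
        obtain ⟨c, hc, rfl⟩ := hq
        exact subset_closure (mem_orb (hCU hc))
      exact (mapsTo_acl hf U).iterate (r:ℕ) (hGA hg)
  · obtain ⟨w, hw⟩ := hWne
    refine ⟨w, mem_interior.mpr ⟨W, ?_, hWopen, hw⟩⟩
    intro v hv
    apply mem_iUnion.mpr ⟨Sum.inl ⟨0, by omega⟩, ?_⟩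
    simp only [hS, Sum.elim_inl]
    simp only [Function.iterate_zero, image_id]
    exact hWC hv

end Dyn

end SA3

open SA3 in
theorem stmt3 (f : unitInterval → unitInterval) (hf : Continuous f)
    (x₁ x₂ x₃ : unitInterval) (h12 : x₁ ≠ x₂) (h13 : x₁ ≠ x₃) (h23 : x₂ ≠ x₃)
    (hs1 : sAlpha f x₁ = Set.univ) (hs2 : sAlpha f x₂ = Set.univ)
    (hs3 : sAlpha f x₃ = Set.univ) :
    ∀ U V : Set unitInterval, IsOpen U → IsOpen V → U.Nonempty → V.Nonempty →
      ∃ n : ℕ, (f^[n] '' U ∩ V).Nonempty := by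
  intro U V hU hV hUne hVne
  by_contra hcon
  push_neg at hcon
  classical
  have hAV : ∀ v ∈ V, v ∉ closure (orb f U) := by
    intro v hv hvA
    obtain ⟨w, hwV, hworb⟩ := mem_closure_iff_nhds.mp hvA V (hV.mem_nhds hv)
    obtain ⟨n, hn⟩ := mem_iUnion.mp hworb
    have hempty := hcon n
    rw [eq_empty_iff_forall_notMem] at hempty
    exact hempty w ⟨hn, hwV⟩
  obtain ⟨K₀, hK₀w, hK₀inv, hK₀A, hK₀int⟩ := construct_K0 hf hs2 hU hUne
  have hK₀closed : IsClosed K₀ := wform_isClosed hK₀w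
  have hF'inv : MapsTo f (closure K₀ᶜ) (closure K₀ᶜ) := lemmaM hf hs1 hK₀closed hK₀inv
  have hF'w : Wform (closure K₀ᶜ) := wform_closure_compl hK₀w
  set O₁ : Set unitInterval := (closure K₀ᶜ)ᶜ with hO₁
  have hO₁open : IsOpen O₁ := isClosed_closure.isOpen_compl
  set E : Set unitInterval := closure O₁ with hE
  have hEclosed : IsClosed E := isClosed_closure
  have hEinv : MapsTo f E E := lemmaM hf hs1 isClosed_closure hF'inv
  have hEw : Wform E := wform_closure_compl hF'w
  have hO₁K₀ : O₁ ⊆ K₀ := by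
    intro x hx
    by_contra hxK
    exact hx (subset_closure hxK)
  have hEK₀ : E ⊆ K₀ := closure_minimal hO₁K₀ hK₀closed
  have hO₁ne : O₁.Nonempty := by
    obtain ⟨w, hw⟩ := hK₀int
    refine ⟨w, fun hwF' => ?_⟩
    obtain ⟨v, hv1, hv2⟩ := mem_closure_iff_nhds.mp hwF' _ (isOpen_interior.mem_nhds hw)
    exact hv2 (interior_subset hv1)
  have hEproper : E ≠ univ := by
    intro h
    obtain ⟨v, hv⟩ := hVne
    exact hAV v hv (hK₀A (hEK₀ (h ▸ mem_univ v)))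
  have hEcne : Eᶜ.Nonempty := nonempty_compl.mpr hEproper
  set F : Set unitInterval := closure Eᶜ with hF
  have hFinv : MapsTo f F F := lemmaM hf hs1 hEclosed hEinv
  have hFw : Wform F := wform_closure_compl hEw
  have hFclosed : IsClosed F := isClosed_closure
  obtain ⟨dE⟩ := nfdata_of hEclosed hO₁open hE hEw
  obtain ⟨dF⟩ := nfdata_of hFclosed hEclosed.isOpen_compl hF hFw
  have hcover : E ∪ F = univ := by
    ext x
    simp only [mem_union, mem_univ, iff_true]
    by_cases hx : x ∈ E
    · exact Or.inl hx
    · exact Or.inr (subset_closure hx)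
  have hthin : interior (E ∩ F) = ∅ := by
    rw [eq_empty_iff_forall_notMem]
    intro x hx
    have h1 : x ∈ interior E := interior_mono inter_subset_left hx
    have h2 : x ∈ closure Eᶜ := (interior_subset hx).2
    have h3 : x ∈ interior E ∩ closure Eᶜ := ⟨h1, h2⟩
    rw [interior_inter_closure_compl] at h3
    exact h3
  have hmemS : ∀ x : unitInterval, sAlpha f x = Set.univ → x ∈ E ∧ x ∈ F := by
    intro x hsx
    refine ⟨mem_of_inv hsx hEinv ?_, mem_closure_compl hf hsx hEclosed hEinv hEcne⟩
    obtain ⟨w, hw⟩ := hO₁ne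
    exact ⟨w, mem_interior.mpr ⟨O₁, subset_closure, hO₁open, hw⟩⟩
  obtain ⟨hx1E, hx1F⟩ := hmemS x₁ hs1
  obtain ⟨hx2E, hx2F⟩ := hmemS x₂ hs2
  obtain ⟨hx3E, hx3F⟩ := hmemS x₃ hs3
  obtain ⟨i₁, hi₁⟩ := dE.mem_piece hx1E
  obtain ⟨i₂, hi₂⟩ := dE.mem_piece hx2E
  obtain ⟨i₃, hi₃⟩ := dE.mem_piece hx3E
  obtain ⟨j₁, hj₁⟩ := dF.mem_piece hx1F
  obtain ⟨j₂, hj₂⟩ := dF.mem_piece hx2F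
  obtain ⟨j₃, hj₃⟩ := dF.mem_piece hx3F
  obtain ⟨π, hπ⟩ := exists_pieceMap hf hEinv dE
  obtain ⟨ρ, hρ⟩ := exists_pieceMap hf hFinv dF
  have hreachE : ∀ (x : unitInterval), sAlpha f x = Set.univ →
      ∀ (i : Fin dE.c), x ∈ dE.piece i → ∀ m : Fin dE.c, ∃ n, π^[n] i = m := by
    intro x hsx i hxi m
    set B : Set unitInterval := (⋃ k ∈ {k : Fin dE.c | k ≠ i}, dE.piece k)ᶜ with hB
    have hBopen : IsOpen B :=
      ((Set.toFinite _).isClosed_biUnion (fun k _ => isClosed_Icc)).isOpen_compl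
    have hxB : x ∈ B := by
      rw [hB]
      intro hxmem
      obtain ⟨k, hk, hxk⟩ := mem_iUnion₂.mp hxmem
      exact hk (dE.index_unique hxk hxi)
    have hdens := (density hf hsx hEclosed hEinv hBopen hxB).1
    obtain ⟨z, hz1, hz2⟩ := exists_between (dE.lt m)
    have hzE : z ∈ interior E :=
      mem_interior.mpr ⟨Ioo (dE.a m) (dE.b m),
        fun w hw => dE.piece_subset m (Ioo_subset_Icc_self hw), isOpen_Ioo, hz1, hz2⟩
    obtain ⟨w, hw1, hw2⟩ := mem_closure_iff_nhds.mp (hdens hzE) _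
      (isOpen_Ioo.mem_nhds (⟨hz1, hz2⟩ : z ∈ Ioo (dE.a m) (dE.b m)))
    obtain ⟨n, hn⟩ := mem_iUnion.mp hw2
    obtain ⟨y', hy', rfl⟩ := hn
    have hy'piece : y' ∈ dE.piece i := by
      obtain ⟨k, hk⟩ := dE.mem_piece (interior_subset hy'.2)
      have hki : k = i := by
        by_contra hki
        exact hy'.1 (mem_iUnion₂.mpr ⟨k, hki, hk⟩)
      exact hki ▸ hk
    have hwin : f^[n] y' ∈ dE.piece (π^[n] i) :=
      pieceMap_iterate dE hπ n i (mem_image_of_mem _ hy'piece)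
    exact ⟨n, dE.index_unique hwin (Ioo_subset_Icc_self hw1)⟩
  have hreachF : ∀ (x : unitInterval), sAlpha f x = Set.univ →
      ∀ (j : Fin dF.c), x ∈ dF.piece j → ∀ m : Fin dF.c, ∃ n, ρ^[n] j = m := by
    intro x hsx j hxj m
    set B : Set unitInterval := (⋃ k ∈ {k : Fin dF.c | k ≠ j}, dF.piece k)ᶜ with hB
    have hBopen : IsOpen B :=
      ((Set.toFinite _).isClosed_biUnion (fun k _ => isClosed_Icc)).isOpen_compl
    have hxB : x ∈ B := by
      rw [hB]
      intro hxmem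
      obtain ⟨k, hk, hxk⟩ := mem_iUnion₂.mp hxmem
      exact hk (dF.index_unique hxk hxj)
    have hdens := (density hf hsx hEclosed hEinv hBopen hxB).2
    have hIooF : Ioo (dF.a m) (dF.b m) ⊆ F := fun w hw =>
      dF.piece_subset m (Ioo_subset_Icc_self hw)
    have hIoone : (Ioo (dF.a m) (dF.b m) ∩ Eᶜ).Nonempty := by
      obtain ⟨z0, hz01, hz02⟩ := exists_between (dF.lt m)
      have hz0F : z0 ∈ closure Eᶜ := hIooF ⟨hz01, hz02⟩
      obtain ⟨w, hw1, hw2⟩ := mem_closure_iff_nhds.mp hz0F _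
        (isOpen_Ioo.mem_nhds (⟨hz01, hz02⟩ : z0 ∈ Ioo (dF.a m) (dF.b m)))
      exact ⟨w, hw1, hw2⟩
    obtain ⟨z, hzIoo, hzEc⟩ := hIoone
    obtain ⟨w, hw1, hw2⟩ := mem_closure_iff_nhds.mp (hdens hzEc) _
      ((isOpen_Ioo.inter hEclosed.isOpen_compl).mem_nhds ⟨hzIoo, hzEc⟩)
    obtain ⟨n, hn⟩ := mem_iUnion.mp hw2
    obtain ⟨y', hy', rfl⟩ := hn
    have hy'piece : y' ∈ dF.piece j := by
      have hy'F : y' ∈ F := subset_closure hy'.2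
      obtain ⟨k, hk⟩ := dF.mem_piece hy'F
      have hkj : k = j := by
        by_contra hkj
        exact hy'.1 (mem_iUnion₂.mpr ⟨k, hkj, hk⟩)
      exact hkj ▸ hk
    have hwin : f^[n] y' ∈ dF.piece (ρ^[n] j) :=
      pieceMap_iterate dF hρ n j (mem_image_of_mem _ hy'piece)
    exact ⟨n, dF.index_unique hwin (Ioo_subset_Icc_self hw1.1)⟩
  have hendE : ∀ (x : unitInterval) (i : Fin dE.c),
      x ∈ dE.piece i → x ∈ F → x = dE.a i ∨ x = dE.b i := by
    intro x i hxi hxF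
    obtain ⟨j, hj⟩ := dF.mem_piece hxF
    rcases flank dE dF hthin hxi hj with ⟨h, -⟩ | ⟨h, -⟩
    · exact Or.inl h
    · exact Or.inr h
  have hendF : ∀ (x : unitInterval) (j : Fin dF.c),
      x ∈ dF.piece j → x ∈ E → x = dF.a j ∨ x = dF.b j := by
    intro x j hxj hxE
    obtain ⟨i, hi⟩ := dE.mem_piece hxE
    rcases flank dE dF hthin hi hxj with ⟨-, h⟩ | ⟨-, h⟩
    · exact Or.inr h
    · exact Or.inl h
  have hdistE : ∃ (xa xb : unitInterval) (ia ib : Fin dE.c),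
      sAlpha f xa = Set.univ ∧ sAlpha f xb = Set.univ ∧
        xa ∈ dE.piece ia ∧ xb ∈ dE.piece ib ∧ ia ≠ ib := by
    by_cases h12' : i₁ = i₂
    · by_cases h13' : i₁ = i₃
      · exfalso
        have e1 := hendE x₁ i₁ hi₁ hx1F
        have e2 := hendE x₂ i₁ (by rw [h12']; exact hi₂) hx2F
        have e3 := hendE x₃ i₁ (by rw [h13']; exact hi₃) hx3F
        rcases e1 with e1 | e1 <;> rcases e2 with e2 | e2 <;> rcases e3 with e3 | e3 <;>
          first
            | exact h12 (e1.trans e2.symm)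
            | exact h13 (e1.trans e3.symm)
            | exact h23 (e2.trans e3.symm)
      · exact ⟨x₁, x₃, i₁, i₃, hs1, hs3, hi₁, hi₃, h13'⟩
    · exact ⟨x₁, x₂, i₁, i₂, hs1, hs2, hi₁, hi₂, h12'⟩
  have hdistF : ∃ (ya yb : unitInterval) (ja jb : Fin dF.c),
      sAlpha f ya = Set.univ ∧ sAlpha f yb = Set.univ ∧
        ya ∈ dF.piece ja ∧ yb ∈ dF.piece jb ∧ ja ≠ jb := by
    by_cases h12' : j₁ = j₂
    · by_cases h13' : j₁ = j₃
      · exfalso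
        have e1 := hendF x₁ j₁ hj₁ hx1E
        have e2 := hendF x₂ j₁ (by rw [h12']; exact hj₂) hx2E
        have e3 := hendF x₃ j₁ (by rw [h13']; exact hj₃) hx3E
        rcases e1 with e1 | e1 <;> rcases e2 with e2 | e2 <;> rcases e3 with e3 | e3 <;>
          first
            | exact h12 (e1.trans e2.symm)
            | exact h13 (e1.trans e3.symm)
            | exact h23 (e2.trans e3.symm)
      · exact ⟨x₁, x₃, j₁, j₃, hs1, hs3, hj₁, hj₃, h13'⟩
    · exact ⟨x₁, x₂, j₁, j₂, hs1, hs2, hj₁, hj₂, h12'⟩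
  obtain ⟨xa, xb, ia, ib, hsa, hsb, hia, hib, hab⟩ := hdistE
  obtain ⟨hπfix, hπdvd⟩ := reach_cyclic hab (hreachE xa hsa ia hia) (hreachE xb hsb ib hib)
  obtain ⟨ya, yb, ja, jb, hsa', hsb', hja, hjb, hab'⟩ := hdistF
  obtain ⟨hρfix, hρdvd⟩ := reach_cyclic hab' (hreachF ya hsa' ja hja) (hreachF yb hsb' jb hjb)
  have hc1 : 0 < dE.c := i₁.pos
  have hc2 : 0 < dF.c := j₁.pos
  set L := Nat.lcm dE.c dF.c with hL
  have hLpos : 0 < L := Nat.lcm_pos hc1 hc2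
  have hper : ∀ pr : Fin dE.c × Fin dF.c,
      (fun q : Fin dE.c × Fin dF.c => (π q.1, ρ q.2))^[L] pr = pr := by
    intro pr
    rw [prodMap_iterate]
    have h1 : π^[L] pr.1 = pr.1 := by
      obtain ⟨k, hk⟩ := Nat.dvd_lcm_left dE.c dF.c
      rw [← hL] at hk
      rw [hk, Function.iterate_mul]
      exact Function.iterate_fixed (hπfix pr.1) k
    have h2 : ρ^[L] pr.2 = pr.2 := by
      obtain ⟨k, hk⟩ := Nat.dvd_lcm_right dE.c dF.c
      rw [← hL] at hk
      rw [hk, Function.iterate_mul]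
      exact Function.iterate_fixed (hρfix pr.2) k
    rw [h1, h2]
  have hgdvd : ∀ (pr : Fin dE.c × Fin dF.c) (n : ℕ),
      (fun q : Fin dE.c × Fin dF.c => (π q.1, ρ q.2))^[n] pr = pr → L ∣ n := by
    intro pr n hn
    rw [prodMap_iterate] at hn
    have h1 : π^[n] pr.1 = pr.1 := congrArg Prod.fst hn
    have h2 : ρ^[n] pr.2 = pr.2 := congrArg Prod.snd hn
    exact Nat.lcm_dvd (hπdvd pr.1 n h1) (hρdvd pr.2 n h2)
  set TP := Finset.univ.filter
    (fun pr : Fin dE.c × Fin dF.c => (dE.piece pr.1 ∩ dF.piece pr.2).Nonempty) with hTP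
  have hTPinv : ∀ pr ∈ TP,
      (fun q : Fin dE.c × Fin dF.c => (π q.1, ρ q.2)) pr ∈ TP := by
    intro pr hpr
    rw [hTP, Finset.mem_filter] at hpr ⊢
    obtain ⟨-, s, hsp1, hsp2⟩ := hpr
    exact ⟨Finset.mem_univ _, f s, hπ pr.1 (mem_image_of_mem f hsp1),
      hρ pr.2 (mem_image_of_mem f hsp2)⟩
  have hdvdM := orbit_card_dvd _ L hLpos hper hgdvd TP hTPinv
  have hM := TP_card dE dF hcover hthin
  rw [← hTP] at hM
  have hM3 : 3 ≤ TP.card := by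
    have hmem : ∀ (x : unitInterval) (i : Fin dE.c) (j : Fin dF.c),
        x ∈ dE.piece i → x ∈ dF.piece j → (i, j) ∈ TP := fun x i j hi hj =>
      Finset.mem_filter.mpr ⟨Finset.mem_univ _, x, hi, hj⟩
    have hnepair : ∀ (x y : unitInterval) (i i' : Fin dE.c) (j j' : Fin dF.c),
        x ∈ dE.piece i → x ∈ dF.piece j → y ∈ dE.piece i' → y ∈ dF.piece j' →
        x ≠ y → ((i, j) : Fin dE.c × Fin dF.c) ≠ (i', j') := by
      intro x y i i' j j' hxi hxj hyi hyj hxy h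
      have hii : i = i' := congrArg Prod.fst h
      have hjj : j = j' := congrArg Prod.snd h
      exact hxy (cross_sub dE dF hthin x ⟨hxi, hxj⟩ y
        ⟨by rw [hii]; exact hyi, by rw [hjj]; exact hyj⟩)
    have hne12 := hnepair x₁ x₂ i₁ i₂ j₁ j₂ hi₁ hj₁ hi₂ hj₂ h12
    have hne13 := hnepair x₁ x₃ i₁ i₃ j₁ j₃ hi₁ hj₁ hi₃ hj₃ h13
    have hne23 := hnepair x₂ x₃ i₂ i₃ j₂ j₃ hi₂ hj₂ hi₃ hj₃ h23
    have hsub : ({(i₁,j₁), (i₂,j₂), (i₃,j₃)} : Finset (Fin dE.c × Fin dF.c)) ⊆ TP := by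
      intro pr hpr
      simp only [Finset.mem_insert, Finset.mem_singleton] at hpr
      rcases hpr with rfl | rfl | rfl
      · exact hmem x₁ _ _ hi₁ hj₁
      · exact hmem x₂ _ _ hi₂ hj₂
      · exact hmem x₃ _ _ hi₃ hj₃
    have hcard3 : ({(i₁,j₁), (i₂,j₂), (i₃,j₃)} : Finset (Fin dE.c × Fin dF.c)).card = 3 :=
      Finset.card_eq_three.mpr ⟨_, _, _, hne12, hne13, hne23, rfl⟩
    calc 3 = _ := hcard3.symm
    _ ≤ TP.card := Finset.card_le_card hsub
  have hcover' : F ∪ E = univ := by rw [union_comm]; exact hcover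
  have hthin' : interior (F ∩ E) = ∅ := by rw [inter_comm]; exact hthin
  have hb1 := c_bound dE dF hcover hthin hc2
  have hb2 := c_bound dF dE hcover' hthin' hc1
  have hdvd' : Nat.lcm dE.c dF.c ∣ dE.c + dF.c - 1 := by
    have heq : TP.card = dE.c + dF.c - 1 := by omega
    rw [← heq]
    exact hdvdM
  exact final_arith dE.c dF.c hc1 hc2 hb1 hb2 hdvd' (by omega)
end

section
/- Let f : [0,1] → [0,1] be continuous. If N is a weak cycle of intervals of period n for f, M is a transitive cycle of intervals of period m for f, and N ∩ M is a nonempty finite set, then N ∩ M is a single periodic orbit of f contained in the set of endpoints of the connected components of M, and n ≤ 2m. -/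
open Filter Topology Set

/-- A cycle of intervals of period `k` for an interval map `f`. -/
def IsIntervalCycle (f : unitInterval → unitInterval) (M : Set unitInterval) (k : ℕ) : Prop :=
  1 ≤ k ∧ ∃ K : Set unitInterval,
    (∃ a b : unitInterval, a < b ∧ K = Set.Icc a b) ∧
    (∀ i j, i < k → j < k → i ≠ j → Disjoint (f^[i] '' K) (f^[j] '' K)) ∧
    f^[k] '' K = K ∧
    M = ⋃ i ∈ Finset.range k, f^[i] '' K

/-- Topological transitivity of `f` restricted to an invariant set `M`. -/
def TransitiveOn {X : Type*} [TopologicalSpace X] (f : X → X) (M : Set X) : Prop :=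
  Set.MapsTo f M M ∧
    ∀ U V : Set X, IsOpen U → IsOpen V → (U ∩ M).Nonempty → (V ∩ M).Nonempty →
      ∃ n : ℕ, (f^[n] '' (U ∩ M) ∩ V).Nonempty

/-- A transitive cycle of intervals. -/
def IsTransitiveCycle (f : unitInterval → unitInterval) (M : Set unitInterval) (k : ℕ) : Prop :=
  IsIntervalCycle f M k ∧ TransitiveOn f M

/-- A weak cycle of intervals of period `n`. -/
def IsWeakCycle (f : unitInterval → unitInterval) (N : Set unitInterval) (n : ℕ) : Prop :=
  1 ≤ n ∧ ∃ B : Set unitInterval,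
    (∀ i, i < n → (f^[i] '' B).OrdConnected ∧ (f^[i] '' B).Nontrivial) ∧
    (∀ i j, i < n → j < n → i ≠ j → Disjoint (f^[i] '' B) (f^[j] '' B)) ∧
    f^[n] '' B ⊆ B ∧
    N = ⋃ i ∈ Finset.range n, f^[i] '' B

/-- Endpoints of the connected components of `M`. -/
def EndPts (M : Set unitInterval) : Set unitInterval :=
  {x | x ∈ M ∧ (IsGreatest (connectedComponentIn M x) x ∨ IsLeast (connectedComponentIn M x) x)}

/-- Auxiliary: modular arithmetic key lemma. -/
lemma modKeyAux (k i t : ℕ) (hk : 0 < k) (hi : i < k) (h : (i + t) % k = i) : k ∣ t := by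
  have hr : t % k < k := Nat.mod_lt _ hk
  have h1 : (i + t % k) % k = i := by rwa [Nat.add_mod_mod]
  rcases Nat.lt_or_ge (i + t % k) k with h2 | h2
  · rw [Nat.mod_eq_of_lt h2] at h1
    exact Nat.dvd_of_mod_eq_zero (by omega)
  · rw [Nat.mod_eq_sub_mod h2, Nat.mod_eq_of_lt (by omega)] at h1
    omega

theorem stmt5 (f : unitInterval → unitInterval) (hf : Continuous f)
    (N M : Set unitInterval) (n m : ℕ)
    (hN : IsWeakCycle f N n) (hM : IsTransitiveCycle f M m)
    (hne : (N ∩ M).Nonempty) (hfin : (N ∩ M).Finite) :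
    (∃ (p : unitInterval) (k : ℕ), 1 ≤ k ∧ f^[k] p = p ∧
      (∀ i, 0 < i → i < k → f^[i] p ≠ p) ∧
      N ∩ M = {y | ∃ i < k, y = f^[i] p}) ∧
    N ∩ M ⊆ EndPts M ∧ n ≤ 2 * m := by
  classical
  haveI : Fact ((0:ℝ) ≤ 1) := ⟨zero_le_one⟩
  obtain ⟨hn1, B, hBprop, hBdisj, hBsub, hNdef⟩ := hN
  obtain ⟨⟨hm1, K, ⟨a, b, hab, hKdef⟩, hKdisj, hKper, hMdef⟩, -⟩ := hM
  have npos : 0 < n := hn1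
  have mpos : 0 < m := hm1
  -- basic membership
  have memN : ∀ x, x ∈ N ↔ ∃ i, i < n ∧ x ∈ f^[i] '' B := by
    intro x; rw [hNdef]; simp [Set.mem_iUnion]
  have memM : ∀ x, x ∈ M ↔ ∃ j, j < m ∧ x ∈ f^[j] '' K := by
    intro x; rw [hMdef]; simp [Set.mem_iUnion]
  have hNsub : ∀ i, i < n → f^[i] '' B ⊆ N := by
    intro i hi x hx; exact (memN x).2 ⟨i, hi, hx⟩
  have hMsub : ∀ j, j < m → f^[j] '' K ⊆ M := by
    intro j hj x hx; exact (memM x).2 ⟨j, hj, hx⟩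
  -- no nondegenerate interval inside N ∩ M
  have hIcc : ∀ x y : unitInterval, x < y → ¬ (Set.Icc x y ⊆ N ∩ M) := by
    intro x y hxy hsub
    exact Set.Icc_infinite hxy (hfin.subset hsub)
  -- stepping lemmas
  have stepN : ∀ i, i < n → ∀ x, x ∈ f^[i] '' B → f x ∈ f^[(i+1) % n] '' B := by
    intro i hi x hx
    obtain ⟨w, hw, rfl⟩ := hx
    rcases Nat.lt_or_ge (i+1) n with h | h
    · rw [Nat.mod_eq_of_lt h]
      exact ⟨w, hw, Function.iterate_succ_apply' f i w⟩
    · have hin : i + 1 = n := le_antisymm (Nat.succ_le_of_lt hi) h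
      have hmem : f (f^[i] w) ∈ f^[n] '' B :=
        ⟨w, hw, by rw [← hin]; exact Function.iterate_succ_apply' f i w⟩
      have h0 : f (f^[i] w) ∈ B := hBsub hmem
      rw [hin, Nat.mod_self]
      exact ⟨f (f^[i] w), h0, rfl⟩
  have stepM : ∀ j, j < m → ∀ x, x ∈ f^[j] '' K → f x ∈ f^[(j+1) % m] '' K := by
    intro j hj x hx
    obtain ⟨w, hw, rfl⟩ := hx
    rcases Nat.lt_or_ge (j+1) m with h | h
    · rw [Nat.mod_eq_of_lt h]
      exact ⟨w, hw, Function.iterate_succ_apply' f j w⟩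
    · have hjm : j + 1 = m := le_antisymm (Nat.succ_le_of_lt hj) h
      have hmem : f (f^[j] w) ∈ f^[m] '' K :=
        ⟨w, hw, by rw [← hjm]; exact Function.iterate_succ_apply' f j w⟩
      have h0 : f (f^[j] w) ∈ K := hKper ▸ hmem
      rw [hjm, Nat.mod_self]
      exact ⟨f (f^[j] w), h0, rfl⟩
  have iterN : ∀ t i, i < n → ∀ x, x ∈ f^[i] '' B → f^[t] x ∈ f^[(i + t) % n] '' B := by
    intro t
    induction t with
    | zero => intro i hi x hx; simpa [Nat.mod_eq_of_lt hi] using hx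
    | succ t ih =>
      intro i hi x hx
      have h1 := ih i hi x hx
      have h2 := stepN _ (Nat.mod_lt _ npos) _ h1
      rw [Function.iterate_succ_apply']
      rwa [Nat.mod_add_mod, Nat.add_assoc] at h2
  have iterM : ∀ t j, j < m → ∀ x, x ∈ f^[j] '' K → f^[t] x ∈ f^[(j + t) % m] '' K := by
    intro t
    induction t with
    | zero => intro j hj x hx; simpa [Nat.mod_eq_of_lt hj] using hx
    | succ t ih =>
      intro j hj x hx
      have h1 := ih j hj x hx
      have h2 := stepM _ (Nat.mod_lt _ mpos) _ h1
      rw [Function.iterate_succ_apply']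
      rwa [Nat.mod_add_mod, Nat.add_assoc] at h2
  have iterE : ∀ t x, x ∈ N ∩ M → f^[t] x ∈ N ∩ M := by
    intro t x hx
    obtain ⟨i, hi, hxi⟩ := (memN x).1 hx.1
    obtain ⟨j, hj, hxj⟩ := (memM x).1 hx.2
    exact ⟨hNsub _ (Nat.mod_lt _ npos) (iterN t i hi x hxi),
           hMsub _ (Nat.mod_lt _ mpos) (iterM t j hj x hxj)⟩
  -- index uniqueness
  have uniqN : ∀ i i', i < n → i' < n → ∀ x : unitInterval,
      x ∈ f^[i] '' B → x ∈ f^[i'] '' B → i = i' := by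
    intro i i' hi hi' x h h'
    by_contra hne'
    exact (hBdisj i i' hi hi' hne').ne_of_mem h h' rfl
  have uniqM : ∀ j j', j < m → j' < m → ∀ x : unitInterval,
      x ∈ f^[j] '' K → x ∈ f^[j'] '' K → j = j' := by
    intro j j' hj hj' x h h'
    by_contra hne'
    exact (hKdisj j j' hj hj' hne').ne_of_mem h h' rfl
  -- structure of the M-components
  have McOC : ∀ j, (f^[j] '' K).OrdConnected := by
    intro j
    have hpre : IsPreconnected (f^[j] '' K) := by
      rw [hKdef]
      exact isPreconnected_Icc.image _ ((hf.iterate j).continuousOn)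
    exact hpre.ordConnected
  have McCpt : ∀ j, IsCompact (f^[j] '' K) := by
    intro j
    have : IsCompact K := by rw [hKdef]; exact isClosed_Icc.isCompact
    exact this.image (hf.iterate j)
  have hKnt : K.Nontrivial := by
    refine ⟨a, ?_, b, ?_, hab.ne⟩ <;> rw [hKdef]
    · exact ⟨le_refl a, hab.le⟩
    · exact ⟨hab.le, le_refl b⟩
  have McNT : ∀ j, j < m → (f^[j] '' K).Nontrivial := by
    intro j hj
    by_contra hcon
    have hss : (f^[j] '' K).Subsingleton := Set.not_nontrivial_iff.1 hcon
    have himg : f^[m - j] '' (f^[j] '' K) = K := by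
      rw [← Set.image_comp, ← Function.iterate_add, Nat.sub_add_cancel hj.le]
      exact hKper
    have : K.Subsingleton := himg ▸ hss.image _
    exact hKnt.not_subsingleton this
  have McGreatest : ∀ j, j < m → ∃ d, IsGreatest (f^[j] '' K) d := by
    intro j hj
    exact (McCpt j).exists_isGreatest ((McNT j hj).nonempty)
  have McLeast : ∀ j, j < m → ∃ c, IsLeast (f^[j] '' K) c := by
    intro j hj
    exact (McCpt j).exists_isLeast ((McNT j hj).nonempty)
  -- singleton contacts
  have ssNM : ∀ i j, i < n → j < m → ∀ x y : unitInterval,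
      x ∈ f^[i] '' B → x ∈ f^[j] '' K → y ∈ f^[i] '' B → y ∈ f^[j] '' K → x = y := by
    intro i j hi hj x y hxi hxj hyi hyj
    by_contra hxy
    have key : ∀ u v : unitInterval, u < v → u ∈ f^[i] '' B → u ∈ f^[j] '' K →
        v ∈ f^[i] '' B → v ∈ f^[j] '' K → False := by
      intro u v huv hui huj hvi hvj
      refine hIcc u v huv (fun w hw => ⟨hNsub i hi ?_, hMsub j hj ?_⟩)
      · exact (hBprop i hi).1.out hui hvi hw
      · exact (McOC j).out huj hvj hw
    rcases lt_or_gt_of_ne hxy with h | h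
    · exact key x y h hxi hxj hyi hyj
    · exact key y x h hyi hyj hxi hxj
  -- period L
  set L := Nat.lcm n m with hL
  have Lpos : 0 < L := Nat.pos_of_ne_zero (Nat.lcm_ne_zero npos.ne' mpos.ne')
  have hnL : n ∣ L := Nat.dvd_lcm_left n m
  have hmL : m ∣ L := Nat.dvd_lcm_right n m
  have modN : ∀ i t, i < n → n ∣ t → (i + t) % n = i := by
    intro i t hi hdvd
    obtain ⟨c, rfl⟩ := hdvd
    rw [Nat.add_mul_mod_self_left, Nat.mod_eq_of_lt hi]
  have modM : ∀ j t, j < m → m ∣ t → (j + t) % m = j := by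
    intro j t hj hdvd
    obtain ⟨c, rfl⟩ := hdvd
    rw [Nat.add_mul_mod_self_left, Nat.mod_eq_of_lt hj]
  have perE : ∀ x, x ∈ N ∩ M → f^[L] x = x := by
    intro x hx
    obtain ⟨i, hi, hxi⟩ := (memN x).1 hx.1
    obtain ⟨j, hj, hxj⟩ := (memM x).1 hx.2
    have h1 := iterN L i hi x hxi
    have h2 := iterM L j hj x hxj
    rw [modN i L hi hnL] at h1
    rw [modM j L hj hmL] at h2
    exact ssNM i j hi hj _ x h1 h2 hxi hxj
  have minE : ∀ x, x ∈ N ∩ M → ∀ t, 0 < t → t < L → f^[t] x ≠ x := by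
    intro x hx t ht htL heq
    obtain ⟨i, hi, hxi⟩ := (memN x).1 hx.1
    obtain ⟨j, hj, hxj⟩ := (memM x).1 hx.2
    have h1 := iterN t i hi x hxi
    have h2 := iterM t j hj x hxj
    rw [heq] at h1 h2
    have hdn : n ∣ t := modKeyAux n i t npos hi (uniqN _ i (Nat.mod_lt _ npos) hi x h1 hxi)
    have hdm : m ∣ t := modKeyAux m j t mpos hj (uniqM _ j (Nat.mod_lt _ mpos) hj x h2 hxj)
    have : L ∣ t := Nat.lcm_dvd hdn hdm
    have := Nat.le_of_dvd ht this
    omega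
  have distE : ∀ x, x ∈ N ∩ M → ∀ s t, s < t → t < L → f^[s] x ≠ f^[t] x := by
    intro x hx s t hst htL heq
    have h1 : f^[t - s] (f^[s] x) = f^[s] x := by
      rw [← Function.iterate_add_apply, Nat.sub_add_cancel hst.le]
      exact heq.symm
    exact minE _ (iterE s x hx) (t - s) (by omega) (by omega) h1
  have perMul : ∀ x, x ∈ N ∩ M → ∀ q, f^[L * q] x = x := by
    intro x hx q
    induction q with
    | zero => simp
    | succ q ih =>
      have : L * (q + 1) = L + L * q := by ring
      rw [this, Function.iterate_add_apply, ih, perE x hx]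
  have redMod : ∀ x, x ∈ N ∩ M → ∀ t, f^[t] x = f^[t % L] x := by
    intro x hx t
    conv_lhs => rw [← Nat.mod_add_div t L]
    rw [Function.iterate_add_apply, perMul x hx (t / L)]
  -- the base point
  obtain ⟨p, hp⟩ := hne
  -- the three-point lemma
  have three : ∀ i, i < n → ∀ x1 x2 x3 : unitInterval,
      x1 ∈ N ∩ M → x2 ∈ N ∩ M → x3 ∈ N ∩ M →
      x1 ∈ f^[i] '' B → x2 ∈ f^[i] '' B → x3 ∈ f^[i] '' B →
      x1 < x2 → x2 < x3 → False := by
    intro i hi x1 x2 x3 h1 h2 h3 h1i h2i h3i h12 h23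
    obtain ⟨j, hj, hxj⟩ := (memM x2).1 h2.2
    obtain ⟨d, hd⟩ := McGreatest j hj
    obtain ⟨c, hc⟩ := McLeast j hj
    have hcd : c < d := by
      obtain ⟨u, hu, v, hv, huv⟩ := McNT j hj
      rcases eq_or_lt_of_le (hc.2 hd.1) with h | h
      · exact absurd (le_antisymm ((hd.2 hu).trans h.ge |>.trans (hc.2 hv))
          ((hd.2 hv).trans h.ge |>.trans (hc.2 hu))) huv
      · exact h
    rcases eq_or_lt_of_le (hd.2 hxj) with hxd | hxd
    · -- x2 = d, so c < x2; pick w ∈ Ioo (max x1 c) x2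
      have hcx : c < x2 := hxd ▸ hcd
      obtain ⟨w, hw1, hw2⟩ := exists_between (max_lt h12 hcx)
      have hwN : w ∈ f^[i] '' B :=
        (hBprop i hi).1.out h1i h2i ⟨(le_max_left x1 c).trans hw1.le, hw2.le⟩
      have hwM : w ∈ f^[j] '' K :=
        (McOC j).out hc.1 hxj ⟨(le_max_right x1 c).trans hw1.le, hw2.le⟩
      exact absurd (ssNM i j hi hj w x2 hwN hwM h2i hxj) hw2.ne
    · -- x2 < d; pick w ∈ Ioo x2 (min x3 d)
      obtain ⟨w, hw1, hw2⟩ := exists_between (lt_min h23 hxd)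
      have hwN : w ∈ f^[i] '' B :=
        (hBprop i hi).1.out h2i h3i ⟨hw1.le, hw2.le.trans (min_le_left x3 d)⟩
      have hwM : w ∈ f^[j] '' K :=
        (McOC j).out hxj hd.1 ⟨hw1.le, hw2.le.trans (min_le_right x3 d)⟩
      exact absurd (ssNM i j hi hj w x2 hwN hwM h2i hxj) hw1.ne'
  -- visits
  have visit : ∀ x, x ∈ N ∩ M → ∀ i, i < n → ∃ t, t < n ∧ f^[t] x ∈ f^[i] '' B := by
    intro x hx i hi
    obtain ⟨i0, hi0, hxi0⟩ := (memN x).1 hx.1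
    refine ⟨(n + i - i0) % n, Nat.mod_lt _ npos, ?_⟩
    have h1 := iterN ((n + i - i0) % n) i0 hi0 x hxi0
    have h2 : (i0 + (n + i - i0) % n) % n = i := by
      rw [Nat.add_mod_mod]
      have h3 : i0 + (n + i - i0) = n + i := by omega
      rw [h3, Nat.add_mod_left, Nat.mod_eq_of_lt hi]
    rwa [h2] at h1
  -- the endpoint property with respect to a given M-component
  have epMc : ∀ x, x ∈ N ∩ M → ∀ j, j < m → x ∈ f^[j] '' K →
      IsGreatest (f^[j] '' K) x ∨ IsLeast (f^[j] '' K) x := by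
    intro x hx j hj hxj
    by_contra hcon
    push_neg at hcon
    obtain ⟨d, hd⟩ := McGreatest j hj
    obtain ⟨c, hc⟩ := McLeast j hj
    have hxd : x < d := lt_of_le_of_ne (hd.2 hxj) (fun h => hcon.1 (h ▸ hd))
    have hcx : c < x := lt_of_le_of_ne (hc.2 hxj) (fun h => hcon.2 (h ▸ hc))
    obtain ⟨i, hi, hxi⟩ := (memN x).1 hx.1
    obtain ⟨u, hu, v, hv, huv⟩ := (hBprop i hi).2
    have hy : ∃ y, y ∈ f^[i] '' B ∧ y ≠ x := by
      rcases eq_or_ne u x with h | h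
      · exact ⟨v, hv, by rw [← h]; exact fun hh => huv hh.symm⟩
      · exact ⟨u, hu, h⟩
    obtain ⟨y, hyi, hyx⟩ := hy
    rcases hyx.lt_or_gt with hylt | hygt
    · refine hIcc (max y c) x (max_lt hylt hcx) (fun w hw => ⟨hNsub i hi ?_, hMsub j hj ?_⟩)
      · exact (hBprop i hi).1.out hyi hxi ⟨(le_max_left y c).trans hw.1, hw.2⟩
      · exact (McOC j).out hc.1 hxj ⟨(le_max_right y c).trans hw.1, hw.2⟩
    · refine hIcc x (min y d) (lt_min hygt hxd) (fun w hw => ⟨hNsub i hi ?_, hMsub j hj ?_⟩)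
      · exact (hBprop i hi).1.out hxi hyi ⟨hw.1, hw.2.trans (min_le_left y d)⟩
      · exact (McOC j).out hxj hd.1 ⟨hw.1, hw.2.trans (min_le_right y d)⟩
  -- EndPts
  have endpts : N ∩ M ⊆ EndPts M := by
    intro x hx
    refine ⟨hx.2, ?_⟩
    by_contra hcon
    push_neg at hcon
    obtain ⟨hng, hnl⟩ := hcon
    have hxc : x ∈ connectedComponentIn M x := mem_connectedComponentIn hx.2
    have hsub := connectedComponentIn_subset M x
    have hoc : (connectedComponentIn M x).OrdConnected :=
      (isPreconnected_connectedComponentIn).ordConnected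
    have hz2 : ∃ z, z ∈ connectedComponentIn M x ∧ x < z := by
      by_contra h
      push_neg at h
      exact hng ⟨hxc, fun z hz => not_lt.1 (fun hh => absurd hh (not_lt.2 (h z hz)))⟩
    have hz1 : ∃ z, z ∈ connectedComponentIn M x ∧ z < x := by
      by_contra h
      push_neg at h
      exact hnl ⟨hxc, fun z hz => not_lt.1 (fun hh => absurd hh (not_lt.2 (h z hz)))⟩
    obtain ⟨i, hi, hxi⟩ := (memN x).1 hx.1
    obtain ⟨u, hu, v, hv, huv⟩ := (hBprop i hi).2
    have hy : ∃ y, y ∈ f^[i] '' B ∧ y ≠ x := by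
      rcases eq_or_ne u x with h | h
      · exact ⟨v, hv, by rw [← h]; exact fun hh => huv hh.symm⟩
      · exact ⟨u, hu, h⟩
    obtain ⟨y, hyi, hyx⟩ := hy
    rcases hyx.lt_or_gt with hylt | hygt
    · obtain ⟨z1, hz1c, hz1x⟩ := hz1
      refine hIcc (max y z1) x (max_lt hylt hz1x) (fun w hw => ⟨hNsub i hi ?_, hsub ?_⟩)
      · exact (hBprop i hi).1.out hyi hxi ⟨(le_max_left y z1).trans hw.1, hw.2⟩
      · exact hoc.out hz1c hxc ⟨(le_max_right y z1).trans hw.1, hw.2⟩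
    · obtain ⟨z2, hz2c, hz2x⟩ := hz2
      refine hIcc x (min y z2) (lt_min hygt hz2x) (fun w hw => ⟨hNsub i hi ?_, hsub ?_⟩)
      · exact (hBprop i hi).1.out hxi hyi ⟨hw.1, hw.2.trans (min_le_left y z2)⟩
      · exact hoc.out hxc hz2c ⟨hw.1, hw.2.trans (min_le_right y z2)⟩
  -- n ≤ 2m, via counting the orbit of p
  have hn2m : n ≤ 2 * m := by
    have hchoice : ∀ x : unitInterval, ∃ j, x ∈ N ∩ M → j < m ∧ x ∈ f^[j] '' K ∧
        (IsGreatest (f^[j] '' K) x ∨ IsLeast (f^[j] '' K) x) := by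
      intro x
      by_cases hx : x ∈ N ∩ M
      · obtain ⟨j, hj, hxj⟩ := (memM x).1 hx.2
        exact ⟨j, fun _ => ⟨hj, hxj, epMc x hx j hj hxj⟩⟩
      · exact ⟨0, fun h => absurd h hx⟩
    choose J hJ using hchoice
    set φ : unitInterval → ℕ × Bool :=
      fun x => (J x, if IsGreatest (f^[J x] '' K) x then true else false) with hφ
    set S : Finset unitInterval := (Finset.range L).image (fun t => f^[t] p) with hS
    have hSE : ∀ x ∈ S, x ∈ N ∩ M := by
      intro x hxS
      rw [hS] at hxS
      obtain ⟨t, _, rfl⟩ := Finset.mem_image.1 hxS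
      exact iterE t p hp
    have hScard : S.card = L := by
      rw [hS]
      rw [Finset.card_image_of_injOn, Finset.card_range]
      intro s hs t ht hst
      simp only [Finset.coe_range, Set.mem_Iio] at hs ht
      by_contra hne'
      rcases Nat.lt_or_ge s t with h | h
      · exact distE p hp s t h ht hst
      · exact distE p hp t s (lt_of_le_of_ne h (Ne.symm hne')) hs hst.symm
    have hmaps : ∀ x ∈ S, φ x ∈ (Finset.range m) ×ˢ (Finset.univ : Finset Bool) := by
      intro x hxS
      obtain ⟨hJm, _, _⟩ := hJ x (hSE x hxS)
      exact Finset.mem_product.2 ⟨Finset.mem_range.2 hJm, Finset.mem_univ _⟩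
    have hinj : Set.InjOn φ S := by
      intro x hxS y hyS heq
      have hxE := hSE x hxS
      have hyE := hSE y hyS
      obtain ⟨hJx, hxJ, hGLx⟩ := hJ x hxE
      obtain ⟨hJy, hyJ, hGLy⟩ := hJ y hyE
      have hj : J x = J y := congrArg Prod.fst heq
      have hsnd := congrArg Prod.snd heq
      simp only [hφ] at hsnd
      by_cases hg : IsGreatest (f^[J x] '' K) x
      · rw [if_pos hg] at hsnd
        by_cases hgy : IsGreatest (f^[J y] '' K) y
        · exact hg.unique (hj ▸ hgy)
        · rw [if_neg hgy] at hsnd; exact absurd hsnd.symm (by simp)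
      · rw [if_neg hg] at hsnd
        by_cases hgy : IsGreatest (f^[J y] '' K) y
        · rw [if_pos hgy] at hsnd; exact absurd hsnd (by simp)
        · have hlx : IsLeast (f^[J x] '' K) x := hGLx.resolve_left hg
          have hly : IsLeast (f^[J y] '' K) y := hGLy.resolve_left hgy
          exact hlx.unique (hj ▸ hly)
    have hcard := Finset.card_le_card_of_injOn φ hmaps hinj
    rw [hScard, Finset.card_product, Finset.card_range] at hcard
    simp only [Finset.card_univ, Fintype.card_bool] at hcard
    have hnle : n ≤ L := Nat.le_of_dvd Lpos hnL
    omega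
  -- single orbit
  have orbitAll : ∀ y, y ∈ N ∩ M → ∃ t, t < L ∧ y = f^[t] p := by
    intro y hy
    by_contra hcon
    push_neg at hcon
    -- orbits are disjoint
    have orbDisj : ∀ s t, f^[s] p ≠ f^[t] y := by
      intro s t heq
      have h1 : f^[L - t % L] (f^[t] y) = y := by
        rw [redMod y hy t, ← Function.iterate_add_apply,
          Nat.sub_add_cancel (Nat.mod_lt _ Lpos).le]
        exact perE y hy
      rw [← heq, ← Function.iterate_add_apply] at h1
      exact hcon ((L - t % L + s) % L) (Nat.mod_lt _ Lpos)
        (by rw [← redMod p hp _]; exact h1.symm)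
    -- sorting helper
    have three3 : ∀ i, i < n → ∀ x1 x2 x3 : unitInterval,
        x1 ∈ N ∩ M → x2 ∈ N ∩ M → x3 ∈ N ∩ M →
        x1 ∈ f^[i] '' B → x2 ∈ f^[i] '' B → x3 ∈ f^[i] '' B →
        x1 ≠ x2 → x1 ≠ x3 → x2 ≠ x3 → False := by
      intro i hi x1 x2 x3 h1 h2 h3 h1i h2i h3i d12 d13 d23
      rcases d12.lt_or_gt with a1 | a1 <;> rcases d13.lt_or_gt with b1 | b1 <;>
        rcases d23.lt_or_gt with c1 | c1
      · exact three i hi x1 x2 x3 h1 h2 h3 h1i h2i h3i a1 c1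
      · exact three i hi x1 x3 x2 h1 h3 h2 h1i h3i h2i b1 c1
      · exact absurd (b1.trans a1) (not_lt.2 c1.le)
      · exact three i hi x3 x1 x2 h3 h1 h2 h3i h1i h2i b1 a1
      · exact three i hi x2 x1 x3 h2 h1 h3 h2i h1i h3i a1 b1
      · exact absurd (b1.trans c1) (not_lt.2 a1.le)
      · exact three i hi x2 x3 x1 h2 h3 h1 h2i h3i h1i c1 b1
      · exact three i hi x3 x2 x1 h3 h2 h1 h3i h2i h1i c1 a1
    -- L = n
    have hLn : L = n := by
      by_contra hneL
      have hlt : n < L := lt_of_le_of_ne (Nat.le_of_dvd Lpos hnL) (fun h => hneL h.symm)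
      have h2n : 2 * n ≤ L := by
        obtain ⟨c, hc⟩ := hnL
        have : 2 ≤ c := by
          by_contra hc2
          interval_cases c <;> omega
        calc 2 * n = n * 2 := by ring
        _ ≤ n * c := Nat.mul_le_mul_left n this
        _ = L := hc.symm
      obtain ⟨i0, hi0, hp0⟩ := (memN p).1 hp.1
      have hP2 : f^[n] p ∈ f^[i0] '' B := by
        have := iterN n i0 hi0 p hp0
        rwa [Nat.add_mod_right, Nat.mod_eq_of_lt hi0] at this
      obtain ⟨ty, hty, hYv⟩ := visit y hy i0 hi0
      have d12 : p ≠ f^[n] p := fun h => minE p hp n npos (by omega) h.symm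
      have d13 : p ≠ f^[ty] y := by
        intro h
        exact orbDisj 0 ty (by simpa using h)
      have d23 : f^[n] p ≠ f^[ty] y := orbDisj n ty
      exact three3 i0 hi0 p (f^[n] p) (f^[ty] y) hp (iterE n p hp) (iterE ty y hy)
        hp0 hP2 hYv d12 d13 d23
    have hmn : m ∣ n := hLn ▸ hmL
    have hmlen : m ≤ n := Nat.le_of_dvd npos hmn
    -- for each i < n, find the gap-spanning structure
    have key : ∀ i, ∃ ai ui bi vi, i < n → (ai < m ∧ bi < m ∧
        IsGreatest (f^[ai] '' K) ui ∧ IsLeast (f^[bi] '' K) vi ∧ ui < vi ∧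
        ui ∈ f^[i] '' B) := by
      intro i
      by_cases hi : i < n
      · obtain ⟨t1, ht1, hP⟩ := visit p hp i hi
        obtain ⟨t2, ht2, hQ⟩ := visit y hy i hi
        have hPE : f^[t1] p ∈ N ∩ M := iterE t1 p hp
        have hQE : f^[t2] y ∈ N ∩ M := iterE t2 y hy
        have hPQ : f^[t1] p ≠ f^[t2] y := orbDisj t1 t2
        -- get u < v in N ∩ M ∩ (f^[i] '' B)
        have huv : ∃ u v : unitInterval, u < v ∧ u ∈ N ∩ M ∧ v ∈ N ∩ M ∧
            u ∈ f^[i] '' B ∧ v ∈ f^[i] '' B := by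
          rcases hPQ.lt_or_gt with h | h
          · exact ⟨_, _, h, hPE, hQE, hP, hQ⟩
          · exact ⟨_, _, h, hQE, hPE, hQ, hP⟩
        obtain ⟨u, v, huvlt, huE, hvE, hui, hvi⟩ := huv
        obtain ⟨ju, hju, huj⟩ := (memM u).1 huE.2
        obtain ⟨jv, hjv, hvj⟩ := (memM v).1 hvE.2
        obtain ⟨du, hdu⟩ := McGreatest ju hju
        obtain ⟨cv, hcv⟩ := McLeast jv hjv
        -- u is the greatest element of its component
        have hug : u = du := by
          rcases eq_or_lt_of_le (hdu.2 huj) with h | h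
          · exact h
          · exfalso
            obtain ⟨w, hw1, hw2⟩ := exists_between (lt_min huvlt h)
            have hwN : w ∈ f^[i] '' B :=
              (hBprop i hi).1.out hui hvi ⟨hw1.le, hw2.le.trans (min_le_left v du)⟩
            have hwM : w ∈ f^[ju] '' K :=
              (McOC ju).out huj hdu.1 ⟨hw1.le, hw2.le.trans (min_le_right v du)⟩
            have hwE : w ∈ N ∩ M := ⟨hNsub i hi hwN, hMsub ju hju hwM⟩
            exact three i hi u w v huE hwE hvE hui hwN hvi hw1 (hw2.trans_le (min_le_left v du))
        have hvl : v = cv := by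
          rcases eq_or_lt_of_le (hcv.2 hvj) with h | h
          · exact h.symm
          · exfalso
            obtain ⟨w, hw1, hw2⟩ := exists_between (max_lt huvlt h)
            have hwN : w ∈ f^[i] '' B :=
              (hBprop i hi).1.out hui hvi ⟨(le_max_left u cv).trans hw1.le, hw2.le⟩
            have hwM : w ∈ f^[jv] '' K :=
              (McOC jv).out hcv.1 hvj ⟨(le_max_right u cv).trans hw1.le, hw2.le⟩
            have hwE : w ∈ N ∩ M := ⟨hNsub i hi hwN, hMsub jv hjv hwM⟩
            exact three i hi u w v huE hwE hvE hui hwN hvi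
              ((le_max_left u cv).trans_lt hw1) hw2
        exact ⟨ju, u, jv, v, fun _ => ⟨hju, hjv, hug ▸ hdu, hvl ▸ hcv, huvlt, hui⟩⟩
      · exact ⟨0, 0, 0, 0, fun h => absurd h hi⟩
    choose A U Bi V hkey using key
    -- D j : greatest element of component j
    have hgex : ∀ j, ∃ dj, j < m → IsGreatest (f^[j] '' K) dj := by
      intro j
      by_cases hj : j < m
      · obtain ⟨d, hd⟩ := McGreatest j hj; exact ⟨d, fun _ => hd⟩
      · exact ⟨0, fun h => absurd h hj⟩
    choose D hD using hgex
    obtain ⟨js, hjs, hjsmax⟩ := (Finset.range m).exists_max_image D ⟨0, Finset.mem_range.2 mpos⟩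
    -- A is injective on range n and avoids js
    have hAinj : Set.InjOn A (Finset.range n) := by
      intro i hi i' hi' heq
      simp only [Finset.coe_range, Set.mem_Iio] at hi hi'
      obtain ⟨ham, _, hug, _, _, hui⟩ := hkey i hi
      obtain ⟨ham', _, hug', _, _, hui'⟩ := hkey i' hi'
      have : U i = U i' := hug.unique (heq ▸ hug')
      exact uniqN i i' hi hi' (U i) hui (this ▸ hui')
    have hAne : ∀ i, i < n → A i ≠ js := by
      intro i hi heq
      obtain ⟨ham, hbm, hug, hvl, huv, _⟩ := hkey i hi
      have h1 : U i = D (A i) := hug.unique (hD (A i) ham)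
      have h2 : V i ≤ D (Bi i) := (hD (Bi i) hbm).2 hvl.1
      have h3 : D (Bi i) ≤ D js := hjsmax _ (Finset.mem_range.2 hbm)
      rw [heq] at h1
      have : U i < U i := lt_of_lt_of_le huv ((h2.trans h3).trans h1.ge)
      exact absurd this (lt_irrefl _)
    have hmaps : ∀ i ∈ Finset.range n, A i ∈ (Finset.range m).erase js := by
      intro i hi
      rw [Finset.mem_range] at hi
      obtain ⟨ham, _, _, _, _, _⟩ := hkey i hi
      exact Finset.mem_erase.2 ⟨hAne i hi, Finset.mem_range.2 ham⟩
    have hple := Finset.card_le_card_of_injOn A hmaps hAinj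
    rw [Finset.card_range, Finset.card_erase_of_mem hjs, Finset.card_range] at hple
    omega
  -- assemble
  refine ⟨⟨p, L, Lpos, perE p hp, fun i h0 hiL => minE p hp i h0 hiL, ?_⟩, endpts, hn2m⟩
  ext y
  constructor
  · intro hy
    obtain ⟨t, htL, hty⟩ := orbitAll y hy
    exact ⟨t, htL, hty⟩
  · rintro ⟨t, htL, rfl⟩
    exact iterE t p hp
end

section
/- Let f : [0,1] → [0,1] be continuous, let x ∈ [0,1] satisfy x ≠ f(x) and f(f(x)) = f(x) (so x maps to a fixed point but is not fixed), and suppose x belongs to the closure of sα(y) for some y. Then x ∈ sα(y). -/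
open Filter Topology Set

private lemma branch_node {f : unitInterval → unitInterval} {y : unitInterval}
    {u : ℕ → unitInterval} (h : IsBackwardBranch f y u) : ∀ n, f^[n] (u n) = y := by
  intro n
  induction n with
  | zero => exact h.1
  | succ n ih => rw [Function.iterate_succ_apply, h.2 n]; exact ih

private lemma branch_iter {f : unitInterval → unitInterval} {y : unitInterval}
    {u : ℕ → unitInterval} (h : IsBackwardBranch f y u) (a : ℕ) :
    ∀ g, f^[g] (u (a + g)) = u a := by
  intro g
  induction g with
  | zero => rfl
  | succ g ih =>
    rw [show a + (g + 1) = (a + g) + 1 from rfl, Function.iterate_succ_apply, h.2 (a + g)]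
    exact ih

private lemma tendsto_of_dist_le' {α : Type*} [PseudoMetricSpace α] (w : ℕ → α) (c : α)
    (h : ∀ n, dist (w n) c ≤ 1 / ((n : ℝ) + 1)) : Tendsto w atTop (𝓝 c) :=
  tendsto_iff_dist_tendsto_zero.2
    (squeeze_zero (fun _ => dist_nonneg) h tendsto_one_div_add_atTop_nhds_zero_nat)

private lemma mapClusterPt_of_subseq {α : Type*} [TopologicalSpace α] {u : ℕ → α} {c : α}
    {n : ℕ → ℕ} (hn : StrictMono n) (h : Tendsto (u ∘ n) atTop (𝓝 c)) :
    MapClusterPt c atTop u := by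
  have h1 : map (u ∘ n) atTop ≤ map u atTop := by
    rw [← Filter.map_map]
    exact Filter.map_mono hn.tendsto_atTop
  have h2 : map (u ∘ n) atTop ≤ 𝓝 c := h
  have : (𝓝 c ⊓ map u atTop).NeBot := Filter.neBot_of_le (le_inf h2 h1)
  exact this

private lemma cluster_visits {α : Type*} [PseudoMetricSpace α] {u : ℕ → α} {c : α}
    (h : MapClusterPt c atTop u) (δ : ℝ) (hδ : 0 < δ) (N : ℕ) :
    ∃ n, N ≤ n ∧ dist (u n) c < δ := by
  have hfreq : ∃ᶠ n in atTop, u n ∈ Metric.ball c δ :=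
    (mapClusterPt_iff_frequently.1 h) _ (Metric.ball_mem_nhds c hδ)
  obtain ⟨n, hn, hb⟩ := (Filter.frequently_atTop.1 hfreq) N
  exact ⟨n, hn, by simpa [Metric.mem_ball] using hb⟩

private lemma cluster_subseq {α : Type*} [PseudoMetricSpace α] {u : ℕ → α} {c : α}
    (h : MapClusterPt c atTop u) :
    ∃ n : ℕ → ℕ, StrictMono n ∧ Tendsto (u ∘ n) atTop (𝓝 c) := by
  have H : ∀ (k N : ℕ), ∃ n, N ≤ n ∧ dist (u n) c < 1 / ((k : ℝ) + 1) := by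
    intro k N
    exact cluster_visits h _ (by positivity) N
  choose g hg1 hg2 using H
  let n : ℕ → ℕ := fun k => Nat.rec (g 0 0) (fun k ih => g (k + 1) (ih + 1)) k
  have hstep : ∀ k, n (k + 1) = g (k + 1) (n k + 1) := fun k => rfl
  have hmono : StrictMono n := by
    apply strictMono_nat_of_lt_succ
    intro k
    have := hg1 (k + 1) (n k + 1)
    rw [hstep]
    omega
  have hdist : ∀ k, dist (u (n k)) c ≤ 1 / ((k : ℝ) + 1) := by
    intro k
    cases k with
    | zero => exact (hg2 0 0).le
    | succ k => rw [hstep]; exact (hg2 (k + 1) (n k + 1)).le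
  exact ⟨n, hmono, tendsto_of_dist_le' _ _ hdist⟩

private lemma cluster_preimage {f : unitInterval → unitInterval} (hf : Continuous f)
    {y c : unitInterval} {u : ℕ → unitInterval} (hu : IsBackwardBranch f y u)
    (h : MapClusterPt c atTop u) : ∃ e, f e = c ∧ MapClusterPt e atTop u := by
  obtain ⟨n, hn, hten⟩ := cluster_subseq h
  obtain ⟨e, -, ψ, hψ, hψt⟩ :=
    isCompact_univ.tendsto_subseq (x := fun i => u (n i + 1)) (fun i => Set.mem_univ _)
  refine ⟨e, ?_, ?_⟩
  · have h1 : Tendsto (fun i => f (u (n (ψ i) + 1))) atTop (𝓝 (f e)) :=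
      ((hf.tendsto e).comp hψt)
    have h2 : Tendsto (fun i => u (n (ψ i))) atTop (𝓝 c) := hten.comp hψ.tendsto_atTop
    have h3 : (fun i => f (u (n (ψ i) + 1))) = fun i => u (n (ψ i)) := by
      funext i; exact hu.2 (n (ψ i))
    rw [h3] at h1
    exact tendsto_nhds_unique h1 h2
  · refine mapClusterPt_of_subseq (n := fun i => n (ψ i) + 1) ?_ hψt
    intro a b hab
    exact Nat.succ_lt_succ ((hn.comp hψ) hab)

private lemma proj_coe (t : unitInterval) :
    Set.projIcc (0:ℝ) 1 zero_le_one (t : ℝ) = t := by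
  rw [Set.projIcc_of_mem zero_le_one t.2]

private lemma abs_sub_le_of_mem_uIcc {t a b : ℝ} (h : t ∈ Set.uIcc a b) :
    |t - a| ≤ |b - a| := by
  rcases Set.mem_uIcc.1 h with ⟨h1, h2⟩ | ⟨h1, h2⟩ <;> rw [abs_le] <;> constructor <;>
    linarith [neg_le_abs (b - a), le_abs_self (b - a), abs_nonneg (b - a)]

/-- Master lemma: if `θ` is a point with `f^[M] θ = x`, lying strictly between
`p = f x` (a fixed point) and a limit `φ` of companion cluster points, where `θ` is itself a
limit of cluster points of branches of `y`, then `x ∈ sAlpha f y`. -/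
private lemma master {f : unitInterval → unitInterval} (hf : Continuous f)
    {y x p θ φ : unitInterval} (M : ℕ)
    (hfx : f x = p) (hfp : f p = p)
    (hθM : f^[M] θ = x)
    {U : ℕ → ℕ → unitInterval} (hU : ∀ k, IsBackwardBranch f y (U k))
    {θc φc : ℕ → unitInterval}
    (hθcl : ∀ k, MapClusterPt (θc k) atTop (U k))
    (hφcl : ∀ k, MapClusterPt (φc k) atTop (U k))
    (hθt : Tendsto θc atTop (𝓝 θ))
    (hφt : Tendsto φc atTop (𝓝 φ))
    (h1 : min (p:ℝ) (φ:ℝ) < (θ:ℝ)) (h2 : (θ:ℝ) < max (p:ℝ) (φ:ℝ)) :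
    x ∈ sAlpha f y := by
  have hpθ : (p:ℝ) ≠ (θ:ℝ) := by
    intro h
    rw [← h] at h1 h2
    rcases le_total (p:ℝ) (φ:ℝ) with hc | hc
    · rw [min_eq_left hc] at h1; exact absurd h1 (lt_irrefl _)
    · rw [max_eq_left hc] at h2; exact absurd h2 (lt_irrefl _)
  have hφθ : (φ:ℝ) ≠ (θ:ℝ) := by
    intro h
    rw [← h] at h1 h2
    rcases le_total (p:ℝ) (φ:ℝ) with hc | hc
    · rw [max_eq_right hc] at h2; exact absurd h2 (lt_irrefl _)
    · rw [min_eq_right hc] at h1; exact absurd h1 (lt_irrefl _)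
  set ε₀ : ℝ := min |(p:ℝ) - (θ:ℝ)| |(φ:ℝ) - (θ:ℝ)| with hε₀def
  have hε₀ : 0 < ε₀ := lt_min (abs_sub_pos.2 hpθ) (abs_sub_pos.2 hφθ)
  have hεp : ε₀ ≤ |(p:ℝ) - (θ:ℝ)| := min_le_left _ _
  have hεφ : ε₀ ≤ |(φ:ℝ) - (θ:ℝ)| := min_le_right _ _
  -- anchor values
  have hanch : ∀ g, M + 1 ≤ g → f^[g] θ = p := by
    intro g hg
    obtain ⟨r, rfl⟩ : ∃ r, g = r + (M + 1) := ⟨g - (M + 1), by omega⟩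
    rw [Function.iterate_add_apply]
    have hM1 : f^[M + 1] θ = p := by
      rw [Function.iterate_succ_apply', hθM, hfx]
    rw [hM1, Function.iterate_fixed hfp]
  -- the IVT step
  have step : ∀ (j : ℕ) (s : unitInterval) (d : ℕ), f^[d] s = y → dist s θ ≤ ε₀ / 2 →
      ∃ (s' : unitInterval) (g : ℕ), M + 1 ≤ g ∧ f^[g] s' = s ∧ f^[d + g] s' = y ∧
        dist s' θ ≤ ε₀ / 2 ∧ dist (f^[M] s') x ≤ 1 / ((j : ℝ) + 1) := by
    intro j s d hd hsθ
    obtain ⟨η, hη, hηs⟩ : ∃ η > 0,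
        ∀ t : unitInterval, dist t θ < η → dist (f^[M] t) x < 1 / ((j : ℝ) + 1) := by
      have hc : ContinuousAt (f^[M]) θ := (hf.iterate M).continuousAt
      rcases Metric.continuousAt_iff.1 hc (1 / ((j : ℝ) + 1)) (by positivity) with ⟨η, hη, h⟩
      exact ⟨η, hη, fun t ht => by have := h ht; rwa [hθM] at this⟩
    set γ : ℝ := min (ε₀ / 2) (η / 2) with hγdef
    have hγ : 0 < γ := lt_min (by linarith) (by linarith)
    obtain ⟨N1, hN1⟩ := Metric.tendsto_atTop.1 hθt (γ / 2) (by linarith)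
    obtain ⟨N2, hN2⟩ := Metric.tendsto_atTop.1 hφt (ε₀ / 4) (by linarith)
    set k := max N1 N2 with hkdef
    have hθk : dist (θc k) θ < γ / 2 := hN1 k (le_max_left _ _)
    have hφk : dist (φc k) φ < ε₀ / 4 := hN2 k (le_max_right _ _)
    obtain ⟨a, -, ha⟩ := cluster_visits (hφcl k) (ε₀ / 4) (by linarith) 0
    obtain ⟨b, hb1, hb2⟩ := cluster_visits (hθcl k) (γ / 2) (by linarith) (a + (M + 1))
    obtain ⟨g, rfl⟩ : ∃ g, b = a + g := ⟨b - a, by omega⟩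
    have hg : M + 1 ≤ g := by omega
    have hba : f^[g] (U k (a + g)) = U k a := branch_iter (hU k) a g
    set G : ℝ → ℝ :=
      fun t => ((f^[g] (Set.projIcc (0:ℝ) 1 zero_le_one t) : unitInterval) : ℝ) with hGdef
    have hGc : Continuous G :=
      continuous_subtype_val.comp ((hf.iterate g).comp continuous_projIcc)
    have hGθ : G ((θ : unitInterval) : ℝ) = (p:ℝ) := by
      rw [hGdef]; simp only [proj_coe, hanch g hg]
    have hGb : G ((U k (a + g) : unitInterval) : ℝ) = ((U k a : unitInterval) : ℝ) := by
      rw [hGdef]; simp only [proj_coe, hba]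
    -- distances as real absolute values
    have hs' : |(s:ℝ) - (θ:ℝ)| ≤ ε₀ / 2 := by
      rw [← Real.dist_eq, ← Subtype.dist_eq]; exact hsθ
    have hua : |((U k a : unitInterval) : ℝ) - (φ:ℝ)| ≤ ε₀ / 2 := by
      rw [← Real.dist_eq, ← Subtype.dist_eq]
      calc dist (U k a) φ ≤ dist (U k a) (φc k) + dist (φc k) φ := dist_triangle _ _ _
        _ ≤ ε₀ / 4 + ε₀ / 4 := by linarith
        _ = ε₀ / 2 := by ring
    have hsmem : (s:ℝ) ∈ Set.uIcc (G ((θ : unitInterval) : ℝ))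
        (G ((U k (a + g) : unitInterval) : ℝ)) := by
      rw [hGθ, hGb, Set.mem_uIcc]
      rcases lt_or_gt_of_ne hpθ with hpθ' | hpθ'
      · -- p < θ, so φ > θ
        have hφθ' : (θ:ℝ) < (φ:ℝ) := by
          rcases le_or_gt (φ:ℝ) (θ:ℝ) with hc | hc
          · exact absurd (max_le hpθ'.le hc) (not_le.2 h2)
          · exact hc
        have hp1 : (p:ℝ) ≤ (θ:ℝ) - ε₀ := by
          rw [abs_of_neg (by linarith : (p:ℝ) - (θ:ℝ) < 0)] at hεp; linarith
        have hφ1 : (θ:ℝ) + ε₀ ≤ (φ:ℝ) := by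
          rw [abs_of_pos (by linarith : (0:ℝ) < (φ:ℝ) - (θ:ℝ))] at hεφ; linarith
        left
        constructor
        · have := (abs_le.1 hs').1; linarith
        · have h1' := (abs_le.1 hs').2
          have h2' := (abs_le.1 hua).1
          linarith
      · -- θ < p, so φ < θ
        have hφθ' : (φ:ℝ) < (θ:ℝ) := by
          rcases le_or_gt (θ:ℝ) (φ:ℝ) with hc | hc
          · exact absurd (le_min hpθ'.le hc) (not_le.2 h1)
          · exact hc
        have hp1 : (θ:ℝ) + ε₀ ≤ (p:ℝ) := by
          rw [abs_of_pos (by linarith : (0:ℝ) < (p:ℝ) - (θ:ℝ))] at hεp; linarith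
        have hφ1 : (φ:ℝ) ≤ (θ:ℝ) - ε₀ := by
          rw [abs_of_neg (by linarith : (φ:ℝ) - (θ:ℝ) < 0)] at hεφ; linarith
        right
        constructor
        · have h1' := (abs_le.1 hs').1
          have h2' := (abs_le.1 hua).2
          linarith
        · have := (abs_le.1 hs').2; linarith
    obtain ⟨t, htmem, htG⟩ := intermediate_value_uIcc hGc.continuousOn hsmem
    have ht01 : t ∈ Set.Icc (0:ℝ) 1 := by
      have hθ0 : (0:ℝ) ≤ ((θ : unitInterval) : ℝ) := θ.2.1
      have hθ1 : ((θ : unitInterval) : ℝ) ≤ 1 := θ.2.2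
      have hU0 : (0:ℝ) ≤ ((U k (a + g) : unitInterval) : ℝ) := (U k (a + g)).2.1
      have hU1 : ((U k (a + g) : unitInterval) : ℝ) ≤ 1 := (U k (a + g)).2.2
      rw [Set.mem_Icc]
      rcases Set.mem_uIcc.1 htmem with ⟨hl, hr⟩ | ⟨hl, hr⟩ <;> exact ⟨by linarith, by linarith⟩
    set s' : unitInterval := ⟨t, ht01⟩ with hs'def
    have hproj : Set.projIcc (0:ℝ) 1 zero_le_one t = s' := Set.projIcc_of_mem _ ht01
    have hgs' : f^[g] s' = s := by
      have h0 : G t = (s:ℝ) := htG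
      rw [hGdef] at h0
      simp only [hproj] at h0
      exact Subtype.coe_injective h0
    have hs'θ : dist s' θ ≤ γ := by
      have h1' : |t - (θ:ℝ)| ≤ |((U k (a + g) : unitInterval) : ℝ) - (θ:ℝ)| :=
        abs_sub_le_of_mem_uIcc htmem
      have h2' : |((U k (a + g) : unitInterval) : ℝ) - (θ:ℝ)| < γ := by
        rw [← Real.dist_eq, ← Subtype.dist_eq]
        calc dist (U k (a + g)) θ ≤ dist (U k (a + g)) (θc k) + dist (θc k) θ :=
          dist_triangle _ _ _
          _ < γ / 2 + γ / 2 := by linarith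
          _ = γ := by ring
      rw [Subtype.dist_eq, Real.dist_eq]
      exact le_of_lt (lt_of_le_of_lt h1' h2')
    refine ⟨s', g, hg, hgs', ?_, le_trans hs'θ (min_le_left _ _), ?_⟩
    · rw [Function.iterate_add_apply, hgs', hd]
    · have : dist s' θ < η := lt_of_le_of_lt hs'θ (lt_of_le_of_lt (min_le_right _ _) (by linarith))
      exact (hηs s' this).le
  -- initial node
  obtain ⟨N0, hN0⟩ := Metric.tendsto_atTop.1 hθt (ε₀ / 4) (by linarith)
  obtain ⟨b0, -, hb0⟩ := cluster_visits (hθcl N0) (ε₀ / 4) (by linarith) 0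
  have hs0 : f^[b0] (U N0 b0) = y := branch_node (hU N0) b0
  have hs0θ : dist (U N0 b0) θ ≤ ε₀ / 2 := by
    calc dist (U N0 b0) θ ≤ dist (U N0 b0) (θc N0) + dist (θc N0) θ := dist_triangle _ _ _
      _ ≤ ε₀ / 4 + ε₀ / 4 := by
        have := hN0 N0 le_rfl
        linarith
      _ = ε₀ / 2 := by ring
  -- choice functions
  have step' : ∀ (j : ℕ) (s : unitInterval) (d : ℕ), ∃ (s' : unitInterval) (g : ℕ),
      f^[d] s = y → dist s θ ≤ ε₀ / 2 →
        (M + 1 ≤ g ∧ f^[g] s' = s ∧ f^[d + g] s' = y ∧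
          dist s' θ ≤ ε₀ / 2 ∧ dist (f^[M] s') x ≤ 1 / ((j : ℝ) + 1)) := by
    intro j s d
    by_cases h : f^[d] s = y ∧ dist s θ ≤ ε₀ / 2
    · obtain ⟨s', g, hh1, hh2, hh3, hh4, hh5⟩ := step j s d h.1 h.2
      exact ⟨s', g, fun _ _ => ⟨hh1, hh2, hh3, hh4, hh5⟩⟩
    · exact ⟨s, M + 1, fun hy hθ' => absurd ⟨hy, hθ'⟩ h⟩
  choose Fs Fg hF using step'
  -- the recursive sequence of nodes
  set P : ℕ → unitInterval × ℕ :=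
    fun j => Nat.rec (U N0 b0, b0) (fun j q => (Fs j q.1 q.2, q.2 + Fg j q.1 q.2)) j with hPdef
  set s_ : ℕ → unitInterval := fun j => (P j).1 with hs_def
  set d_ : ℕ → ℕ := fun j => (P j).2 with hd_def
  have hPsucc : ∀ j, s_ (j + 1) = Fs j (s_ j) (d_ j) ∧ d_ (j + 1) = d_ j + Fg j (s_ j) (d_ j) :=
    fun j => ⟨rfl, rfl⟩
  have inv : ∀ j, f^[d_ j] (s_ j) = y ∧ dist (s_ j) θ ≤ ε₀ / 2 := by
    intro j
    induction j with
    | zero => exact ⟨hs0, hs0θ⟩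
    | succ j ih =>
      have h := hF j (s_ j) (d_ j) ih.1 ih.2
      rw [(hPsucc j).1, (hPsucc j).2]
      exact ⟨h.2.2.1, h.2.2.2.1⟩
  have link : ∀ j, M + 1 ≤ Fg j (s_ j) (d_ j) ∧
      f^[Fg j (s_ j) (d_ j)] (s_ (j + 1)) = s_ j ∧
      dist (f^[M] (s_ (j + 1))) x ≤ 1 / ((j : ℝ) + 1) := by
    intro j
    have h := hF j (s_ j) (d_ j) (inv j).1 (inv j).2
    refine ⟨h.1, ?_, ?_⟩
    · rw [(hPsucc j).1]; exact h.2.1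
    · rw [(hPsucc j).1]; exact h.2.2.2.2
  have hd_succ : ∀ j, d_ j + (M + 1) ≤ d_ (j + 1) := by
    intro j
    rw [(hPsucc j).2]
    have := (link j).1
    omega
  have hd_le : ∀ i k, d_ i ≤ d_ (i + k) := by
    intro i k
    induction k with
    | zero => simp
    | succ k ih =>
      have h2' : i + (k + 1) = (i + k) + 1 := rfl
      rw [h2']
      have := hd_succ (i + k)
      omega
  have hd_ge : ∀ j, j ≤ d_ j := by
    intro j
    induction j with
    | zero => omega
    | succ j ih =>
      have := hd_succ j
      omega
  have chain : ∀ i k, f^[d_ (i + k) - d_ i] (s_ (i + k)) = s_ i := by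
    intro i k
    induction k with
    | zero => simp
    | succ k ih =>
      have hgk := (link (i + k)).2.1
      have hdd : d_ (i + k + 1) = d_ (i + k) + Fg (i + k) (s_ (i + k)) (d_ (i + k)) :=
        (hPsucc (i + k)).2
      have hle : d_ i ≤ d_ (i + k) := hd_le i k
      have harith : d_ (i + k + 1) - d_ i =
          (d_ (i + k) - d_ i) + Fg (i + k) (s_ (i + k)) (d_ (i + k)) := by omega
      rw [show i + (k + 1) = (i + k) + 1 from rfl, harith, Function.iterate_add_apply, hgk, ih]
  -- assemble the branch
  have hex : ∀ n : ℕ, ∃ j, n ≤ d_ j := fun n => ⟨n, hd_ge n⟩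
  set Jn : ℕ → ℕ := fun n => Nat.find (hex n) with hJndef
  set uS : ℕ → unitInterval := fun n => f^[d_ (Jn n) - n] (s_ (Jn n)) with huSdef
  have L2 : ∀ j n, n ≤ d_ j → f^[d_ j - n] (s_ j) = uS n := by
    intro j n hn
    have hJ : Jn n ≤ j := Nat.find_min' (hex n) hn
    obtain ⟨k, rfl⟩ : ∃ k, j = Jn n + k := ⟨j - Jn n, by omega⟩
    have hfind : n ≤ d_ (Jn n) := Nat.find_spec (hex n)
    have hle : d_ (Jn n) ≤ d_ (Jn n + k) := hd_le _ _
    have harith : d_ (Jn n + k) - n = (d_ (Jn n) - n) + (d_ (Jn n + k) - d_ (Jn n)) := by omega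
    rw [harith, Function.iterate_add_apply, chain]
  have hbranch : IsBackwardBranch f y uS := by
    constructor
    · have h0 : f^[d_ (Jn 0) - 0] (s_ (Jn 0)) = uS 0 := rfl
      rw [← h0, Nat.sub_zero]
      exact (inv (Jn 0)).1
    · intro n
      have hn1 : n + 1 ≤ d_ (Jn (n + 1)) := Nat.find_spec (hex (n + 1))
      have e1 : uS (n + 1) = f^[d_ (Jn (n + 1)) - (n + 1)] (s_ (Jn (n + 1))) := rfl
      have harith : (d_ (Jn (n + 1)) - (n + 1)) + 1 = d_ (Jn (n + 1)) - n := by omega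
      calc f (uS (n + 1)) = f (f^[d_ (Jn (n + 1)) - (n + 1)] (s_ (Jn (n + 1)))) := by rw [e1]
        _ = f^[(d_ (Jn (n + 1)) - (n + 1)) + 1] (s_ (Jn (n + 1))) :=
          (Function.iterate_succ_apply' f _ _).symm
        _ = f^[d_ (Jn (n + 1)) - n] (s_ (Jn (n + 1))) := by rw [harith]
        _ = uS n := L2 (Jn (n + 1)) n (by omega)
  -- visit times
  set t_ : ℕ → ℕ := fun j => d_ (j + 1) - M with ht_def
  have ht_eq : ∀ j, t_ j = d_ (j + 1) - M := fun _ => rfl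
  have hMle : ∀ j, M + 1 ≤ d_ (j + 1) := by
    intro j
    have := hd_succ j
    omega
  have htval : ∀ j, uS (t_ j) = f^[M] (s_ (j + 1)) := by
    intro j
    have h := L2 (j + 1) (t_ j) (by have := hMle j; have := ht_eq j; omega)
    have harith : d_ (j + 1) - t_ j = M := by have := hMle j; have := ht_eq j; omega
    rw [harith] at h
    exact h.symm
  have htmono : StrictMono t_ := by
    apply strictMono_nat_of_lt_succ
    intro j
    have h1' := hd_succ (j + 1)
    have h2' := hMle j
    have := ht_eq j
    have := ht_eq (j + 1)
    omega
  have htge : ∀ j, j + 1 ≤ t_ j := by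
    intro j
    have h1' := hd_ge j
    have h2' := hd_succ j
    have := ht_eq j
    omega
  have hdist : ∀ j, dist (uS (t_ j)) x ≤ 1 / ((j : ℝ) + 1) := by
    intro j
    rw [htval j]
    exact (link j).2.2
  have hclx : MapClusterPt x atTop uS :=
    mapClusterPt_of_subseq htmono (tendsto_of_dist_le' _ _ (fun j => hdist j))
  exact ⟨uS, hbranch, hclx⟩

theorem stmt8 (f : unitInterval → unitInterval) (hf : Continuous f)
    (x y : unitInterval) (hx1 : x ≠ f x) (hx2 : f (f x) = f x)
    (hcl : x ∈ closure (sAlpha f y)) :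
    x ∈ sAlpha f y := by
  classical
  set p : unitInterval := f x with hpdef
  have hfx : f x = p := rfl
  have hfp : f p = p := hx2
  have hxp : x ≠ p := hx1
  -- sequence in sAlpha converging to x
  have hz : ∀ k : ℕ, ∃ z, z ∈ sAlpha f y ∧ dist x z < 1 / ((k : ℝ) + 1) := by
    intro k
    exact Metric.mem_closure_iff.1 hcl _ (by positivity)
  choose z hz1 hz2 using hz
  obtain hbr : ∀ k, ∃ u : ℕ → unitInterval, IsBackwardBranch f y u ∧ MapClusterPt (z k) atTop u :=
    fun k => hz1 k
  choose U hU hUz using hbr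
  have hzt : Tendsto z atTop (𝓝 x) := by
    apply tendsto_of_dist_le'
    intro n
    rw [dist_comm]
    exact (hz2 n).le
  -- first preimages
  have he : ∀ k, ∃ e, f e = z k ∧ MapClusterPt e atTop (U k) :=
    fun k => cluster_preimage hf (hU k) (hUz k)
  choose e he1 he2 using he
  obtain ⟨w₁, -, ψ₁, hψ₁, hw1t⟩ := isCompact_univ.tendsto_subseq (x := e) (fun k => Set.mem_univ _)
  -- reindex by ψ₁
  set U1 : ℕ → ℕ → unitInterval := fun k => U (ψ₁ k) with hU1def
  set z1 : ℕ → unitInterval := fun k => z (ψ₁ k) with hz1def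
  set e1 : ℕ → unitInterval := fun k => e (ψ₁ k) with he1def
  have hU1 : ∀ k, IsBackwardBranch f y (U1 k) := fun k => hU (ψ₁ k)
  have hU1z : ∀ k, MapClusterPt (z1 k) atTop (U1 k) := fun k => hUz (ψ₁ k)
  have hU1e : ∀ k, MapClusterPt (e1 k) atTop (U1 k) := fun k => he2 (ψ₁ k)
  have hz1t : Tendsto z1 atTop (𝓝 x) := hzt.comp hψ₁.tendsto_atTop
  have he1t : Tendsto e1 atTop (𝓝 w₁) := hw1t
  have hfe1 : ∀ k, f (e1 k) = z1 k := fun k => he1 (ψ₁ k)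
  have hw1 : f w₁ = x := by
    have h1 : Tendsto (fun k => f (e1 k)) atTop (𝓝 (f w₁)) := (hf.tendsto w₁).comp he1t
    have h2 : Tendsto (fun k => f (e1 k)) atTop (𝓝 x) := by
      have : (fun k => f (e1 k)) = z1 := by funext k; exact hfe1 k
      rw [this]; exact hz1t
    exact tendsto_nhds_unique h1 h2
  -- second preimages
  have he' : ∀ k, ∃ e', f e' = e1 k ∧ MapClusterPt e' atTop (U1 k) :=
    fun k => cluster_preimage hf (hU1 k) (hU1e k)
  choose e' he'1 he'2 using he'
  obtain ⟨w₂, -, ψ₂, hψ₂, hw2t⟩ := isCompact_univ.tendsto_subseq (x := e') (fun k => Set.mem_univ _)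
  set U2 : ℕ → ℕ → unitInterval := fun k => U1 (ψ₂ k) with hU2def
  set z2 : ℕ → unitInterval := fun k => z1 (ψ₂ k) with hz2def
  set e2 : ℕ → unitInterval := fun k => e1 (ψ₂ k) with he2def
  set e2' : ℕ → unitInterval := fun k => e' (ψ₂ k) with he2'def
  have hU2 : ∀ k, IsBackwardBranch f y (U2 k) := fun k => hU1 (ψ₂ k)
  have hU2z : ∀ k, MapClusterPt (z2 k) atTop (U2 k) := fun k => hU1z (ψ₂ k)
  have hU2e : ∀ k, MapClusterPt (e2 k) atTop (U2 k) := fun k => hU1e (ψ₂ k)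
  have hU2e' : ∀ k, MapClusterPt (e2' k) atTop (U2 k) := fun k => he'2 (ψ₂ k)
  have hz2t : Tendsto z2 atTop (𝓝 x) := hz1t.comp hψ₂.tendsto_atTop
  have he2t : Tendsto e2 atTop (𝓝 w₁) := he1t.comp hψ₂.tendsto_atTop
  have he2't : Tendsto e2' atTop (𝓝 w₂) := hw2t
  have hfe2' : ∀ k, f (e2' k) = e2 k := fun k => he'1 (ψ₂ k)
  have hw2 : f w₂ = w₁ := by
    have h1 : Tendsto (fun k => f (e2' k)) atTop (𝓝 (f w₂)) := (hf.tendsto w₂).comp he2't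
    have h2 : Tendsto (fun k => f (e2' k)) atTop (𝓝 w₁) := by
      have : (fun k => f (e2' k)) = e2 := by funext k; exact hfe2' k
      rw [this]; exact he2t
    exact tendsto_nhds_unique h1 h2
  -- point distinctions
  have hw1x : w₁ ≠ x := by
    intro h
    exact hxp (by rw [← hw1, h])
  have hw1p : w₁ ≠ p := by
    intro h
    exact hxp (by rw [← hw1, h]; exact hfp)
  have hw2x : w₂ ≠ x := by
    intro h
    exact hw1p (by rw [← hw2, h])
  have hw2p : w₂ ≠ p := by
    intro h
    exact hw1p (by rw [← hw2, h]; exact hfp)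
  have hw12 : w₁ ≠ w₂ := by
    intro h
    have hx1' : x = w₁ := by rw [← hw2, ← h, hw1]
    exact hw1x hx1'.symm
  -- anchor iterates
  have hθM1 : f^[1] w₁ = x := by rw [Function.iterate_one]; exact hw1
  have hθM2 : f^[2] w₂ = x := by
    have h2 : f^[2] w₂ = f (f^[1] w₂) := Function.iterate_succ_apply' f 1 w₂
    rw [h2, Function.iterate_one, hw2]
    exact hw1
  have hθM0 : f^[0] x = x := rfl
  -- coercion inequalities
  have hxp' : ((x : unitInterval) : ℝ) ≠ ((p : unitInterval) : ℝ) :=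
    fun h => hxp (Subtype.coe_injective h)
  -- the case tree
  rcases lt_or_gt_of_ne hxp' with hxp1 | hxp1
  · -- x < p
    rcases lt_trichotomy ((w₁ : unitInterval) : ℝ) ((x : unitInterval) : ℝ) with hA | hA | hA
    · -- w₁ < x : θ = x, φ = w₁
      exact master hf 0 hfx hfp hθM0 hU2 hU2z hU2e hz2t he2t
        (min_lt_iff.2 (Or.inr hA)) (lt_max_iff.2 (Or.inl hxp1))
    · exact absurd (Subtype.coe_injective hA) hw1x
    · rcases lt_trichotomy ((w₁ : unitInterval) : ℝ) ((p : unitInterval) : ℝ) with hA2 | hA2 | hA2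
      · -- x < w₁ < p : θ = w₁, φ = x
        exact master hf 1 hfx hfp hθM1 hU2 hU2e hU2z he2t hz2t
          (min_lt_iff.2 (Or.inr hA)) (lt_max_iff.2 (Or.inl hA2))
      · exact absurd (Subtype.coe_injective hA2) hw1p
      · rcases lt_trichotomy ((w₂ : unitInterval) : ℝ) ((x : unitInterval) : ℝ) with hB | hB | hB
        · -- w₂ < x : θ = x, φ = w₂
          exact master hf 0 hfx hfp hθM0 hU2 hU2z hU2e' hz2t he2't
            (min_lt_iff.2 (Or.inr hB)) (lt_max_iff.2 (Or.inl hxp1))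
        · exact absurd (Subtype.coe_injective hB) hw2x
        · rcases lt_trichotomy ((w₂ : unitInterval) : ℝ) ((p : unitInterval) : ℝ) with hB2 | hB2 | hB2
          · -- x < w₂ < p : θ = w₂, φ = x
            exact master hf 2 hfx hfp hθM2 hU2 hU2e' hU2z he2't hz2t
              (min_lt_iff.2 (Or.inr hB)) (lt_max_iff.2 (Or.inl hB2))
          · exact absurd (Subtype.coe_injective hB2) hw2p
          · rcases lt_trichotomy ((w₂ : unitInterval) : ℝ) ((w₁ : unitInterval) : ℝ)
              with hBA | hBA | hBA
            · -- p < w₂ < w₁ : θ = w₂, φ = w₁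
              exact master hf 2 hfx hfp hθM2 hU2 hU2e' hU2e he2't he2t
                (min_lt_iff.2 (Or.inl hB2)) (lt_max_iff.2 (Or.inr hBA))
            · exact absurd (Subtype.coe_injective hBA).symm hw12
            · -- p < w₁ < w₂ : θ = w₁, φ = w₂
              exact master hf 1 hfx hfp hθM1 hU2 hU2e hU2e' he2t he2't
                (min_lt_iff.2 (Or.inl hA2)) (lt_max_iff.2 (Or.inr hBA))
  · -- p < x
    rcases lt_trichotomy ((x : unitInterval) : ℝ) ((w₁ : unitInterval) : ℝ) with hA | hA | hA
    · -- x < w₁ : θ = x, φ = w₁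
      exact master hf 0 hfx hfp hθM0 hU2 hU2z hU2e hz2t he2t
        (min_lt_iff.2 (Or.inl hxp1)) (lt_max_iff.2 (Or.inr hA))
    · exact absurd (Subtype.coe_injective hA).symm hw1x
    · rcases lt_trichotomy ((p : unitInterval) : ℝ) ((w₁ : unitInterval) : ℝ) with hA2 | hA2 | hA2
      · -- p < w₁ < x : θ = w₁, φ = x
        exact master hf 1 hfx hfp hθM1 hU2 hU2e hU2z he2t hz2t
          (min_lt_iff.2 (Or.inl hA2)) (lt_max_iff.2 (Or.inr hA))
      · exact absurd (Subtype.coe_injective hA2).symm hw1p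
      · rcases lt_trichotomy ((x : unitInterval) : ℝ) ((w₂ : unitInterval) : ℝ) with hB | hB | hB
        · -- x < w₂ : θ = x, φ = w₂
          exact master hf 0 hfx hfp hθM0 hU2 hU2z hU2e' hz2t he2't
            (min_lt_iff.2 (Or.inl hxp1)) (lt_max_iff.2 (Or.inr hB))
        · exact absurd (Subtype.coe_injective hB).symm hw2x
        · rcases lt_trichotomy ((p : unitInterval) : ℝ) ((w₂ : unitInterval) : ℝ) with hB2 | hB2 | hB2
          · -- p < w₂ < x : θ = w₂, φ = x
            exact master hf 2 hfx hfp hθM2 hU2 hU2e' hU2z he2't hz2t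
              (min_lt_iff.2 (Or.inl hB2)) (lt_max_iff.2 (Or.inr hB))
          · exact absurd (Subtype.coe_injective hB2).symm hw2p
          · rcases lt_trichotomy ((w₁ : unitInterval) : ℝ) ((w₂ : unitInterval) : ℝ)
              with hBA | hBA | hBA
            · -- w₁ < w₂ < p : θ = w₂, φ = w₁
              exact master hf 2 hfx hfp hθM2 hU2 hU2e' hU2e he2't he2t
                (min_lt_iff.2 (Or.inr hBA)) (lt_max_iff.2 (Or.inl hB2))
            · exact absurd (Subtype.coe_injective hBA) hw12
            · -- w₂ < w₁ < p : θ = w₁, φ = w₂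
              exact master hf 1 hfx hfp hθM1 hU2 hU2e hU2e' he2t he2't
                (min_lt_iff.2 (Or.inr hBA)) (lt_max_iff.2 (Or.inl hA2))
end

section
/- Let f : [0,1] → [0,1] be continuous and let P be a periodic orbit of f. If the α-limit set α(y) of a point y intersects P, then sα(y) ⊇ P. -/
open Filter Topology Set

section Helpers

/-- Reflection conjugation of iterates. -/
private lemma refl_iterate (g : ℝ → ℝ) (c : ℝ) (m : ℕ) (x : ℝ) :
    (fun t => 2*c - g (2*c - t))^[m] x = 2*c - g^[m] (2*c - x) := by
  induction m generalizing x with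
  | zero => simp
  | succ n ih =>
    rw [Function.iterate_succ_apply, ih, Function.iterate_succ_apply]
    norm_num

/-- Lemma A: preimage points approaching `c` from the same side as `y` (below, `y < c`). -/
private lemma lemA {g : ℝ → ℝ} (hg : Continuous g) {c y : ℝ} (hc : g c = c) (hyc : y < c)
    (hW : ∀ ε > (0:ℝ), ∃ a w, 1 ≤ a ∧ w ∈ Icc (c - ε) c ∧ g^[a] w = y) :
    ∀ ε > (0:ℝ), ∀ v ∈ Icc y c, ∃ m z, 1 ≤ m ∧ z ∈ Icc y c ∧ |z - c| ≤ ε ∧ g^[m] z = v := by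
  intro ε hε v hv
  obtain ⟨a, w, ha, hw, hgw⟩ := hW (min ε (c - y)) (lt_min hε (by linarith))
  have hwy : y ≤ w := by
    have := min_le_right ε (c - y); have := hw.1; linarith
  have hwc : w < c := by
    rcases lt_or_eq_of_le hw.2 with h | h
    · exact h
    · exfalso; rw [h, Function.iterate_fixed hc] at hgw; linarith
  obtain ⟨a', w', ha', hw', hgw'⟩ := hW (c - w) (by linarith)
  have hw'mem : w' ∈ Icc w c := ⟨by have := hw'.1; linarith, hw'.2⟩
  have hpre : IsPreconnected (g^[a'] '' Icc w c) :=
    isPreconnected_Icc.image _ ((hg.iterate a').continuousOn)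
  have hyS : y ∈ g^[a'] '' Icc w c := ⟨w', hw'mem, hgw'⟩
  have hcS : c ∈ g^[a'] '' Icc w c :=
    ⟨c, ⟨hwc.le, le_refl c⟩, Function.iterate_fixed hc a'⟩
  obtain ⟨z, hz, hgz⟩ := hpre.Icc_subset hyS hcS hv
  refine ⟨a', z, ha', ⟨le_trans hwy hz.1, hz.2⟩, ?_, hgz⟩
  rw [abs_sub_comm, abs_of_nonneg (by linarith [hz.2] : (0:ℝ) ≤ c - z)]
  have h1 : c - min ε (c - y) ≤ w := hw.1
  have := min_le_left ε (c - y)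
  linarith [hz.1]


private lemma lemBa {g : ℝ → ℝ} (hg : Continuous g) {c y H : ℝ} (hc : g c = c) (hyc : y < c)
    (hH : c < H)
    (hWup : ∀ ε > (0:ℝ), ∃ a w, 1 ≤ a ∧ w ∈ Icc c (c + ε) ∧ g^[a] w = y)
    (hcov : ∀ ε > (0:ℝ), ∃ m z, 1 ≤ m ∧ z ∈ Icc c (c + ε) ∧ H ≤ g^[m] z) :
    ∀ ε > (0:ℝ), ∀ v ∈ Icc y H, ∃ m z, 1 ≤ m ∧ z ∈ Icc y H ∧ |z - c| ≤ ε ∧ g^[m] z = v := by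
  intro ε hε v hv
  have hε' : (0:ℝ) < min ε (H - c) := lt_min hε (by linarith)
  rcases le_or_gt v c with hvc | hvc
  · obtain ⟨a, w, ha, hw, hgw⟩ := hWup _ hε'
    have hcw : c ≤ w := hw.1
    have hpre : IsPreconnected (g^[a] '' Icc c w) :=
      isPreconnected_Icc.image _ ((hg.iterate a).continuousOn)
    have hyS : y ∈ g^[a] '' Icc c w := ⟨w, ⟨hcw, le_refl w⟩, hgw⟩
    have hcS : c ∈ g^[a] '' Icc c w := ⟨c, ⟨le_refl c, hcw⟩, Function.iterate_fixed hc a⟩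
    obtain ⟨z, hz, hgz⟩ := hpre.Icc_subset hyS hcS ⟨hv.1, hvc⟩
    have hwb : w ≤ c + min ε (H - c) := hw.2
    have h1 := min_le_left ε (H - c)
    have h2 := min_le_right ε (H - c)
    refine ⟨a, z, ha, ⟨by linarith [hz.1], by linarith [hz.2]⟩, ?_, hgz⟩
    rw [abs_le]
    constructor <;> [skip; skip] <;> nlinarith [hz.1, hz.2, hv.1]
  · obtain ⟨m, z₀, hm, hz₀, hX⟩ := hcov _ hε'
    have hpre : IsPreconnected (g^[m] '' Icc c z₀) :=
      isPreconnected_Icc.image _ ((hg.iterate m).continuousOn)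
    have hcS : c ∈ g^[m] '' Icc c z₀ := ⟨c, ⟨le_refl c, hz₀.1⟩, Function.iterate_fixed hc m⟩
    have hXS : g^[m] z₀ ∈ g^[m] '' Icc c z₀ := ⟨z₀, ⟨hz₀.1, le_refl z₀⟩, rfl⟩
    have hsub : Icc c (g^[m] z₀) ⊆ g^[m] '' Icc c z₀ := hpre.Icc_subset hcS hXS
    obtain ⟨z, hz, hgz⟩ := hsub ⟨hvc.le, le_trans hv.2 hX⟩
    have h1 := min_le_left ε (H - c)
    have h2 := min_le_right ε (H - c)
    have hz₀b : z₀ ≤ c + min ε (H - c) := hz₀.2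
    refine ⟨m, z, hm, ⟨by linarith [hz.1], by linarith [hz.2]⟩, ?_, hgz⟩
    rw [abs_le]
    constructor <;> nlinarith [hz.1, hz.2]

private lemma lemC {g : ℝ → ℝ} (hg : Continuous g) {c y : ℝ} (hc : g c = c) (hyc : y < c)
    (hWup : ∀ ε > (0:ℝ), ∃ a w, 1 ≤ a ∧ w ∈ Icc c (c + ε) ∧ g^[a] w = y)
    (hb : ∀ H, c < H → ∃ ε₀ > (0:ℝ), ∀ m z, 1 ≤ m → z ∈ Icc c (c + ε₀) → g^[m] z < H) :
    ∀ ε > (0:ℝ), ∃ a w, 1 ≤ a ∧ w ∈ Icc (c - ε) c ∧ g^[a] w = y := by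
  intro ε hε
  set ε₃ := min ε ((c - y)/2) with hε₃def
  have hε₃ : 0 < ε₃ := lt_min hε (by linarith)
  have hε₃y : y < c - ε₃ := by
    have := min_le_right ε ((c - y)/2); simp only [hε₃def]; linarith
  have hε₃ε : ε₃ ≤ ε := min_le_left _ _
  -- continuity of g at c
  obtain ⟨δ₀, hδ₀, hcont⟩ := Metric.continuousAt_iff.1 hg.continuousAt ε₃ hε₃
  set δ := min (δ₀/2) ε₃ with hδdef
  have hδ : 0 < δ := lt_min (by linarith) hε₃
  have hδε₃ : δ ≤ ε₃ := min_le_right _ _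
  have hδsmall : ∀ x, |x - c| ≤ δ → |g x - c| < ε₃ := by
    intro x hx
    have : dist x c < δ₀ := by
      rw [Real.dist_eq]
      have := min_le_left (δ₀/2) ε₃
      calc |x - c| ≤ δ := hx
        _ ≤ δ₀/2 := this
        _ < δ₀ := by linarith
    have := hcont this
    rwa [Real.dist_eq, hc] at this
  obtain ⟨ε₀, hε₀, hbound⟩ := hb (c + δ) (by linarith)
  obtain ⟨a, w, ha, hw, hgw⟩ := hWup (min ε₀ δ) (lt_min hε₀ hδ)
  have hwc : c < w := by
    rcases eq_or_lt_of_le hw.1 with h | h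
    · exfalso; rw [← h, Function.iterate_fixed hc] at hgw; linarith
    · exact h
  have hwub₀ : w ≤ c + ε₀ := by have := min_le_left ε₀ δ; linarith [hw.2]
  have hwubδ : w ≤ c + δ := by have := min_le_right ε₀ δ; linarith [hw.2]
  set x : ℕ → ℝ := fun t => g^[t] w with hxdef
  have h1 : ∀ t, 1 ≤ t → x t < c + δ := fun t ht =>
    hbound t w ht ⟨hwc.le, hwub₀⟩
  classical
  set A : Finset ℕ := (Finset.range (a+1)).filter (fun t => c - δ ≤ x t) with hAdef
  have hA0 : 0 ∈ A := by
    simp only [hAdef, Finset.mem_filter, Finset.mem_range]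
    exact ⟨by omega, by simp only [hxdef, Function.iterate_zero_apply]; linarith⟩
  have hAne : A.Nonempty := ⟨0, hA0⟩
  set τ := A.max' hAne with hτdef
  have hτA : τ ∈ A := A.max'_mem hAne
  have hτa : τ ≤ a := by
    have := (Finset.mem_filter.1 hτA).1; rw [Finset.mem_range] at this; omega
  have hxτ : c - δ ≤ x τ := (Finset.mem_filter.1 hτA).2
  have hxa : x a = y := hgw
  have hana : a ∉ A := by
    simp only [hAdef, Finset.mem_filter, Finset.mem_range]
    intro h
    rw [hxa] at h
    linarith [h.2]
  have hτlt : τ < a := lt_of_le_of_ne hτa (fun h => hana (h ▸ hτA))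
  have hτ1 : τ + 1 ∉ A := fun h => absurd (A.le_max' _ h) (by omega)
  have hxτ1 : x (τ+1) < c - δ := by
    by_contra hcon
    push_neg at hcon
    exact hτ1 (by simp only [hAdef, Finset.mem_filter, Finset.mem_range]; exact ⟨by omega, hcon⟩)
  have hxτub : x τ ≤ c + δ := by
    rcases Nat.eq_zero_or_pos τ with h | h
    · rw [h]; simpa only [hxdef, Function.iterate_zero_apply] using hwubδ
    · exact (h1 τ h).le
  have habs : |x τ - c| ≤ δ := abs_le.2 ⟨by linarith, by linarith⟩
  have hnear : |x (τ+1) - c| < ε₃ := by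
    have := hδsmall (x τ) habs
    have hstep : x (τ+1) = g (x τ) := Function.iterate_succ_apply' g τ w
    rwa [← hstep] at this
  have hxlb : c - ε₃ < x (τ+1) := by
    have := (abs_lt.1 hnear).1; linarith
  refine ⟨a - (τ+1), x (τ+1), ?_, ⟨by linarith, by linarith⟩, ?_⟩
  · -- a - (τ+1) ≥ 1
    rcases Nat.lt_or_ge (a - (τ+1)) 1 with h | h
    · exfalso
      have : a = τ + 1 := by omega
      rw [← this, hxa] at hxlb
      linarith
    · exact h
  · show g^[a - (τ+1)] (g^[τ+1] w) = y
    rw [← Function.iterate_add_apply]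
    have : a - (τ+1) + (τ+1) = a := by omega
    rw [this]; exact hgw



private lemma coreH_lt {g : ℝ → ℝ} (hg : Continuous g) {c y : ℝ} (hc : g c = c) (hyc : y < c)
    (hyp : ∀ ε > (0:ℝ), ∃ a w, 1 ≤ a ∧ |w - c| ≤ ε ∧ g^[a] w = y) :
    ∃ K : Set ℝ, y ∈ K ∧ ∀ ε > (0:ℝ), ∀ v ∈ K,
      ∃ m z, 1 ≤ m ∧ z ∈ K ∧ |z - c| ≤ ε ∧ g^[m] z = v := by
  by_cases hWlow : ∀ ε > (0:ℝ), ∃ a w, 1 ≤ a ∧ w ∈ Icc (c - ε) c ∧ g^[a] w = y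
  · exact ⟨Icc y c, ⟨le_refl y, hyc.le⟩, lemA hg hc hyc hWlow⟩
  · push_neg at hWlow
    obtain ⟨ε₂, hε₂, hno⟩ := hWlow
    have hWup : ∀ ε > (0:ℝ), ∃ a w, 1 ≤ a ∧ w ∈ Icc c (c + ε) ∧ g^[a] w = y := by
      intro ε hε
      obtain ⟨a, w, ha, hw, hgw⟩ := hyp (min ε ε₂) (lt_min hε hε₂)
      rcases le_or_gt w c with h | h
      · exfalso
        have h1 := (abs_le.1 hw).1
        have h2 := min_le_right ε ε₂
        exact (hno a w ha ⟨by linarith, h⟩) hgw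
      · have h1 := (abs_le.1 hw).2
        have h2 := min_le_left ε ε₂
        exact ⟨a, w, ha, ⟨h.le, by linarith⟩, hgw⟩
    by_cases hcov : ∃ H, c < H ∧ ∀ ε > (0:ℝ), ∃ m z, 1 ≤ m ∧ z ∈ Icc c (c + ε) ∧ H ≤ g^[m] z
    · obtain ⟨H, hH, hcov⟩ := hcov
      exact ⟨Icc y H, ⟨le_refl y, by linarith⟩, lemBa hg hc hyc hH hWup hcov⟩
    · push_neg at hcov
      have hb : ∀ H, c < H → ∃ ε₀ > (0:ℝ), ∀ m z, 1 ≤ m → z ∈ Icc c (c + ε₀) → g^[m] z < H := by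
        intro H hH
        obtain ⟨ε₀, hε₀, hpro⟩ := hcov H hH
        exact ⟨ε₀, hε₀, fun m z hm hz => hpro m z hm hz⟩
      exact ⟨Icc y c, ⟨le_refl y, hyc.le⟩, lemA hg hc hyc (lemC hg hc hyc hWup hb)⟩

private lemma coreH {g : ℝ → ℝ} (hg : Continuous g) {c y : ℝ} (hc : g c = c)
    (hyp : ∀ ε > (0:ℝ), ∃ a w, 1 ≤ a ∧ |w - c| ≤ ε ∧ g^[a] w = y) :
    ∃ K : Set ℝ, y ∈ K ∧ ∀ ε > (0:ℝ), ∀ v ∈ K,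
      ∃ m z, 1 ≤ m ∧ z ∈ K ∧ |z - c| ≤ ε ∧ g^[m] z = v := by
  rcases lt_trichotomy y c with h | h | h
  · exact coreH_lt hg hc h hyp
  · subst h
    refine ⟨{y}, rfl, fun ε hε v hv => ⟨1, y, le_refl 1, hv ▸ rfl, by simpa using hε.le, ?_⟩⟩
    rw [mem_singleton_iff] at hv
    subst hv
    simpa using hc
  · -- reflect
    set gR : ℝ → ℝ := fun t => 2*c - g (2*c - t) with hgRdef
    have hgRcont : Continuous gR := by
      apply Continuous.sub continuous_const
      exact hg.comp (Continuous.sub continuous_const continuous_id)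
    have hgRc : gR c = c := by simp only [hgRdef]; rw [show 2*c - c = c by ring, hc]; ring
    have hyR : 2*c - y < c := by linarith
    have hypR : ∀ ε > (0:ℝ), ∃ a w, 1 ≤ a ∧ |w - c| ≤ ε ∧ gR^[a] w = 2*c - y := by
      intro ε hε
      obtain ⟨a, w, ha, hw, hgw⟩ := hyp ε hε
      refine ⟨a, 2*c - w, ha, ?_, ?_⟩
      · rw [show 2*c - w - c = -(w - c) by ring, abs_neg]; exact hw
      · rw [refl_iterate, show 2*c - (2*c - w) = w by ring, hgw]
    obtain ⟨K, hyK, hH⟩ := coreH_lt hgRcont hgRc hyR hypR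
    refine ⟨(fun t => 2*c - t) '' K, ⟨2*c - y, hyK, by ring⟩, ?_⟩
    rintro ε hε v ⟨vR, hvR, rfl⟩
    obtain ⟨m, z, hm, hz, hzc, hgz⟩ := hH ε hε vR hvR
    refine ⟨m, 2*c - z, hm, ⟨z, hz, rfl⟩, ?_, ?_⟩
    · rw [show 2*c - z - c = -(z - c) by ring, abs_neg]; exact hzc
    · have := refl_iterate g c m z
      rw [this] at hgz
      show g^[m] (2*c - z) = 2*c - vR
      linarith [hgz]


private lemma build {F : ℝ → ℝ} {c y : ℝ} {K : Set ℝ} (hy : y ∈ K)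
    (H : ∀ ε > (0:ℝ), ∀ v ∈ K, ∃ m z, 1 ≤ m ∧ z ∈ K ∧ |z - c| ≤ ε ∧ F^[m] z = v) :
    ∃ u : ℕ → ℝ, u 0 = y ∧ (∀ n, F (u (n + 1)) = u n) ∧ MapClusterPt c atTop u := by
  classical
  have step : ∀ (s : ℕ) (v : K), ∃ q : ℕ × ℝ,
      1 ≤ q.1 ∧ q.2 ∈ K ∧ |q.2 - c| ≤ 1/((s:ℝ)+1) ∧ F^[q.1] q.2 = (v:ℝ) := by
    intro s v
    obtain ⟨m, z, h1, h2, h3, h4⟩ := H (1/((s:ℝ)+1)) (by positivity) v v.2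
    exact ⟨(m, z), h1, h2, h3, h4⟩
  choose q hq1 hq2 hq3 hq4 using step
  let p : ℕ → K := fun s => Nat.rec ⟨y, hy⟩ (fun s prev => ⟨(q s prev).2, hq2 s prev⟩) s
  have hp0 : (p 0).1 = y := by rfl
  let m : ℕ → ℕ := fun s => (q s (p s)).1
  have hpsucc : ∀ s, (p (s+1)).1 = (q s (p s)).2 := fun s => rfl
  have hm1 : ∀ s, 1 ≤ m s := fun s => hq1 s (p s)
  have hiter : ∀ s, F^[m s] (p (s+1)).1 = (p s).1 := fun s => by
    rw [hpsucc s]; exact hq4 s (p s)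
  have hclose : ∀ s, |(p (s+1)).1 - c| ≤ 1/((s:ℝ)+1) := fun s => by
    rw [hpsucc s]; exact hq3 s (p s)
  let M : ℕ → ℕ := fun s => Nat.rec 0 (fun s acc => acc + m s) s
  have hM0 : M 0 = 0 := rfl
  have hMsucc : ∀ s, M (s+1) = M s + m s := fun s => rfl
  have hMmono : StrictMono M := strictMono_nat_of_lt_succ (fun s => by
    have := hm1 s; rw [hMsucc]; omega)
  let σ : ℕ → ℕ := fun n => @Nat.findGreatest (fun s => M s ≤ n) (fun _ => Nat.decLe _ _) n

  have hσ1 : ∀ n, M (σ n) ≤ n := fun n =>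
    @Nat.findGreatest_spec 0 (fun s => M s ≤ n) (fun _ => Nat.decLe _ _) n (Nat.zero_le n)
      (by show M 0 ≤ n; rw [hM0]; exact Nat.zero_le n)
  have hσ2 : ∀ n, n < M (σ n + 1) := by
    intro n
    by_contra hcon
    push_neg at hcon
    have hle : σ n + 1 ≤ n := le_trans hMmono.le_apply hcon
    have h2 : σ n + 1 ≤ σ n :=
      @Nat.le_findGreatest (σ n + 1) (fun s => M s ≤ n) (fun _ => Nat.decLe _ _) n hle hcon
    omega
  have hσM : ∀ s, σ (M s) = s := by
    intro s
    have h1' : s ≤ σ (M s) :=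
      @Nat.le_findGreatest s (fun t => M t ≤ M s) (fun _ => Nat.decLe _ _) (M s)
        hMmono.le_apply (show M s ≤ M s from le_refl _)
    have h4' : M (σ (M s)) ≤ M s := hσ1 (M s)
    have h5' : σ (M s) ≤ s := by
      by_contra hh
      push_neg at hh
      exact absurd h4' (not_le.2 (hMmono hh))
    omega
  set u : ℕ → ℝ := fun n => F^[M (σ n + 1) - n] (p (σ n + 1)).1 with hudef
  have huM : ∀ s, u (M s) = (p s).1 := by
    intro s
    show F^[M (σ (M s) + 1) - M s] (p (σ (M s) + 1)).1 = _
    rw [hσM s]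
    have hms : M (s+1) - M s = m s := by rw [hMsucc s]; omega
    rw [hms, hiter s]
  have hu0 : u 0 = y := by
    have h00 := huM 0
    rw [hM0] at h00
    rw [h00, hp0]
  have hbr : ∀ n, F (u (n+1)) = u n := by
    intro n
    have hs2 := hσ2 n
    have hs1 := hσ1 n
    have hσle : σ n ≤ n := @Nat.findGreatest_le (fun s => M s ≤ n) (fun _ => Nat.decLe _ _) n
    rcases lt_or_eq_of_le (Nat.succ_le_of_lt hs2) with h | h
    · have hσeq : σ (n+1) = σ n := by
        have hge : σ n ≤ σ (n+1) :=
          @Nat.le_findGreatest (σ n) (fun s => M s ≤ n+1) (fun _ => Nat.decLe _ _) (n+1)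
            (by omega) (by show M (σ n) ≤ n+1; omega)
        have hlt : σ (n+1) < σ n + 1 := hMmono.lt_iff_lt.1 (lt_of_le_of_lt (hσ1 (n+1)) h)
        omega
      show F (F^[M (σ (n+1) + 1) - (n+1)] (p (σ (n+1) + 1)).1)
          = F^[M (σ n + 1) - n] (p (σ n + 1)).1
      rw [hσeq, ← Function.iterate_succ_apply' F]
      congr 1
      omega
    · have h' : n + 1 = M (σ n + 1) := h
      have h1 : u (n+1) = (p (σ n + 1)).1 := by rw [h']; exact huM (σ n + 1)
      rw [h1]
      show F (p (σ n + 1)).1 = F^[M (σ n + 1) - n] (p (σ n + 1)).1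
      have hms : M (σ n + 1) - n = 1 := by omega
      rw [hms, Function.iterate_one]
  have htd : Tendsto (fun s => u (M (s+1))) atTop (𝓝 c) := by
    rw [tendsto_iff_dist_tendsto_zero]
    apply squeeze_zero (fun s => dist_nonneg) (fun s => ?_)
      tendsto_one_div_add_atTop_nhds_zero_nat
    rw [huM (s+1), Real.dist_eq]
    exact hclose s
  have hφ : StrictMono (fun s => M (s+1)) := fun a b h => hMmono (Nat.succ_lt_succ h)
  exact ⟨u, hu0, hbr, MapClusterPt.of_comp hφ.tendsto_atTop htd.mapClusterPt⟩


/-- Transfer a cluster point from ℝ to the subtype. -/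
private lemma mapClusterPt_subtype {s : Set ℝ} {c : ℝ} (hc : c ∈ s) {V : ℕ → s}
    (h : MapClusterPt c atTop (fun n => (V n : ℝ))) :
    MapClusterPt (⟨c, hc⟩ : s) atTop V := by
  have hkey : map (Subtype.val) (comap Subtype.val (𝓝 c) ⊓ map V atTop)
      = 𝓝 c ⊓ map (fun n => (V n : ℝ)) atTop := by
    rw [Filter.push_pull', map_map]
    rfl
  have h2 : (map (Subtype.val) (comap Subtype.val (𝓝 c) ⊓ map V atTop)).NeBot := by
    rw [hkey]; exact h
  have h3 : (comap Subtype.val (𝓝 c) ⊓ map V atTop).NeBot := (Filter.map_neBot_iff _).1 h2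
  have h4 : 𝓝 (⟨c, hc⟩ : s) = comap Subtype.val (𝓝 c) := nhds_induced _ _
  show ClusterPt _ _
  rw [ClusterPt]  -- might not be needed
  rw [h4]
  exact h3

theorem stmt9 (f : unitInterval → unitInterval) (hf : Continuous f)
    (y p : unitInterval) (k : ℕ) (hk : 1 ≤ k) (hp : f^[k] p = p)
    (hmeet : ∃ i : ℕ, f^[i] p ∈ alphaLimit f y) :
    ∀ i : ℕ, f^[i] p ∈ sAlpha f y := by
  classical
  obtain ⟨i₀, u, hu, hclus⟩ := hmeet
  -- periodicity
  have hper : ∀ t m : ℕ, f^[m + t * k] p = f^[m] p := by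
    intro t
    induction t with
    | zero => simp
    | succ t ih =>
      intro m
      have : m + (t+1) * k = (m + t * k) + k := by ring
      rw [this, Function.iterate_add_apply, hp, ih m]
  -- the real map
  set F : ℝ → ℝ := fun x => ((f (projIcc 0 1 zero_le_one x) : unitInterval) : ℝ) with hFdef
  have hFcont : Continuous F :=
    continuous_subtype_val.comp (hf.comp continuous_projIcc)
  have hFcomm : ∀ x : unitInterval, F (x : ℝ) = ((f x : unitInterval) : ℝ) := by
    intro x
    simp only [hFdef, projIcc_val]
  have hFiter : ∀ (n : ℕ) (x : unitInterval), F^[n] (x : ℝ) = ((f^[n] x : unitInterval) : ℝ) := by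
    intro n
    induction n with
    | zero => intro x; simp
    | succ n ih =>
      intro x
      rw [Function.iterate_succ_apply, Function.iterate_succ_apply, hFcomm, ih]
  set q₀ := f^[i₀] p with hq₀def
  have hq₀ : f^[k] q₀ = q₀ := by
    rw [hq₀def, ← Function.iterate_add_apply]
    have h1 : k + i₀ = i₀ + 1 * k := by ring
    rw [h1, hper 1 i₀]
  -- pigeonhole for the residue
  have hres : ∃ r, r < k ∧ ∀ ε > (0:ℝ), ∀ N : ℕ, ∃ n, N ≤ n ∧ n % k = r ∧ dist (u n) q₀ < ε := by
    by_contra hcon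
    push_neg at hcon
    have hcon' : ∀ r, r < k → ∃ ε > (0:ℝ), ∃ N : ℕ, ∀ n, N ≤ n → n % k = r → ε ≤ dist (u n) q₀ := by
      intro r hr
      obtain ⟨ε, hε, N, hN⟩ := hcon r hr
      exact ⟨ε, hε, N, hN⟩
    choose! ε hε N hbad using hcon'
    have hne : (Finset.range k).Nonempty := ⟨0, Finset.mem_range.2 hk⟩
    set εm := (Finset.range k).inf' hne ε with hεmdef
    set Nm := (Finset.range k).sup N with hNmdef
    have hεm : 0 < εm := by
      rw [hεmdef, Finset.lt_inf'_iff]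
      exact fun r hr => hε r (Finset.mem_range.1 hr)
    have hfreq := mapClusterPt_iff_frequently.1 hclus (Metric.ball q₀ εm) (Metric.ball_mem_nhds _ hεm)
    obtain ⟨n, hn, hball⟩ := (hfreq.and_eventually (eventually_ge_atTop Nm)).exists
    have hrk : n % k < k := Nat.mod_lt _ (by omega)
    have h1 := hbad (n % k) hrk n
      (le_trans (Finset.le_sup (Finset.mem_range.2 hrk)) hball) rfl
    have h2 : εm ≤ ε (n % k) := Finset.inf'_le _ (Finset.mem_range.2 hrk)
    rw [Metric.mem_ball] at hn
    linarith
  obtain ⟨r, hrk, hwit⟩ := hres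
  set c := f^[r] q₀ with hcdef
  have hgc : f^[k] c = c := by
    rw [hcdef, ← Function.iterate_add_apply, Nat.add_comm, Function.iterate_add_apply, hq₀]
  set g : ℝ → ℝ := F^[k] with hgdef
  have hgcont : Continuous g := hFcont.iterate k
  have hgfix : g (c : ℝ) = (c : ℝ) := by rw [hgdef, hFiter k c, hgc]
  -- hypothesis for coreH
  have hhyp : ∀ ε > (0:ℝ), ∃ a w, 1 ≤ a ∧ |w - (c:ℝ)| ≤ ε ∧ g^[a] w = (y:ℝ) := by
    intro ε hε
    have hcont : ContinuousAt (f^[r]) q₀ := (hf.iterate r).continuousAt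
    obtain ⟨δ, hδ, hδc⟩ := Metric.continuousAt_iff.1 hcont ε hε
    obtain ⟨n, hn, hnr, hnd⟩ := hwit δ hδ (2*k)
    refine ⟨n / k, ((f^[r] (u n) : unitInterval) : ℝ), ?_, ?_, ?_⟩
    · rw [Nat.one_le_div_iff (by omega)]
      omega
    · have := hδc hnd
      rw [← hcdef] at this  -- may fail; compute below
      rw [Subtype.dist_eq, Real.dist_eq] at this
      exact this.le
    · rw [hgdef, ← Function.iterate_mul, hFiter, ← Function.iterate_add_apply]
      have hnk : k * (n / k) + r = n := by
        conv_rhs => rw [← Nat.div_add_mod n k]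
        rw [hnr]
      rw [hnk, hu n]
  obtain ⟨K, hyK, hH⟩ := coreH hgcont hgfix hhyp
  have hHF : ∀ ε > (0:ℝ), ∀ v ∈ K, ∃ m z, 1 ≤ m ∧ z ∈ K ∧ |z - (c:ℝ)| ≤ ε ∧ F^[m] z = v := by
    intro ε hε v hv
    obtain ⟨m, z, hm, hz, hzc, hgz⟩ := hH ε hε v hv
    refine ⟨k * m, z, ?_, hz, hzc, ?_⟩
    · have := Nat.mul_le_mul hk hm; omega
    · rw [Function.iterate_mul]; exact hgz
  obtain ⟨v, hv0, hvbr, hvcl⟩ := build hyK hHF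
  have hvmem : ∀ n, v n ∈ Icc (0:ℝ) 1 := by
    intro n
    rw [← hvbr n]
    exact (f (projIcc 0 1 zero_le_one (v (n+1)))).2
  set V : ℕ → unitInterval := fun n => ⟨v n, hvmem n⟩ with hVdef
  have hVcoe : ∀ n, ((V n : unitInterval) : ℝ) = v n := fun n => rfl
  have hV0 : V 0 = y := Subtype.ext (by rw [hVcoe, hv0])
  have hVbr : ∀ n, f (V (n+1)) = V n := by
    intro n
    apply Subtype.ext
    have h1 := hFcomm (V (n+1))
    rw [hVcoe] at h1
    rw [← h1, hvbr n]
  have hVcl : MapClusterPt c atTop V := by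
    have h0 : MapClusterPt ((c : ℝ)) atTop (fun n => ((V n : unitInterval) : ℝ)) := hvcl
    have := mapClusterPt_subtype c.2 h0
    simpa using this
  -- now the general orbit point
  intro i
  set s0 := r + i₀ with hs0def
  have hc_eq : c = f^[s0] p := by
    rw [hcdef, hq₀def, ← Function.iterate_add_apply]
  set j := i + (s0 + 1) * k - s0 with hjdef
  have hs0le : s0 ≤ (s0 + 1) * k := by
    calc s0 ≤ s0 + 1 := Nat.le_succ s0
    _ = (s0 + 1) * 1 := by ring
    _ ≤ (s0 + 1) * k := Nat.mul_le_mul_left _ hk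
  have hj : j + s0 = i + (s0 + 1) * k := by omega
  have hfj : f^[j] c = f^[i] p := by
    rw [hc_eq, ← Function.iterate_add_apply, hj, hper (s0+1) i]
  have hback : ∀ t n, f^[t] (V (n + t)) = V n := by
    intro t
    induction t with
    | zero => intro n; simp
    | succ t ih =>
      intro n
      have h1 : n + (t+1) = (n + t) + 1 := by omega
      rw [h1, Function.iterate_succ_apply, hVbr (n+t), ih n]
  refine ⟨fun n => f^[j] (V (n + j)), ⟨?_, ?_⟩, ?_⟩
  · show f^[j] (V (0 + j)) = y
    rw [hback j 0, hV0]
  · intro n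
    show f (f^[j] (V (n + 1 + j))) = f^[j] (V (n + j))
    rw [← Function.iterate_succ_apply' f j, Function.iterate_succ_apply f j]
    have h1 : n + 1 + j = (n + j) + 1 := by omega
    rw [h1, hVbr (n+j)]
  · have h1 : MapClusterPt c atTop (fun n => V (n + j)) := by
      have : (fun n => V (n + j)) = V ∘ (fun n => n + j) := rfl
      rw [this, mapClusterPt_comp, map_add_atTop_eq_nat]
      exact hVcl
    have h2 := h1.continuousAt_comp (x := c) ((hf.iterate j).continuousAt)
    rw [hfj] at h2
    exact h2

end Helpers
end

section
/- Let X be a compact metric space and f : X → X continuous and surjective. For every x ∈ X the β-limit set β(x), defined as the closure of sα(x), is nonempty, closed, and strongly invariant: f(β(x)) = β(x). -/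
open Filter Topology Set

lemma map_succ_atTop : Filter.map (fun n : ℕ => n + 1) atTop = atTop :=
  Filter.map_add_atTop_eq_nat 1

lemma clusterPt_shift {X : Type*} [TopologicalSpace X] (u : ℕ → X) (y : X) :
    MapClusterPt y atTop (fun n => u (n + 1)) ↔ MapClusterPt y atTop u := by
  unfold MapClusterPt
  rw [show Filter.map (fun n => u (n + 1)) atTop
      = Filter.map u (Filter.map (fun n : ℕ => n + 1) atTop) from (Filter.map_map).symm,
    map_succ_atTop]

theorem stmt10 {X : Type*} [MetricSpace X] [CompactSpace X] (f : X → X)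
    (hf : Continuous f) (hsurj : Function.Surjective f) (x : X) :
    (closure (sAlpha f x)).Nonempty ∧ IsClosed (closure (sAlpha f x)) ∧
    f '' closure (sAlpha f x) = closure (sAlpha f x) := by
  -- construct a backward branch
  have hbranch : ∃ u : ℕ → X, IsBackwardBranch f x u := by
    refine ⟨fun n => Nat.rec x (fun _ z => Function.surjInv hsurj z) n, rfl, fun n => ?_⟩
    exact Function.surjInv_eq hsurj _
  obtain ⟨u, hu⟩ := hbranch
  -- nonemptiness
  have hne : (sAlpha f x).Nonempty := by
    haveI : NeBot (Filter.map u atTop) := Filter.map_neBot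
    obtain ⟨y, hy⟩ := exists_clusterPt_of_compactSpace (Filter.map u atTop)
    exact ⟨y, u, hu, hy⟩
  -- f '' sAlpha ⊆ sAlpha
  have hsub : f '' sAlpha f x ⊆ sAlpha f x := by
    rintro _ ⟨y, ⟨v, hv, hy⟩, rfl⟩
    refine ⟨v, hv, ?_⟩
    have h1 : MapClusterPt (f y) atTop (f ∘ v) := hy.map hf.continuousAt tendsto_map
    have h2 : MapClusterPt (f y) atTop (fun n => (f ∘ v) (n + 1)) :=
      (clusterPt_shift (f ∘ v) (f y)).2 h1
    have : (fun n => (f ∘ v) (n + 1)) = v := by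
      funext n; exact hv.2 n
    rwa [this] at h2
  -- sAlpha ⊆ f '' sAlpha
  have hsup : sAlpha f x ⊆ f '' sAlpha f x := by
    rintro y ⟨v, hv, hy⟩
    set w : ℕ → X := fun n => v (n + 1) with hw
    set G : Filter ℕ := atTop ⊓ Filter.comap v (𝓝 y) with hG
    have hGne : NeBot G := by
      have h : NeBot (Filter.map v G) := by
        rw [hG, Filter.push_pull, inf_comm]
        exact hy
      exact h.of_map
    haveI := hGne
    haveI : NeBot (Filter.map w G) := Filter.map_neBot
    obtain ⟨z, hz⟩ := exists_clusterPt_of_compactSpace (Filter.map w G)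
    have hzw : MapClusterPt z atTop w :=
      hz.mono (Filter.map_mono inf_le_left)
    have hzs : z ∈ sAlpha f x := ⟨v, hv, (clusterPt_shift v z).1 hzw⟩
    have hfz : f z = y := by
      have h1 : ClusterPt (f z) (Filter.map f (Filter.map w G)) :=
        hz.map hf.continuousAt tendsto_map
      rw [Filter.map_map] at h1
      have hfw : (f ∘ w) = v := by funext n; exact hv.2 n
      rw [hfw] at h1
      have h2 : Filter.map v G ≤ 𝓝 y := by
        calc Filter.map v G ≤ Filter.map v (Filter.comap v (𝓝 y)) :=
              Filter.map_mono inf_le_right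
          _ ≤ 𝓝 y := Filter.map_comap_le
      have : NeBot (𝓝 (f z) ⊓ 𝓝 y) := (h1.mono h2)
      exact eq_of_nhds_neBot this
    exact ⟨z, hzs, hfz⟩
  have heq : f '' sAlpha f x = sAlpha f x := hsub.antisymm hsup
  have hclosed : IsClosedMap f := hf.isClosedMap
  refine ⟨hne.closure, isClosed_closure, ?_⟩
  rw [← hclosed.closure_image_eq_of_continuous hf, heq]
end
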